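/- arXiv:1010.4894 — 6 statements merged into one kernel-verified Lean document; each statement's English description precedes it below -/
import Mathlib

section
/- Let X be a Banach space, p ∈ [1,∞), and let U : ℝ → L(X) be a strongly continuous group representation (U(0) = I, U(s+t) = U(s)U(t) for all s,t ∈ ℝ, and s ↦ U(s)x continuous for each x ∈ X) with M := sup_{s∈ℝ} ‖U(s)‖ < ∞. Let μ be a finite complex Borel measure on ℝ and let C ≥ 0 be an L^p(ℝ;X)-convolution bound for μ. Then ‖∫_ℝ U(s)x μ(ds)‖ ≤ M² C ‖x‖ for every x ∈ X. -/
open MeasureTheory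
open scoped Topology ENNReal NNReal

/-- **Classical transference principle (Berkson–Gillespie–Muhly, case `G = ℝ`).**
If `U : ℝ → L(X)` is a uniformly bounded strongly continuous group
representation with `‖U(s)‖ ≤ M` for all `s`, `μ = h·ν` is a finite complex
Borel measure on `ℝ`, and `C` is an `L^p(ℝ;X)`-convolution bound for `μ`,
then `‖∫_ℝ U(s)x μ(ds)‖ ≤ M² C ‖x‖` for every `x ∈ X`. -/
theorem transference_bounded_group
    {X : Type*} [NormedAddCommGroup X] [NormedSpace ℂ X] [CompleteSpace X]
    (p : ℝ) (hp : 1 ≤ p)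
    (U : ℝ → X →L[ℂ] X)
    (hU0 : U 0 = 1)
    (hUadd : ∀ s t : ℝ, U (s + t) = (U s).comp (U t))
    (hUcont : ∀ x : X, Continuous fun s => U s x)
    (M : ℝ) (hM : ∀ s : ℝ, ‖U s‖ ≤ M)
    (ν : Measure ℝ) [IsFiniteMeasure ν]
    (h : ℝ → ℂ) (hh : Integrable h ν)
    (C : ℝ) (hC : 0 ≤ C)
    (hCbound : ∀ F : ℝ → X, MemLp F (ENNReal.ofReal p) volume →
      eLpNorm (fun t => ∫ s, h s • F (t - s) ∂ν) (ENNReal.ofReal p) volume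
        ≤ ENNReal.ofReal C * eLpNorm F (ENNReal.ofReal p) volume)
    (x : X) :
    ‖∫ s, h s • U s x ∂ν‖ ≤ M ^ 2 * C * ‖x‖ := by
  have hM0 : (0:ℝ) ≤ M := le_trans (norm_nonneg _) (hM 0)
  rcases subsingleton_or_nontrivial X with hX | hX
  · have hz : (∫ s, h s • U s x ∂ν) = 0 := Subsingleton.elim _ _
    rw [hz, norm_zero]
    exact mul_nonneg (mul_nonneg (sq_nonneg M) hC) (norm_nonneg x)
  have hM1 : (1:ℝ) ≤ M := by
    have h0 := hM 0
    rw [hU0] at h0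
    simpa using h0
  have hMpos : (0:ℝ) < M := lt_of_lt_of_le one_pos hM1
  have hp0 : (0:ℝ) < p := lt_of_lt_of_le one_pos hp
  set P := ENNReal.ofReal p with hPdef
  have hP0 : P ≠ 0 := by
    rw [hPdef, Ne, ENNReal.ofReal_eq_zero]
    linarith
  have hPtop : P ≠ ⊤ := ENNReal.ofReal_ne_top
  have hPtoReal : P.toReal = p := ENNReal.toReal_ofReal hp0.le
  have hUx : ∀ s : ℝ, ‖(U s) x‖ ≤ M * ‖x‖ := fun s =>
    le_trans ((U s).le_opNorm x) (mul_le_mul_of_nonneg_right (hM s) (norm_nonneg x))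
  set I := ∫ s, h s • U s x ∂ν with hIdef
  have hInt : ∀ t : ℝ, Integrable (fun s => h s • U (s - t) x) ν := by
    intro t
    refine Integrable.mono' (hh.norm.mul_const (M * ‖x‖)) ?_
      (Filter.Eventually.of_forall fun s => ?_)
    · exact hh.aestronglyMeasurable.smul
        (((hUcont x).comp (continuous_id.sub continuous_const)).aestronglyMeasurable)
    · rw [norm_smul]
      exact mul_le_mul_of_nonneg_left (hUx _) (norm_nonneg _)
  have hIntU : Integrable (fun s => h s • U s x) ν := by
    simpa using hInt 0
  have hUI : ∀ t : ℝ, (U (-t)) I = ∫ s, h s • U (s - t) x ∂ν := by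
    intro t
    rw [hIdef, ← ContinuousLinearMap.integral_comp_comm (U (-t)) hIntU]
    refine integral_congr_ae (Filter.Eventually.of_forall fun s => ?_)
    show (U (-t)) (h s • (U s) x) = h s • (U (s - t)) x
    rw [ContinuousLinearMap.map_smul]
    congr 1
    rw [← ContinuousLinearMap.comp_apply, ← hUadd, neg_add_eq_sub]
  -- main quantitative estimate
  have main : ∀ K : ℝ, 0 ≤ K → ∀ R : ℝ, 0 < R →
      ‖I‖ ≤ M^2*C*‖x‖*(1 + K/R)
        + 2*M^2*‖x‖*(∫ s in (Set.Icc (-K) K)ᶜ, ‖h s‖ ∂ν) := by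
    intro K hK R hR
    set ε := ∫ s in (Set.Icc (-K) K)ᶜ, ‖h s‖ ∂ν with hεdef
    have hε0 : 0 ≤ ε := setIntegral_nonneg measurableSet_Icc.compl fun s _ => norm_nonneg _
    set F : ℝ → X := (Set.Icc (-(R+K)) (R+K)).indicator (fun r => U (-r) x) with hFdef
    have hFmeas : StronglyMeasurable F :=
      (((hUcont x).comp continuous_neg).stronglyMeasurable).indicator measurableSet_Icc
    have hFnorm : ∀ r, ‖F r‖ ≤ M * ‖x‖ := by
      intro r
      by_cases hr : r ∈ Set.Icc (-(R+K)) (R+K)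
      · rw [hFdef]
        simp only [Set.indicator_of_mem hr]
        exact hUx _
      · rw [hFdef]
        simp only [Set.indicator_of_notMem hr, norm_zero]
        exact mul_nonneg hM0 (norm_nonneg x)
    have hFnorm' : ∀ r, ‖F r‖ ≤
        ‖(Set.Icc (-(R+K)) (R+K)).indicator (fun _ => M*‖x‖) r‖ := by
      intro r
      by_cases hr : r ∈ Set.Icc (-(R+K)) (R+K)
      · rw [Set.indicator_of_mem hr, Real.norm_of_nonneg (mul_nonneg hM0 (norm_nonneg x))]
        rw [hFdef]
        simp only [Set.indicator_of_mem hr]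
        exact hUx _
      · rw [hFdef]
        simp only [Set.indicator_of_notMem hr, norm_zero]
        exact le_rfl
    have hFmem : MemLp F P volume := by
      refine MemLp.of_le (memLp_indicator_const P measurableSet_Icc (M*‖x‖) (Or.inr ?_))
        hFmeas.aestronglyMeasurable (Filter.Eventually.of_forall hFnorm')
      rw [Real.volume_Icc]
      exact ENNReal.ofReal_ne_top
    have hIntF : ∀ t : ℝ, Integrable (fun s => h s • F (t - s)) ν := by
      intro t
      refine Integrable.mono' (hh.norm.mul_const (M * ‖x‖)) ?_
        (Filter.Eventually.of_forall fun s => ?_)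
      · exact hh.aestronglyMeasurable.smul
          ((hFmeas.comp_measurable (measurable_const.sub measurable_id)).aestronglyMeasurable)
      · rw [norm_smul]
        exact mul_le_mul_of_nonneg_left (hFnorm _) (norm_nonneg _)
    have hdiff : ∀ t ∈ Set.Icc (-R) R,
        ‖(U (-t)) I - ∫ s, h s • F (t - s) ∂ν‖ ≤ 2*M*‖x‖*ε := by
      intro t ht
      rw [hUI t, ← integral_sub (hInt t) (hIntF t)]
      have hgint : Integrable ((Set.Icc (-K) K)ᶜ.indicator fun s => ‖h s‖ * (2*M*‖x‖)) ν :=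
        (hh.norm.mul_const _).indicator measurableSet_Icc.compl
      have hbnd : ∀ s : ℝ, ‖h s • U (s-t) x - h s • F (t - s)‖ ≤
          ((Set.Icc (-K) K)ᶜ).indicator (fun s => ‖h s‖ * (2*M*‖x‖)) s := by
        intro s
        by_cases hs : s ∈ Set.Icc (-K) K
        · have hsK : s ∉ (Set.Icc (-K) K)ᶜ := by simpa using hs
          rw [Set.indicator_of_notMem hsK]
          obtain ⟨ht1, ht2⟩ := ht
          obtain ⟨hs1, hs2⟩ := hs
          have hts : t - s ∈ Set.Icc (-(R+K)) (R+K) := by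
            constructor
            · linarith
            · linarith
          have hFeq : F (t - s) = U (s - t) x := by
            rw [hFdef]
            rw [Set.indicator_of_mem hts]
            congr 1
            ring
          rw [hFeq, sub_self, norm_zero]
        · rw [Set.indicator_of_mem (by simpa using hs)]
          calc ‖h s • U (s-t) x - h s • F (t - s)‖
              ≤ ‖h s • U (s-t) x‖ + ‖h s • F (t - s)‖ := norm_sub_le _ _
            _ ≤ ‖h s‖*(M*‖x‖) + ‖h s‖*(M*‖x‖) := by
                rw [norm_smul, norm_smul]
                exact add_le_add (mul_le_mul_of_nonneg_left (hUx _) (norm_nonneg _))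
                  (mul_le_mul_of_nonneg_left (hFnorm _) (norm_nonneg _))
            _ = ‖h s‖ * (2*M*‖x‖) := by ring
      calc ‖∫ s, (h s • U (s-t) x - h s • F (t - s)) ∂ν‖
          ≤ ∫ s, ((Set.Icc (-K) K)ᶜ).indicator (fun s => ‖h s‖*(2*M*‖x‖)) s ∂ν :=
            norm_integral_le_of_norm_le hgint (Filter.Eventually.of_forall hbnd)
        _ = (∫ s in (Set.Icc (-K) K)ᶜ, ‖h s‖ ∂ν) * (2*M*‖x‖) := by
            rw [integral_indicator measurableSet_Icc.compl, integral_mul_const]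
        _ = 2*M*‖x‖*ε := by rw [hεdef]; ring
    have hlow : ∀ t ∈ Set.Icc (-R) R,
        ‖I‖/M - 2*M*‖x‖*ε ≤ ‖∫ s, h s • F (t - s) ∂ν‖ := by
      intro t ht
      have hId : (U t) ((U (-t)) I) = I := by
        rw [← ContinuousLinearMap.comp_apply, ← hUadd, add_neg_cancel, hU0,
          ContinuousLinearMap.one_apply]
      have h1 : ‖I‖ ≤ M * ‖(U (-t)) I‖ := by
        calc ‖I‖ = ‖(U t) ((U (-t)) I)‖ := by rw [hId]
          _ ≤ ‖U t‖ * ‖(U (-t)) I‖ := (U t).le_opNorm _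
          _ ≤ M * ‖(U (-t)) I‖ := mul_le_mul_of_nonneg_right (hM t) (norm_nonneg _)
      have h2 : ‖(U (-t)) I‖ ≤ ‖∫ s, h s • F (t - s) ∂ν‖ + 2*M*‖x‖*ε := by
        have hd := hdiff t ht
        have hn := norm_sub_norm_le ((U (-t)) I) (∫ s, h s • F (t - s) ∂ν)
        linarith
      rw [sub_le_iff_le_add, div_le_iff₀ hMpos]
      calc ‖I‖ ≤ M * ‖(U (-t)) I‖ := h1
        _ ≤ M * (‖∫ s, h s • F (t - s) ∂ν‖ + 2*M*‖x‖*ε) :=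
            mul_le_mul_of_nonneg_left h2 hM0
        _ = (‖∫ s, h s • F (t - s) ∂ν‖ + 2*M*‖x‖*ε) * M := mul_comm _ _
    set a := ‖I‖/M - 2*M*‖x‖*ε with hadef
    by_cases ha : a ≤ 0
    · rw [hadef, sub_nonpos, div_le_iff₀ hMpos] at ha
      have hrhs : 0 ≤ M^2*C*‖x‖*(1+K/R) := by
        have h1KR : (0:ℝ) ≤ 1 + K/R := by
          have := div_nonneg hK hR.le
          linarith
        exact mul_nonneg (mul_nonneg (mul_nonneg (sq_nonneg M) hC) (norm_nonneg x)) h1KR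
      nlinarith
    push_neg at ha
    -- eLpNorm chain
    have hG1 : eLpNorm (fun _ : ℝ => a) P (volume.restrict (Set.Icc (-R) R))
        ≤ eLpNorm (fun t => ∫ s, h s • F (t - s) ∂ν) P (volume.restrict (Set.Icc (-R) R)) := by
      refine eLpNorm_mono_ae ?_
      filter_upwards [ae_restrict_mem measurableSet_Icc] with t ht
      rw [Real.norm_of_nonneg ha.le]
      exact hlow t ht
    have hG2 : eLpNorm (fun t => ∫ s, h s • F (t - s) ∂ν) P (volume.restrict (Set.Icc (-R) R))
        ≤ eLpNorm (fun t => ∫ s, h s • F (t - s) ∂ν) P volume :=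
      eLpNorm_mono_measure _ Measure.restrict_le_self
    have hG3 := hCbound F hFmem
    have hG4 : eLpNorm F P volume
        ≤ ENNReal.ofReal (M*‖x‖) * (ENNReal.ofReal (2*(R+K)))^(1/p) := by
      refine (eLpNorm_mono hFnorm').trans ?_
      rw [eLpNorm_indicator_const measurableSet_Icc hP0 hPtop, Real.volume_Icc, hPtoReal]
      have hv : (R+K) - -(R+K) = 2*(R+K) := by ring
      rw [hv]
      refine mul_le_mul_left (le_of_eq ?_) _
      rw [← ofReal_norm, Real.norm_of_nonneg (mul_nonneg hM0 (norm_nonneg x))]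
    have hIccpos : (0:ENNReal) < volume (Set.Icc (-R) R) := by
      rw [Real.volume_Icc]
      rw [ENNReal.ofReal_pos]
      linarith
    have hμne : volume.restrict (Set.Icc (-R) R) ≠ 0 := by
      intro h0
      have h1 : volume.restrict (Set.Icc (-R) R) Set.univ = 0 := by rw [h0]; rfl
      rw [Measure.restrict_apply_univ] at h1
      exact absurd h1 hIccpos.ne'
    have hconst : eLpNorm (fun _ : ℝ => a) P (volume.restrict (Set.Icc (-R) R))
        = ENNReal.ofReal a * (ENNReal.ofReal (2*R))^(1/p) := by
      rw [eLpNorm_const a hP0 hμne, Measure.restrict_apply_univ, Real.volume_Icc, hPtoReal]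
      congr 1
      · rw [← ofReal_norm, Real.norm_of_nonneg ha.le]
      · congr 2
        ring
    have chain : ENNReal.ofReal a * (ENNReal.ofReal (2*R))^(1/p)
        ≤ ENNReal.ofReal C * (ENNReal.ofReal (M*‖x‖) * (ENNReal.ofReal (2*(R+K)))^(1/p)) := by
      rw [← hconst]
      exact le_trans (le_trans hG1 hG2) (le_trans hG3 (mul_le_mul_right hG4 _))
    have h1p : (0:ℝ) ≤ 1/p := by positivity
    have hreal : a * (2*R)^(1/p) ≤ C * ((M*‖x‖) * (2*(R+K))^(1/p)) := by
      rw [← ENNReal.ofReal_le_ofReal_iff]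
      · calc ENNReal.ofReal (a*(2*R)^(1/p))
            = ENNReal.ofReal a * (ENNReal.ofReal (2*R))^(1/p) := by
              rw [ENNReal.ofReal_mul ha.le,
                ENNReal.ofReal_rpow_of_nonneg (by linarith) h1p]
          _ ≤ ENNReal.ofReal C * (ENNReal.ofReal (M*‖x‖) * (ENNReal.ofReal (2*(R+K)))^(1/p)) :=
              chain
          _ = ENNReal.ofReal (C * ((M*‖x‖) * (2*(R+K))^(1/p))) := by
              rw [ENNReal.ofReal_mul hC,
                ENNReal.ofReal_mul (mul_nonneg hM0 (norm_nonneg x)),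
                ENNReal.ofReal_rpow_of_nonneg (by linarith) h1p]
      · have : (0:ℝ) ≤ (2*(R+K))^(1/p) := Real.rpow_nonneg (by linarith) _
        have := mul_nonneg (mul_nonneg hM0 (norm_nonneg x)) this
        exact mul_nonneg hC this
    have h1KR : (0:ℝ) ≤ 1 + K/R := by
      have := div_nonneg hK hR.le
      linarith
    have h1KR1 : (1:ℝ) ≤ 1 + K/R := by
      have := div_nonneg hK hR.le
      linarith
    have hfactor : (2*(R+K))^(1/p) = (2*R)^(1/p) * (1+K/R)^(1/p) := by
      rw [← Real.mul_rpow (by linarith) h1KR]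
      congr 1
      field_simp
    have h2Rpow : (0:ℝ) < (2*R)^(1/p) := Real.rpow_pos_of_pos (by linarith) _
    have ha2 : a ≤ C*(M*‖x‖)*(1+K/R) := by
      have step : a * (2*R)^(1/p) ≤ (C*(M*‖x‖)*(1+K/R)^(1/p)) * (2*R)^(1/p) := by
        calc a * (2*R)^(1/p) ≤ C*((M*‖x‖)*(2*(R+K))^(1/p)) := hreal
          _ = (C*(M*‖x‖)*(1+K/R)^(1/p)) * (2*R)^(1/p) := by rw [hfactor]; ring
      have hstep := le_of_mul_le_mul_right step h2Rpow
      refine hstep.trans ?_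
      have hle : (1+K/R)^(1/p) ≤ 1+K/R := by
        calc (1+K/R)^(1/p) ≤ (1+K/R)^(1:ℝ) :=
              Real.rpow_le_rpow_of_exponent_le h1KR1 ((div_le_one hp0).mpr hp)
          _ = 1+K/R := Real.rpow_one _
      exact mul_le_mul_of_nonneg_left hle (mul_nonneg hC (mul_nonneg hM0 (norm_nonneg x)))
    rw [hadef] at ha2
    have hfin : ‖I‖ ≤ (C*(M*‖x‖)*(1+K/R) + 2*M*‖x‖*ε) * M := by
      rw [← div_le_iff₀ hMpos]
      linarith
    calc ‖I‖ ≤ (C*(M*‖x‖)*(1+K/R) + 2*M*‖x‖*ε) * M := hfin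
      _ = M^2*C*‖x‖*(1+K/R) + 2*M^2*‖x‖*ε := by ring
  -- pass to the limit
  have hεnonneg : ∀ K : ℝ, 0 ≤ ∫ s in (Set.Icc (-K) K)ᶜ, ‖h s‖ ∂ν := fun K =>
    setIntegral_nonneg measurableSet_Icc.compl fun s _ => norm_nonneg _
  refine le_of_forall_pos_le_add fun δ hδ => ?_
  have hmono : Monotone (fun n : ℕ => Set.Icc (-(n:ℝ)) (n:ℝ)) := by
    intro m n hmn
    apply Set.Icc_subset_Icc
    · exact neg_le_neg (by exact_mod_cast hmn)
    · exact_mod_cast hmn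
  have hunion : (⋃ n : ℕ, Set.Icc (-(n:ℝ)) (n:ℝ)) = Set.univ := by
    apply Set.eq_univ_of_forall
    intro y
    obtain ⟨n, hn⟩ := exists_nat_ge |y|
    obtain ⟨h1, h2⟩ := abs_le.mp hn
    exact Set.mem_iUnion.mpr ⟨n, h1, h2⟩
  have htend : Filter.Tendsto (fun n : ℕ => ∫ s in Set.Icc (-(n:ℝ)) (n:ℝ), ‖h s‖ ∂ν)
      Filter.atTop (𝓝 (∫ s, ‖h s‖ ∂ν)) := by
    have := MeasureTheory.tendsto_setIntegral_of_monotone (fun n : ℕ => measurableSet_Icc)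
      hmono (by rw [hunion]; exact hh.norm.integrableOn)
    rwa [hunion, setIntegral_univ] at this
  have htend0 : Filter.Tendsto (fun n : ℕ => ∫ s in (Set.Icc (-(n:ℝ)) (n:ℝ))ᶜ, ‖h s‖ ∂ν)
      Filter.atTop (𝓝 0) := by
    have heq : ∀ n : ℕ, ∫ s in (Set.Icc (-(n:ℝ)) (n:ℝ))ᶜ, ‖h s‖ ∂ν
        = (∫ s, ‖h s‖ ∂ν) - ∫ s in Set.Icc (-(n:ℝ)) (n:ℝ), ‖h s‖ ∂ν := by
      intro n
      have := integral_add_compl (s := Set.Icc (-(n:ℝ)) (n:ℝ)) measurableSet_Icc hh.norm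
      linarith
    have h2 : Filter.Tendsto
        (fun n : ℕ => (∫ s, ‖h s‖ ∂ν) - ∫ s in Set.Icc (-(n:ℝ)) (n:ℝ), ‖h s‖ ∂ν)
        Filter.atTop (𝓝 ((∫ s, ‖h s‖ ∂ν) - ∫ s, ‖h s‖ ∂ν)) :=
      Filter.Tendsto.sub tendsto_const_nhds htend
    rw [sub_self] at h2
    exact h2.congr fun n => (heq n).symm
  have hδ'pos : (0:ℝ) < δ / (4*M^2*(‖x‖+1)) := by
    apply div_pos hδ
    have h1 : (0:ℝ) < M^2 := pow_pos hMpos 2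
    have h2 : (0:ℝ) < ‖x‖ + 1 := by positivity
    exact mul_pos (mul_pos (by norm_num) h1) h2
  obtain ⟨n, hn⟩ := (htend0.eventually (gt_mem_nhds hδ'pos)).exists
  set εn := ∫ s in (Set.Icc (-(n:ℝ)) (n:ℝ))ᶜ, ‖h s‖ ∂ν with hεndef
  have hεn0 : 0 ≤ εn := hεnonneg (n:ℝ)
  -- choose R
  set B := M^2*C*‖x‖*(n:ℝ) with hBdef
  have hB0 : 0 ≤ B := by
    have : (0:ℝ) ≤ (n:ℝ) := Nat.cast_nonneg n
    exact mul_nonneg (mul_nonneg (mul_nonneg (sq_nonneg M) hC) (norm_nonneg x)) this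
  set R := max 1 (2*B/δ) with hRdef
  have hR : (0:ℝ) < R := lt_of_lt_of_le one_pos (le_max_left _ _)
  have key := main (n:ℝ) (Nat.cast_nonneg n) R hR
  have hBR : B/R ≤ δ/2 := by
    rw [div_le_iff₀ hR]
    have h1 : 2*B/δ ≤ R := le_max_right _ _
    have h2 := mul_le_mul_of_nonneg_right h1 (le_of_lt (half_pos hδ))
    have h3 : (2*B/δ)*(δ/2) = B := by
      field_simp
    linarith
  have hterm2 : 2*M^2*‖x‖*εn ≤ δ/2 := by
    have h1 : 2*M^2*‖x‖*εn ≤ 2*M^2*(‖x‖+1)*εn := by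
      have hMx : (0:ℝ) ≤ 2*M^2*εn := by positivity
      nlinarith
    have h2 : 2*M^2*(‖x‖+1)*εn ≤ 2*M^2*(‖x‖+1)*(δ / (4*M^2*(‖x‖+1))) := by
      apply mul_le_mul_of_nonneg_left hn.le
      positivity
    have h3 : 2*M^2*(‖x‖+1)*(δ / (4*M^2*(‖x‖+1))) = δ/2 := by
      have hx1 : (0:ℝ) < ‖x‖ + 1 := by positivity
      field_simp
      ring
    linarith
  have hsplit : M^2*C*‖x‖*(1+(n:ℝ)/R) = M^2*C*‖x‖ + B/R := by
    rw [hBdef]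
    field_simp
  rw [hsplit] at key
  linarith
end

section
/- Let p ∈ (1,∞). Then there is a constant c_p ≥ 0 such that the following holds: whenever X is a Banach space, (T(s))_{s≥0} is a C₀-semigroup on X, 0 < a < b < ∞, M(b) := sup_{0≤s≤b} ‖T(s)‖, μ is a finite complex Borel measure on [0,∞) with support contained in [a,b], and C ≥ 0 is an L^p(ℝ;X)-convolution bound for μ, then ‖∫_{[a,b]} T(s)x μ(ds)‖ ≤ c_p (1 + log(b/a)) M(b)² C ‖x‖ for all x ∈ X. -/
open MeasureTheory Set
open scoped ENNReal NNReal

/-! ### Auxiliary piecewise-linear "ramp" machinery -/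

/-- ramp function: `0` for `s ≤ w`, rises linearly with slope `1/u`, equals `1` for `s ≥ w+u`. -/
noncomputable def rmp (u w s : ℝ) : ℝ := u⁻¹ * min (max (s - w) 0) u

lemma rmp_nonneg {u : ℝ} (hu : 0 < u) (w s : ℝ) : 0 ≤ rmp u w s := by
  have : (0:ℝ) ≤ min (max (s - w) 0) u := le_min (le_max_right _ _) hu.le
  exact mul_nonneg (by positivity) this

lemma rmp_le_one {u : ℝ} (hu : 0 < u) (w s : ℝ) : rmp u w s ≤ 1 := by
  have h1 : min (max (s - w) 0) u ≤ u := min_le_right _ _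
  calc rmp u w s ≤ u⁻¹ * u := mul_le_mul_of_nonneg_left h1 (by positivity)
    _ = 1 := by field_simp

lemma rmp_eq_one {u w s : ℝ} (hu : 0 < u) (hs : w + u ≤ s) : rmp u w s = 1 := by
  unfold rmp
  rw [max_eq_left (by linarith), min_eq_right (by linarith)]
  field_simp

lemma rmp_eq_zero {u w s : ℝ} (hu : 0 < u) (hs : s ≤ w) : rmp u w s = 0 := by
  unfold rmp
  rw [max_eq_right (by linarith), min_eq_left hu.le, mul_zero]

lemma rmp_continuous (u w : ℝ) : Continuous (fun s => rmp u w s) := by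
  unfold rmp
  exact continuous_const.mul (((continuous_id.sub continuous_const).max continuous_const).min
    continuous_const)

lemma minmax_key {u : ℝ} (hu : 0 < u) (s : ℝ) :
    min (max (s - 2*u) 0) u + min (max (s - 3*u) 0) u = min (max (s - 2*u) 0) (2*u) := by
  rcases le_total s (2*u) with h | h
  · have e1 : max (s - 2*u) 0 = 0 := max_eq_right (by linarith)
    have e2 : max (s - 3*u) 0 = 0 := max_eq_right (by linarith)
    rw [e1, e2, min_eq_left hu.le, min_eq_left (by linarith)]; ring
  · have e1 : max (s - 2*u) 0 = s - 2*u := max_eq_left (by linarith)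
    rcases le_total s (3*u) with h3 | h3
    · have e2 : max (s - 3*u) 0 = 0 := max_eq_right (by linarith)
      rw [e1, e2, min_eq_left (by linarith : s - 2*u ≤ u), min_eq_left hu.le,
        min_eq_left (by linarith : s - 2*u ≤ 2*u)]; ring
    · have e2 : max (s - 3*u) 0 = s - 3*u := max_eq_left (by linarith)
      rcases le_total s (4*u) with h4 | h4
      · rw [e1, e2, min_eq_right (by linarith : u ≤ s - 2*u),
          min_eq_left (by linarith : s - 3*u ≤ u),
          min_eq_left (by linarith : s - 2*u ≤ 2*u)]; ring
      · rw [e1, e2, min_eq_right (by linarith : u ≤ s - 2*u),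
          min_eq_right (by linarith : u ≤ s - 3*u),
          min_eq_right (by linarith : 2*u ≤ s - 2*u)]; ring

/-- the key identity making the dyadic pieces telescope. -/
lemma rmp_piece {u : ℝ} (hu : 0 < u) (s : ℝ) :
    rmp u u s - (1/2) * rmp u (2*u) s - (1/2) * rmp u (3*u) s
      = rmp u u s - rmp (2*u) (2*u) s := by
  have hu' : u ≠ 0 := ne_of_gt hu
  have key := minmax_key hu s
  unfold rmp
  have e : (2*u)⁻¹ = u⁻¹ * (1/2) := by field_simp
  rw [e, ← key]
  ring

/-- pointwise, the product of the two indicators is an indicator of an interval. -/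
lemma ind_mul_ind (u w b' s : ℝ) :
    (fun t => (Ico w b').indicator (fun _ => (1:ℝ)) t
        * (Ioc 0 u).indicator (fun _ => u⁻¹) (s - t))
      = (Ico (max w (s-u)) (min b' s)).indicator (fun _ => u⁻¹) := by
  funext t
  by_cases h1 : t ∈ Ico w b' <;> by_cases h2 : s - t ∈ Ioc 0 u
  · rw [indicator_of_mem h1, indicator_of_mem h2, one_mul, indicator_of_mem]
    rw [mem_Ico] at h1; rw [mem_Ioc] at h2
    rw [mem_Ico]
    exact ⟨max_le h1.1 (by linarith), lt_min h1.2 (by linarith)⟩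
  · rw [indicator_of_mem h1, indicator_of_notMem h2, mul_zero, indicator_of_notMem]
    rw [mem_Ioc, not_and_or, not_lt, not_le] at h2
    rw [mem_Ico, not_and_or, not_le, not_lt]
    rcases h2 with h2 | h2
    · right; exact le_trans (min_le_right _ _) (by linarith)
    · left; exact lt_of_lt_of_le (by linarith) (le_max_right _ _)
  · rw [indicator_of_notMem h1, indicator_of_mem h2, zero_mul, indicator_of_notMem]
    rw [mem_Ico, not_and_or, not_le, not_lt] at h1
    rw [mem_Ico, not_and_or, not_le, not_lt]
    rcases h1 with h1 | h1
    · left; exact lt_of_lt_of_le h1 (le_max_left _ _)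
    · right; exact le_trans (min_le_left _ _) h1
  · rw [indicator_of_notMem h1, zero_mul, indicator_of_notMem]
    rw [mem_Ico, not_and_or, not_le, not_lt] at h1
    rw [mem_Ico, not_and_or, not_le, not_lt]
    rcases h1 with h1 | h1
    · left; exact lt_of_lt_of_le h1 (le_max_left _ _)
    · right; exact le_trans (min_le_left _ _) h1

/-- The convolution of the two indicator functions evaluates to `rmp`. -/
lemma conv_eval {u b' : ℝ} (hu : 0 < u) {s : ℝ} (hs : s ≤ b') (w : ℝ) :
    ∫ t, (Ico w b').indicator (fun _ => (1:ℝ)) t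
        * (Ioc 0 u).indicator (fun _ => u⁻¹) (s - t) = rmp u w s := by
  rw [ind_mul_ind u w b' s, integral_indicator_const _ measurableSet_Ico, Real.volume_real_Ico,
    smul_eq_mul]
  rw [min_eq_right hs]
  unfold rmp
  rcases le_total w (s - u) with hw | hw
  · rw [max_eq_right hw, max_eq_left (by linarith : s - w ≥ 0)]
    have e : s - (s - u) = u := by ring
    rw [e, max_eq_left hu.le, min_eq_right (by linarith : u ≤ s - w)]
    ring
  · rw [max_eq_left hw]
    rcases le_total s w with hsw | hsw
    · rw [max_eq_right (by linarith : s - w ≤ 0), min_eq_left hu.le, mul_zero, zero_mul]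
    · rw [max_eq_left (by linarith : 0 ≤ s - w), min_eq_left (by linarith : s - w ≤ u)]
      ring

lemma conv_integrable (u w b' s : ℝ) :
    Integrable (fun t => (Ico w b').indicator (fun _ => (1:ℝ)) t
        * (Ioc 0 u).indicator (fun _ => u⁻¹) (s - t)) := by
  rw [ind_mul_ind u w b' s]
  exact (integrable_indicator_iff measurableSet_Ico).2
    (integrableOn_const measure_Ico_lt_top.ne)

set_option maxHeartbeats 1000000

/-- **Transference principle for `C₀`-semigroups (continuous case,
Theorem 4.1).**  For every `p ∈ (1,∞)` there is a constant `c_p ≥ 0` such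
that whenever `(T(s))_{s ≥ 0}` is a `C₀`-semigroup on a Banach space `X`,
`0 < a < b`, `M(b)` bounds `‖T(s)‖` on `[0,b]`, `μ = h·ν` is a finite
complex Borel measure supported in `[a,b]`, and `C` is an
`L^p(ℝ;X)`-convolution bound for `μ`, then
`‖T_μ x‖ ≤ c_p (1 + log(b/a)) M(b)² C ‖x‖`. -/
theorem transference_semigroup_continuous (p : ℝ) (hp : 1 < p) :
    ∃ c : ℝ, 0 ≤ c ∧
      ∀ (X : Type*) [NormedAddCommGroup X] [NormedSpace ℂ X] [CompleteSpace X],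
      ∀ T : ℝ → X →L[ℂ] X,
        T 0 = 1 →
        (∀ s ≥ (0:ℝ), ∀ t ≥ (0:ℝ), T (s + t) = (T s).comp (T t)) →
        (∀ x : X, ContinuousOn (fun s => T s x) (Set.Ici 0)) →
      ∀ a b : ℝ, 0 < a → a < b →
      ∀ M : ℝ, (∀ s ∈ Set.Icc (0:ℝ) b, ‖T s‖ ≤ M) →
      ∀ ν : Measure ℝ, IsFiniteMeasure ν → ν (Set.Icc a b)ᶜ = 0 →
      ∀ h : ℝ → ℂ, Integrable h ν →
      ∀ C : ℝ, 0 ≤ C →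
        (∀ F : ℝ → X, MemLp F (ENNReal.ofReal p) volume →
          eLpNorm (fun t => ∫ s, h s • F (t - s) ∂ν) (ENNReal.ofReal p) volume
            ≤ ENNReal.ofReal C * eLpNorm F (ENNReal.ofReal p) volume) →
      ∀ x : X,
        ‖∫ s, h s • T s x ∂ν‖ ≤ c * (1 + Real.log (b / a)) * M ^ 2 * C * ‖x‖ := by
  refine ⟨4, by norm_num, ?_⟩
  intro X _ _ _ T hT0 hsg hTcont a b ha hab M hM ν hνfin hνc h hh C hC hconv x
  have hb : 0 < b := ha.trans hab
  have hM0 : 0 ≤ M := le_trans (norm_nonneg (T 0)) (hM 0 ⟨le_refl 0, hb.le⟩)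
  set q : ℝ := p / (p - 1) with hqdef
  have hpq : Real.HolderConjugate p q := Real.HolderConjugate.conjExponent hp
  have hq1 : 1 < q := hpq.symm.lt
  have hp0 : 0 < p := lt_trans one_pos hp
  have hq0 : 0 < q := lt_trans one_pos hq1
  set P : ENNReal := ENNReal.ofReal p with hPdef
  set Q : ENNReal := ENNReal.ofReal q with hQdef
  have hP0 : P ≠ 0 := by simp [hPdef, ENNReal.ofReal_eq_zero, not_le, hp0]
  have hPt : P ≠ ⊤ := ENNReal.ofReal_ne_top
  have hQ0 : Q ≠ 0 := by simp [hQdef, ENNReal.ofReal_eq_zero, not_le, hq0]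
  have hQt : Q ≠ ⊤ := ENNReal.ofReal_ne_top
  have hPr : P.toReal = p := ENNReal.toReal_ofReal hp0.le
  have hQr : Q.toReal = q := ENNReal.toReal_ofReal hq0.le
  -- the measure lives on `[a,b]`
  have hae : ∀ᵐ s ∂ν, s ∈ Icc a b := by
    rw [MeasureTheory.ae_iff]
    exact hνc
  -- truncated data
  set h₀ : ℝ → ℂ := (Icc a b).indicator h with hh₀def
  have hh₀ : Integrable h₀ ν := hh.indicator measurableSet_Icc
  have hh₀m : AEStronglyMeasurable h₀ ν := hh₀.aestronglyMeasurable
  have hh₀ae : ∀ᵐ s ∂ν, h₀ s = h s := by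
    filter_upwards [hae] with s hs
    exact indicator_of_mem hs h
  set f₀ : ℝ → X := fun s => T (max s 0) x with hf₀def
  have hf₀c : Continuous f₀ :=
    (hTcont x).comp_continuous (continuous_id.max continuous_const)
      (fun s => mem_Ici.2 (le_max_right _ _))
  have hf₀norm : ∀ s : ℝ, s ≤ b → ‖f₀ s‖ ≤ M * ‖x‖ := by
    intro s hs
    have hmem : max s 0 ∈ Icc (0:ℝ) b := ⟨le_max_right _ _, max_le hs hb.le⟩
    calc ‖f₀ s‖ ≤ ‖T (max s 0)‖ * ‖x‖ := (T (max s 0)).le_opNorm x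
      _ ≤ M * ‖x‖ := mul_le_mul_of_nonneg_right (hM _ hmem) (norm_nonneg x)
  have hsmul_norm : ∀ s : ℝ, ‖h₀ s • f₀ s‖ ≤ (M * ‖x‖) * ‖h₀ s‖ := by
    intro s
    by_cases hs : s ∈ Icc a b
    · rw [norm_smul, mul_comm]
      exact mul_le_mul_of_nonneg_right (hf₀norm s hs.2) (norm_nonneg _)
    · rw [hh₀def, indicator_of_notMem hs]
      simp
  -- the dyadic scales
  set L : ℝ := Real.logb 2 (b / a) with hLdef
  have hba1 : 1 < b / a := (one_lt_div ha).2 hab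
  have hlog : 0 < Real.log (b / a) := Real.log_pos hba1
  have hL0 : 0 ≤ L := Real.logb_nonneg one_lt_two hba1.le
  set n : ℕ := ⌈L⌉₊ + 1 with hndef
  set u : ℕ → ℝ := fun k => 2 ^ k * (a / 2) with hudef
  have hu_pos : ∀ k, 0 < u k := fun k => by positivity
  have hrpow : ∀ k : ℕ, ((2:ℝ) ^ k : ℝ) = (2:ℝ) ^ (k : ℝ) := fun k =>
    (Real.rpow_natCast 2 k).symm
  have hcov : b ≤ u n := by
    have h1 : (2:ℝ) ^ (L : ℝ) = b / a := Real.rpow_logb two_pos (by norm_num) (by positivity)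
    have h2 : (2:ℝ) ^ (((⌈L⌉₊ : ℕ) : ℝ)) ≥ (2:ℝ) ^ (L:ℝ) :=
      Real.rpow_le_rpow_of_exponent_le one_le_two (Nat.le_ceil L)
    have h3 : (b / a) ≤ (2:ℝ) ^ (⌈L⌉₊ : ℕ) := by rw [hrpow]; rw [h1] at h2; exact h2
    have : b ≤ (2:ℝ) ^ (⌈L⌉₊ : ℕ) * a := by
      calc b = (b / a) * a := by field_simp
        _ ≤ (2:ℝ) ^ (⌈L⌉₊ : ℕ) * a := mul_le_mul_of_nonneg_right h3 ha.le
    calc b ≤ (2:ℝ) ^ (⌈L⌉₊ : ℕ) * a := this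
      _ = u n := by simp only [hudef, hndef, pow_succ]; ring
  have hub : ∀ k, k < n → u k ≤ b := by
    intro k hk
    have hk' : (k : ℝ) ≤ (⌈L⌉₊ : ℝ) := by
      have : k ≤ ⌈L⌉₊ := Nat.lt_succ_iff.1 hk
      exact_mod_cast this
    have hceil : (⌈L⌉₊ : ℝ) ≤ L + 1 := le_of_lt (Nat.ceil_lt_add_one hL0)
    have h1 : (2:ℝ) ^ (k : ℝ) ≤ (2:ℝ) ^ (L + 1 : ℝ) :=
      Real.rpow_le_rpow_of_exponent_le one_le_two (le_trans hk' hceil)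
    have h2 : (2:ℝ) ^ (L + 1 : ℝ) = (b / a) * 2 := by
      rw [Real.rpow_add two_pos, Real.rpow_logb two_pos (by norm_num) (by positivity),
        Real.rpow_one]
    have h3 : (2:ℝ) ^ k ≤ (b / a) * 2 := by rw [hrpow]; rw [h2] at h1; exact h1
    calc u k = (2:ℝ) ^ k * (a / 2) := rfl
      _ ≤ ((b / a) * 2) * (a / 2) := mul_le_mul_of_nonneg_right h3 (by positivity)
      _ = b := by field_simp
  -- the partition of unity on [a,b]
  set W : ℕ → ℝ → ℝ := fun k s =>
    rmp (u k) (u k) s - (1/2) * rmp (u k) (2 * u k) s - (1/2) * rmp (u k) (3 * u k) s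
    with hWdef
  have hWtel : ∀ k s, W k s = rmp (u k) (u k) s - rmp (u (k+1)) (u (k+1)) s := by
    intro k s
    have e2 : 2 * u k = u (k + 1) := by simp only [hudef, pow_succ]; ring
    rw [hWdef]
    calc rmp (u k) (u k) s - (1/2) * rmp (u k) (2 * u k) s - (1/2) * rmp (u k) (3 * u k) s
        = rmp (u k) (u k) s - rmp (2 * u k) (2 * u k) s := rmp_piece (hu_pos k) s
      _ = rmp (u k) (u k) s - rmp (u (k+1)) (u (k+1)) s := by rw [e2]
  have hpart : ∀ s ∈ Icc a b, ∑ k ∈ Finset.range n, W k s = 1 := by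
    intro s hs
    have : ∑ k ∈ Finset.range n, W k s
        = ∑ k ∈ Finset.range n, (rmp (u k) (u k) s - rmp (u (k+1)) (u (k+1)) s) :=
      Finset.sum_congr rfl (fun k _ => hWtel k s)
    rw [this, Finset.sum_range_sub' (fun k => rmp (u k) (u k) s) n]
    have e0 : rmp (u 0) (u 0) s = 1 := by
      apply rmp_eq_one (hu_pos 0)
      have : u 0 = a / 2 := by simp [hudef]
      rw [this]
      calc a/2 + a/2 = a := by ring
        _ ≤ s := hs.1
    have en : rmp (u n) (u n) s = 0 := rmp_eq_zero (hu_pos n) (le_trans hs.2 hcov)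
    rw [e0, en, sub_zero]
  -- bounds on W
  have hWbd : ∀ k s, |W k s| ≤ 2 := by
    intro k s
    have h1 := rmp_nonneg (hu_pos k) (u k) s
    have h2 := rmp_le_one (hu_pos k) (u k) s
    have h3 := rmp_nonneg (hu_pos k) (2 * u k) s
    have h4 := rmp_le_one (hu_pos k) (2 * u k) s
    have h5 := rmp_nonneg (hu_pos k) (3 * u k) s
    have h6 := rmp_le_one (hu_pos k) (3 * u k) s
    rw [hWdef, abs_le]; constructor <;> simp only <;> linarith
  have hWc : ∀ k, Continuous (fun s => W k s) := by
    intro k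
    exact ((rmp_continuous _ _).sub (continuous_const.mul (rmp_continuous _ _))).sub
      (continuous_const.mul (rmp_continuous _ _))
  -- integrability of the basic integrands
  have hbase_meas : AEStronglyMeasurable (fun s => h₀ s • f₀ s) ν :=
    hh₀m.smul hf₀c.aestronglyMeasurable
  have hWint : ∀ k, Integrable (fun s => W k s • (h₀ s • f₀ s)) ν := by
    intro k
    apply Integrable.mono' ((hh₀.norm.const_mul ((M * ‖x‖) * 2)))
      (((hWc k).aestronglyMeasurable.smul hbase_meas))
    filter_upwards with s
    rw [Pi.smul_apply', norm_smul]
    calc ‖W k s‖ * ‖h₀ s • f₀ s‖ ≤ 2 * ((M * ‖x‖) * ‖h₀ s‖) := by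
          apply mul_le_mul (by simpa using hWbd k s) (hsmul_norm s) (norm_nonneg _) (by norm_num)
      _ = (M * ‖x‖) * 2 * ‖h₀ s‖ := by ring
  -- Step 1: rewrite the integral as a finite sum
  have step0 : ∫ s, h s • T s x ∂ν = ∫ s, h₀ s • f₀ s ∂ν := by
    apply integral_congr_ae
    filter_upwards [hae, hh₀ae] with s hs he
    rw [he, hf₀def]
    simp only
    rw [max_eq_left (le_trans ha.le hs.1)]
  have step1 : ∫ s, h₀ s • f₀ s ∂ν
      = ∑ k ∈ Finset.range n, ∫ s, W k s • (h₀ s • f₀ s) ∂ν := by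
    rw [← integral_finset_sum _ (fun k _ => hWint k)]
    apply integral_congr_ae
    filter_upwards [hae] with s hs
    rw [← Finset.sum_smul, hpart s hs, one_smul]
  -- Step 2 (the transference core): bound for each dyadic piece
  have key : ∀ k, k < n → ‖∫ s, W k s • (h₀ s • f₀ s) ∂ν‖ ≤ 2 * (M * (C * (M * ‖x‖))) := by
    intro k hk
    set v : ℝ := u k with hvdef
    have hv : 0 < v := hu_pos k
    have hvb : v ≤ b := hub k hk
    set ψ : ℝ → ℝ := (Ioc 0 v).indicator (fun _ => v⁻¹) with hψdef
    set i1 : ℝ → ℝ := (Ico v b).indicator (fun _ => (1:ℝ)) with hi1def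
    set i2 : ℝ → ℝ := (Ico (2*v) b).indicator (fun _ => (1:ℝ)) with hi2def
    set i3 : ℝ → ℝ := (Ico (3*v) b).indicator (fun _ => (1:ℝ)) with hi3def
    set φ : ℝ → ℝ := fun t => i1 t - (1/2) * i2 t - (1/2) * i3 t with hφdef
    have hψmeas : Measurable ψ := by
      rw [hψdef]; exact measurable_const.indicator measurableSet_Ioc
    have hφmeas : Measurable φ := by
      rw [hφdef]
      apply Measurable.sub
      · apply Measurable.sub
        · exact measurable_const.indicator measurableSet_Ico
        · exact (measurable_const.indicator measurableSet_Ico).const_mul _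
      · exact (measurable_const.indicator measurableSet_Ico).const_mul _
    have hψbd : ∀ r : ℝ, |ψ r| ≤ v⁻¹ := by
      intro r
      rw [hψdef]
      by_cases hr : r ∈ Ioc 0 v
      · rw [indicator_of_mem hr, abs_of_nonneg (by positivity)]
      · rw [indicator_of_notMem hr]; simp; positivity
    have hφsupp : ∀ t, φ t ≠ 0 → v ≤ t ∧ t < b := by
      intro t hne
      by_contra hnot
      apply hne
      rw [← mem_Ico] at hnot
      have h1 : i1 t = 0 := by rw [hi1def]; exact indicator_of_notMem hnot _
      have h2 : i2 t = 0 := by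
        rw [hi2def]; apply indicator_of_notMem
        exact fun hc => hnot (mem_Ico.2 ⟨by linarith [(mem_Ico.1 hc).1], (mem_Ico.1 hc).2⟩)
      have h3 : i3 t = 0 := by
        rw [hi3def]; apply indicator_of_notMem
        exact fun hc => hnot (mem_Ico.2 ⟨by linarith [(mem_Ico.1 hc).1], (mem_Ico.1 hc).2⟩)
      simp only [hφdef]; rw [h1, h2, h3]; ring
    have hindbd : ∀ t : ℝ, (0:ℝ) ≤ (Ico v (3*v)).indicator (fun _ => (1:ℝ)) t :=
      fun t => indicator_nonneg (fun _ _ => zero_le_one) t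
    have hφbd : ∀ t, |φ t| ≤ (Ico v (3*v)).indicator (fun _ => (1:ℝ)) t := by
      intro t
      rcases lt_or_ge t v with h1 | h1
      · have e1 : i1 t = 0 := by
          rw [hi1def]; exact indicator_of_notMem (fun hc => absurd (mem_Ico.1 hc).1 (not_le.2 h1)) _
        have e2 : i2 t = 0 := by
          rw [hi2def]; exact indicator_of_notMem (fun hc => absurd (mem_Ico.1 hc).1 (not_le.2 (by linarith))) _
        have e3 : i3 t = 0 := by
          rw [hi3def]; exact indicator_of_notMem (fun hc => absurd (mem_Ico.1 hc).1 (not_le.2 (by linarith))) _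
        simp only [hφdef]; rw [e1, e2, e3]
        simpa using hindbd t
      · rcases lt_or_ge t b with htb | htb
        · have e1 : i1 t = 1 := by rw [hi1def]; exact indicator_of_mem (mem_Ico.2 ⟨h1, htb⟩) _
          rcases lt_or_ge t (2*v) with h2 | h2
          · have e2 : i2 t = 0 := by
              rw [hi2def]; exact indicator_of_notMem (fun hc => absurd (mem_Ico.1 hc).1 (not_le.2 h2)) _
            have e3 : i3 t = 0 := by
              rw [hi3def]; exact indicator_of_notMem (fun hc => absurd (mem_Ico.1 hc).1 (not_le.2 (by linarith))) _
            have emem : (Ico v (3*v)).indicator (fun _ => (1:ℝ)) t = 1 :=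
              indicator_of_mem (mem_Ico.2 ⟨h1, by linarith⟩) _
            simp only [hφdef]; rw [e1, e2, e3, emem]
            rw [abs_le]; constructor <;> norm_num
          · rcases lt_or_ge t (3*v) with h3 | h3
            · have e2 : i2 t = 1 := by rw [hi2def]; exact indicator_of_mem (mem_Ico.2 ⟨h2, htb⟩) _
              have e3 : i3 t = 0 := by
                rw [hi3def]; exact indicator_of_notMem (fun hc => absurd (mem_Ico.1 hc).1 (not_le.2 h3)) _
              have emem : (Ico v (3*v)).indicator (fun _ => (1:ℝ)) t = 1 :=
                indicator_of_mem (mem_Ico.2 ⟨h1, h3⟩) _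
              simp only [hφdef]; rw [e1, e2, e3, emem]
              rw [abs_le]; constructor <;> norm_num
            · have e2 : i2 t = 1 := by rw [hi2def]; exact indicator_of_mem (mem_Ico.2 ⟨by linarith, htb⟩) _
              have e3 : i3 t = 1 := by rw [hi3def]; exact indicator_of_mem (mem_Ico.2 ⟨h3, htb⟩) _
              simp only [hφdef]; rw [e1, e2, e3]
              norm_num
              exact hindbd t
        · have e1 : i1 t = 0 := by
            rw [hi1def]; exact indicator_of_notMem (fun hc => absurd (mem_Ico.1 hc).2 (not_lt.2 htb)) _
          have e2 : i2 t = 0 := by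
            rw [hi2def]; exact indicator_of_notMem (fun hc => absurd (mem_Ico.1 hc).2 (not_lt.2 htb)) _
          have e3 : i3 t = 0 := by
            rw [hi3def]; exact indicator_of_notMem (fun hc => absurd (mem_Ico.1 hc).2 (not_lt.2 htb)) _
          simp only [hφdef]; rw [e1, e2, e3]
          simpa using hindbd t
    have hφnorm : ∀ t, ‖φ t‖ ≤ ‖(Ico v (3*v)).indicator (fun _ => (1:ℝ)) t‖ := by
      intro t
      rw [Real.norm_eq_abs, Real.norm_eq_abs, abs_of_nonneg (hindbd t)]
      exact hφbd t
    have hφq : eLpNorm φ Q volume ≤ ENNReal.ofReal ((2*v) ^ (1/q)) := by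
      calc eLpNorm φ Q volume
          ≤ eLpNorm ((Ico v (3*v)).indicator (fun _ => (1:ℝ))) Q volume := eLpNorm_mono hφnorm
        _ = ‖(1:ℝ)‖₊ * volume (Ico v (3*v)) ^ (1/Q.toReal) :=
            eLpNorm_indicator_const measurableSet_Ico hQ0 hQt
        _ = ENNReal.ofReal ((2*v) ^ (1/q)) := by
            rw [Real.volume_Ico, hQr, show (3*v - v : ℝ) = 2*v from by ring]
            rw [ENNReal.ofReal_rpow_of_nonneg (by positivity) (by positivity)]
            simp
    -- the test function G
    set G : ℝ → X := (Ico (-v) 0).indicator (fun r => v⁻¹ • f₀ (-r)) with hGdef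
    have hGsm : StronglyMeasurable G :=
      (((hf₀c.comp continuous_neg).const_smul v⁻¹).stronglyMeasurable).indicator measurableSet_Ico
    have hGbd : ∀ r, ‖G r‖ ≤ ‖(Ico (-v) 0).indicator (fun _ => (v⁻¹ * (M * ‖x‖) : ℝ)) r‖ := by
      intro r
      by_cases hr : r ∈ Ico (-v) 0
      · rw [hGdef, indicator_of_mem hr, indicator_of_mem hr, norm_smul,
          Real.norm_eq_abs, abs_of_nonneg (by positivity : (0:ℝ) ≤ v⁻¹),
          Real.norm_eq_abs, abs_of_nonneg (by positivity : (0:ℝ) ≤ v⁻¹ * (M * ‖x‖))]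
        have hrv : -r ≤ b := by
          have := (mem_Ico.1 hr).1
          have : -r ≤ v := by linarith
          linarith
        exact mul_le_mul_of_nonneg_left (hf₀norm (-r) hrv) (by positivity)
      · rw [hGdef, indicator_of_notMem hr, indicator_of_notMem hr]; simp
    have hGbd' : ∀ r, ‖G r‖ ≤ v⁻¹ * (M * ‖x‖) := by
      intro r
      refine le_trans (hGbd r) ?_
      refine le_trans (norm_indicator_le_norm_self _ _) ?_
      rw [Real.norm_eq_abs, abs_of_nonneg (by positivity)]
    have hGp : eLpNorm G P volume
        ≤ ENNReal.ofReal ((v⁻¹ * (M * ‖x‖)) * v ^ (1/p)) := by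
      calc eLpNorm G P volume
          ≤ eLpNorm ((Ico (-v) 0).indicator (fun _ => (v⁻¹ * (M * ‖x‖) : ℝ))) P volume :=
            eLpNorm_mono hGbd
        _ = ‖(v⁻¹ * (M * ‖x‖) : ℝ)‖₊ * volume (Ico (-v) 0) ^ (1/P.toReal) :=
            eLpNorm_indicator_const measurableSet_Ico hP0 hPt
        _ = ENNReal.ofReal ((v⁻¹ * (M * ‖x‖)) * v ^ (1/p)) := by
            rw [Real.volume_Ico, hPr, show (0 - (-v) : ℝ) = v from by ring,
              ENNReal.ofReal_rpow_of_nonneg hv.le (by positivity),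
              ← enorm_eq_nnnorm, ← ofReal_norm, Real.norm_eq_abs, abs_of_nonneg (by positivity),
              ← ENNReal.ofReal_mul (by positivity)]
    have hGmem : MemLp G P volume := by
      refine ⟨hGsm.aestronglyMeasurable, lt_of_le_of_lt hGp ?_⟩
      exact ENNReal.ofReal_lt_top
    -- the convolution V = μ * G
    set V : ℝ → X := fun t => ∫ s, h₀ s • G (t - s) ∂ν with hVdef
    have hVeq : V = fun t => ∫ s, h s • G (t - s) ∂ν := by
      funext t
      apply integral_congr_ae
      filter_upwards [hh₀ae] with s hs
      rw [hs]
    have hVp : eLpNorm V P volume ≤ ENNReal.ofReal C * eLpNorm G P volume := by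
      rw [hVeq]; exact hconv G hGmem
    have hGsub : ∀ t : ℝ, AEStronglyMeasurable (fun s : ℝ => G (t - s)) ν :=
      fun t => (hGsm.comp_measurable (measurable_const.sub measurable_id)).aestronglyMeasurable
    have hVint : ∀ t : ℝ, Integrable (fun s => h₀ s • G (t - s)) ν := by
      intro t
      apply Integrable.mono' (hh₀.norm.const_mul (v⁻¹ * (M * ‖x‖))) (hh₀m.smul (hGsub t))
      filter_upwards with s
      rw [Pi.smul_apply', norm_smul, mul_comm]
      exact mul_le_mul_of_nonneg_right (hGbd' _) (norm_nonneg _)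
    have hVmeas : AEStronglyMeasurable V volume := by
      rw [hVdef]
      apply AEStronglyMeasurable.integral_prod_right'
        (f := fun z : ℝ × ℝ => h₀ z.2 • G (z.1 - z.2))
      exact AEStronglyMeasurable.smul
        (hh₀m.comp_quasiMeasurePreserving MeasureTheory.Measure.quasiMeasurePreserving_snd)
        ((hGsm.comp_measurable (measurable_fst.sub measurable_snd)).aestronglyMeasurable)
    -- product integrability for Fubini
    have hker : Integrable
        (Function.uncurry fun s t => (φ t * ψ (s - t)) • (h₀ s • f₀ s)) (ν.prod volume) := by
      have hg2 : Integrable (fun t : ℝ => v⁻¹ * (Ico v (3*v)).indicator (fun _ => (1:ℝ)) t) := by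
        apply Integrable.const_mul
        exact (integrable_indicator_iff measurableSet_Ico).2
          (integrableOn_const measure_Ico_lt_top.ne)
      apply Integrable.mono' ((hh₀.norm.const_mul (M * ‖x‖)).mul_prod hg2)
      · apply AEStronglyMeasurable.smul (𝕜 := ℝ)
        · exact ((hφmeas.comp measurable_snd).mul
            (hψmeas.comp (measurable_fst.sub measurable_snd))).aestronglyMeasurable
        · exact (hh₀m.smul hf₀c.aestronglyMeasurable).comp_quasiMeasurePreserving
            MeasureTheory.Measure.quasiMeasurePreserving_fst
      · filter_upwards with z
        rcases z with ⟨s, t⟩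
        simp only [Function.uncurry]
        rw [norm_smul, Real.norm_eq_abs, abs_mul]
        calc |φ t| * |ψ (s - t)| * ‖h₀ s • f₀ s‖
            ≤ ((Ico v (3*v)).indicator (fun _ => (1:ℝ)) t * v⁻¹) * ((M * ‖x‖) * ‖h₀ s‖) := by
              exact mul_le_mul (mul_le_mul (hφbd t) (hψbd _) (abs_nonneg _) (hindbd t))
                (hsmul_norm s) (norm_nonneg _) (mul_nonneg (hindbd t) (inv_nonneg.2 hv.le))
          _ = (M * ‖x‖) * ‖h₀ s‖ * (v⁻¹ * (Ico v (3*v)).indicator (fun _ => (1:ℝ)) t) := by ring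
    -- pointwise identity
    have hptw : ∀ t s : ℝ, (φ t * ψ (s - t)) • (h₀ s • f₀ s)
        = φ t • (T t) (h₀ s • G (t - s)) := by
      intro t s
      by_cases hψ0 : s - t ∈ Ioc 0 v
      · by_cases hφ0 : φ t = 0
        · rw [hφ0]; simp
        · obtain ⟨htv, htb⟩ := hφsupp t hφ0
          have hts : 0 < s - t := (mem_Ioc.1 hψ0).1
          have htsu : s - t ≤ v := (mem_Ioc.1 hψ0).2
          have ht0 : 0 ≤ t := le_trans hv.le htv
          have hGts : G (t - s) = v⁻¹ • f₀ (s - t) := by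
            have hmem : t - s ∈ Ico (-v) (0:ℝ) := by
              rw [mem_Ico]; constructor <;> linarith
            rw [hGdef, indicator_of_mem hmem, neg_sub]
          have hψv : ψ (s - t) = v⁻¹ := by rw [hψdef]; exact indicator_of_mem hψ0 _
          have hf₀st : f₀ (s - t) = T (s - t) x := by
            simp only [hf₀def]; rw [max_eq_left hts.le]
          have hf₀s : f₀ s = T s x := by
            simp only [hf₀def]; rw [max_eq_left (by linarith : (0:ℝ) ≤ s)]
          have hsemi : T s x = T t (T (s - t) x) := by
            have e := hsg t ht0 (s - t) hts.le
            rw [show t + (s - t) = s from by ring] at e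
            rw [e, ContinuousLinearMap.comp_apply]
          rw [hψv, hGts, hf₀s, hsemi, hf₀st]
          rw [_root_.map_smul, ContinuousLinearMap.map_smul_of_tower]
          rw [mul_smul, smul_comm (v⁻¹) (h₀ s)]
      · have hψz : ψ (s - t) = 0 := by rw [hψdef]; exact indicator_of_notMem hψ0 _
        have hGz : G (t - s) = 0 := by
          rw [hGdef]
          apply indicator_of_notMem
          rw [mem_Ioc, not_and_or] at hψ0
          rw [mem_Ico, not_and_or]
          rcases hψ0 with h' | h'
          · right; rw [not_lt] at h' ⊢; linarith
          · left; rw [not_le] at h' ⊢; linarith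
        rw [hψz, hGz]
        simp
    -- the transference identity
    have E : ∫ s, W k s • (h₀ s • f₀ s) ∂ν = ∫ t, φ t • (T t) (V t) := by
      have e1 : ∫ s, W k s • (h₀ s • f₀ s) ∂ν
          = ∫ s, ∫ t, (φ t * ψ (s - t)) • (h₀ s • f₀ s) ∂volume ∂ν := by
        apply integral_congr_ae
        filter_upwards [hae] with s hs
        have hWs : W k s = ∫ t, φ t * ψ (s - t) := by
          have hint2 : Integrable (fun t => (1/2) * (i2 t * ψ (s - t))) := by
            apply Integrable.const_mul
            rw [hi2def, hψdef]
            exact conv_integrable v (2*v) b s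
          have hint3 : Integrable (fun t => (1/2) * (i3 t * ψ (s - t))) := by
            apply Integrable.const_mul
            rw [hi3def, hψdef]
            exact conv_integrable v (3*v) b s
          have hint1 : Integrable (fun t => i1 t * ψ (s - t)) := by
            rw [hi1def, hψdef]
            exact conv_integrable v v b s
          have hφψ : (fun t => φ t * ψ (s - t))
              = fun t => (i1 t * ψ (s - t))
                  - (1/2) * (i2 t * ψ (s - t)) - (1/2) * (i3 t * ψ (s - t)) := by
            funext t; rw [hφdef]; ring
          have hint12 : Integrable (fun t => i1 t * ψ (s - t) - (1/2) * (i2 t * ψ (s - t))) :=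
            hint1.sub hint2
          rw [hφψ, integral_sub hint12 hint3, integral_sub hint1 hint2,
            integral_const_mul, integral_const_mul]
          have c1 : ∫ t, i1 t * ψ (s - t) = rmp v v s := by
            rw [hi1def, hψdef]; exact conv_eval hv hs.2 v
          have c2 : ∫ t, i2 t * ψ (s - t) = rmp v (2*v) s := by
            rw [hi2def, hψdef]; exact conv_eval hv hs.2 (2*v)
          have c3 : ∫ t, i3 t * ψ (s - t) = rmp v (3*v) s := by
            rw [hi3def, hψdef]; exact conv_eval hv hs.2 (3*v)
          rw [c1, c2, c3]
        rw [hWs]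
        exact (integral_smul_const _ _).symm
      have e2 : ∫ s, ∫ t, (φ t * ψ (s - t)) • (h₀ s • f₀ s) ∂volume ∂ν
          = ∫ t, ∫ s, (φ t * ψ (s - t)) • (h₀ s • f₀ s) ∂ν ∂volume := by
        exact integral_integral_swap hker
      have e3 : ∀ t : ℝ, ∫ s, (φ t * ψ (s - t)) • (h₀ s • f₀ s) ∂ν = φ t • (T t) (V t) := by
        intro t
        have : (fun s => (φ t * ψ (s - t)) • (h₀ s • f₀ s))
            = fun s => φ t • (T t) (h₀ s • G (t - s)) := funext (fun s => hptw t s)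
        rw [this, integral_smul]
        congr 1
        rw [hVdef]
        exact ContinuousLinearMap.integral_comp_comm (T t) (hVint t)
      rw [e1, e2]
      exact integral_congr_ae (Filter.Eventually.of_forall e3)
    -- norm estimate via Hölder
    have hTnorm : ∀ t, ‖φ t • (T t) (V t)‖ ≤ |φ t| * (M * ‖V t‖) := by
      intro t
      by_cases hφ0 : φ t = 0
      · rw [hφ0]; simp
      · obtain ⟨htv, htb⟩ := hφsupp t hφ0
        have hTt : ‖T t‖ ≤ M := hM t ⟨le_trans hv.le htv, htb.le⟩
        rw [norm_smul, Real.norm_eq_abs]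
        apply mul_le_mul_of_nonneg_left _ (abs_nonneg _)
        calc ‖(T t) (V t)‖ ≤ ‖T t‖ * ‖V t‖ := (T t).le_opNorm (V t)
          _ ≤ M * ‖V t‖ := mul_le_mul_of_nonneg_right hTt (norm_nonneg _)
    have hlin : (∫⁻ t, ENNReal.ofReal ‖φ t • (T t) (V t)‖)
        ≤ ENNReal.ofReal M * (eLpNorm φ Q volume * eLpNorm V P volume) := by
      have step : (∫⁻ t, ENNReal.ofReal ‖φ t • (T t) (V t)‖)
          ≤ ∫⁻ t, ENNReal.ofReal M * ((‖φ t‖₊ : ℝ≥0∞) * (‖V t‖₊ : ℝ≥0∞)) := by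
        apply lintegral_mono
        intro t
        calc ENNReal.ofReal ‖φ t • (T t) (V t)‖
            ≤ ENNReal.ofReal (|φ t| * (M * ‖V t‖)) := ENNReal.ofReal_le_ofReal (hTnorm t)
          _ = ENNReal.ofReal |φ t| * (ENNReal.ofReal M * ENNReal.ofReal ‖V t‖) := by
              rw [ENNReal.ofReal_mul (abs_nonneg _), ENNReal.ofReal_mul hM0]
          _ = ENNReal.ofReal M * (ENNReal.ofReal |φ t| * ENNReal.ofReal ‖V t‖) := by ring
          _ = ENNReal.ofReal M * ((‖φ t‖₊ : ℝ≥0∞) * (‖V t‖₊ : ℝ≥0∞)) := by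
              rw [← Real.norm_eq_abs, ofReal_norm, ofReal_norm, enorm_eq_nnnorm, enorm_eq_nnnorm]
      rw [lintegral_const_mul' _ _ ENNReal.ofReal_ne_top] at step
      refine le_trans step (mul_le_mul_right ?_ _)
      have hhold := ENNReal.lintegral_mul_le_Lp_mul_Lq volume hpq.symm
        (f := fun t => (‖φ t‖₊ : ℝ≥0∞)) (g := fun t => (‖V t‖₊ : ℝ≥0∞))
        hφmeas.enorm.aemeasurable hVmeas.enorm
      calc (∫⁻ t, (‖φ t‖₊ : ℝ≥0∞) * (‖V t‖₊ : ℝ≥0∞))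
          ≤ (∫⁻ t, (‖φ t‖₊ : ℝ≥0∞) ^ q) ^ (1/q) * (∫⁻ t, (‖V t‖₊ : ℝ≥0∞) ^ p) ^ (1/p) := hhold
        _ = eLpNorm φ Q volume * eLpNorm V P volume := by
            rw [eLpNorm_eq_lintegral_rpow_enorm_toReal hQ0 hQt, eLpNorm_eq_lintegral_rpow_enorm_toReal hP0 hPt,
              hQr, hPr]
            simp only [enorm_eq_nnnorm]
    -- the numeric ENNReal bound
    have hreal : M * ((2*v) ^ (1/q) * (C * ((v⁻¹ * (M * ‖x‖)) * v ^ (1/p))))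
        ≤ 2 * (M * (C * (M * ‖x‖))) := by
      have hsplit : (2*v) ^ ((1:ℝ)/q) = 2 ^ ((1:ℝ)/q) * v ^ ((1:ℝ)/q) :=
        Real.mul_rpow (by norm_num) hv.le
      have hvv : v ^ ((1:ℝ)/q) * v ^ ((1:ℝ)/p) = v := by
        rw [← Real.rpow_add hv]
        rw [show (1:ℝ)/q + 1/p = 1 by
          rw [one_div, one_div]; linarith [hpq.inv_add_inv_eq_one]]
        exact Real.rpow_one v
      have h2q : (2:ℝ) ^ ((1:ℝ)/q) ≤ 2 := by
        calc (2:ℝ) ^ ((1:ℝ)/q) ≤ 2 ^ (1:ℝ) :=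
            Real.rpow_le_rpow_of_exponent_le one_le_two
              (by rw [div_le_one hq0]; exact hq1.le)
          _ = 2 := Real.rpow_one 2
      have hv1 : v * v⁻¹ = 1 := mul_inv_cancel₀ hv.ne'
      have hrw : M * ((2*v) ^ ((1:ℝ)/q) * (C * ((v⁻¹ * (M * ‖x‖)) * v ^ ((1:ℝ)/p))))
          = (2:ℝ) ^ ((1:ℝ)/q) * (M * (C * (M * ‖x‖))) * (v ^ ((1:ℝ)/q) * v ^ ((1:ℝ)/p) * v⁻¹) := by
        rw [hsplit]; ring
      rw [hrw, hvv, hv1, mul_one]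
      exact mul_le_mul_of_nonneg_right h2q
        (mul_nonneg hM0 (mul_nonneg hC (mul_nonneg hM0 (norm_nonneg x))))
    have hbig : ENNReal.ofReal M * (eLpNorm φ Q volume * eLpNorm V P volume)
        ≤ ENNReal.ofReal (2 * (M * (C * (M * ‖x‖)))) := by
      have h1 : eLpNorm φ Q volume * eLpNorm V P volume
          ≤ ENNReal.ofReal ((2*v) ^ (1/q))
            * (ENNReal.ofReal C * ENNReal.ofReal ((v⁻¹ * (M * ‖x‖)) * v ^ (1/p))) :=
        mul_le_mul' hφq (le_trans hVp (mul_le_mul_right hGp _))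
      calc ENNReal.ofReal M * (eLpNorm φ Q volume * eLpNorm V P volume)
          ≤ ENNReal.ofReal M * (ENNReal.ofReal ((2*v) ^ (1/q))
            * (ENNReal.ofReal C * ENNReal.ofReal ((v⁻¹ * (M * ‖x‖)) * v ^ (1/p)))) :=
            mul_le_mul_right h1 _
        _ = ENNReal.ofReal (M * ((2*v) ^ (1/q) * (C * ((v⁻¹ * (M * ‖x‖)) * v ^ (1/p))))) := by
            rw [← ENNReal.ofReal_mul hC, ← ENNReal.ofReal_mul (by positivity),
              ← ENNReal.ofReal_mul hM0]
        _ ≤ ENNReal.ofReal (2 * (M * (C * (M * ‖x‖)))) := ENNReal.ofReal_le_ofReal hreal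
    rw [E]
    calc ‖∫ t, φ t • (T t) (V t)‖
        ≤ (∫⁻ t, ENNReal.ofReal ‖φ t • (T t) (V t)‖).toReal :=
          norm_integral_le_lintegral_norm _
      _ ≤ 2 * (M * (C * (M * ‖x‖))) :=
          ENNReal.toReal_le_of_le_ofReal (by positivity) (le_trans hlin hbig)
  -- Final assembly
  have hnormsum : ‖∫ s, h s • T s x ∂ν‖ ≤ (n : ℝ) * (2 * (M * (C * (M * ‖x‖)))) := by
    rw [step0, step1]
    calc ‖∑ k ∈ Finset.range n, ∫ s, W k s • (h₀ s • f₀ s) ∂ν‖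
        ≤ ∑ k ∈ Finset.range n, ‖∫ s, W k s • (h₀ s • f₀ s) ∂ν‖ := norm_sum_le _ _
      _ ≤ ∑ _k ∈ Finset.range n, (2 * (M * (C * (M * ‖x‖)))) :=
          Finset.sum_le_sum (fun k hk => key k (Finset.mem_range.1 hk))
      _ = (n : ℝ) * (2 * (M * (C * (M * ‖x‖)))) := by
          rw [Finset.sum_const, Finset.card_range, nsmul_eq_mul]
  have hn_le : (n : ℝ) ≤ 2 * (1 + Real.log (b / a)) := by
    have h1 : (n : ℝ) = (⌈L⌉₊ : ℝ) + 1 := by rw [hndef]; push_cast; ring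
    have h2 : (⌈L⌉₊ : ℝ) < L + 1 := Nat.ceil_lt_add_one hL0
    have h3 : L ≤ 2 * Real.log (b / a) := by
      rw [hLdef, Real.logb]
      rw [div_le_iff₀ (Real.log_pos one_lt_two)]
      nlinarith [Real.log_two_gt_d9, hlog.le]
    linarith
  have hE0 : 0 ≤ 2 * (M * (C * (M * ‖x‖))) := by positivity
  calc ‖∫ s, h s • T s x ∂ν‖ ≤ (n : ℝ) * (2 * (M * (C * (M * ‖x‖)))) := hnormsum
    _ ≤ (2 * (1 + Real.log (b / a))) * (2 * (M * (C * (M * ‖x‖)))) :=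
        mul_le_mul_of_nonneg_right hn_le hE0
    _ = 4 * (1 + Real.log (b / a)) * M ^ 2 * C * ‖x‖ := by ring
end

section
/- Let p ∈ (1,∞). Then there is a constant c_p ≥ 0 such that the following holds: whenever X is a Banach space, (T(s))_{s≥0} is a C₀-semigroup on X satisfying ‖T(s)‖ ≤ M(1+s)^α for all s ≥ 0 (with constants M ≥ 0, α ≥ 0), 0 < a < b < ∞, μ is a finite complex Borel measure on [0,∞) supported in [a,b], and C ≥ 0 is an L^p(ℝ;X)-convolution bound for μ, then ‖∫_{[a,b]} T(s)x μ(ds)‖ ≤ c_p M² (1+b)^{2α} (1 + log(b/a)) C ‖x‖ for all x ∈ X. -/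
open MeasureTheory Set
open scoped ENNReal NNReal

noncomputable def tri (v s : ℝ) : ℝ := (max 0 (min v s - max 0 (s - v))) / v

lemma tri_nonneg {v : ℝ} (hv : 0 < v) (s : ℝ) : 0 ≤ tri v s :=
  div_nonneg (le_max_left _ _) hv.le

lemma tri_le_one {v : ℝ} (hv : 0 < v) (s : ℝ) : tri v s ≤ 1 := by
  rw [tri, div_le_one hv]
  refine max_le hv.le ?_
  have : min v s ≤ v := min_le_left _ _
  have : (0:ℝ) ≤ max 0 (s - v) := le_max_left _ _
  linarith

lemma tri_eq_left {v s : ℝ} (hv : 0 < v) (h0 : 0 ≤ s) (h1 : s ≤ v) : tri v s = s / v := by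
  have h3 : max 0 (s - v) = 0 := max_eq_left (by linarith)
  rw [tri, min_eq_right h1, h3, sub_zero, max_eq_right h0]

lemma tri_eq_right {v s : ℝ} (hv : 0 < v) (h1 : v ≤ s) (h2 : s ≤ 2 * v) :
    tri v s = 2 - s / v := by
  have h3 : max 0 (s - v) = max 0 (s - v) := rfl
  rw [tri, min_eq_left h1, max_eq_right (show (0:ℝ) ≤ s - v by linarith),
    max_eq_right (show (0:ℝ) ≤ v - (s - v) by linarith)]
  field_simp
  ring

lemma tri_eq_zero {v s : ℝ} (hv : 0 < v) (h : 2 * v ≤ s) : tri v s = 0 := by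
  rw [tri, min_eq_left (by linarith), max_eq_right (show (0:ℝ) ≤ s - v by linarith),
    max_eq_left (show v - (s - v) ≤ 0 by linarith), zero_div]

lemma tri_sum (b : ℝ) (hb : 0 < b) :
    ∀ n : ℕ, ∀ s : ℝ, b / 2 ^ n ≤ s → s ≤ b →
      tri b s + (1 / 2) * ∑ j ∈ Finset.range n, tri (b / 2 ^ (j + 1)) s = 1 := by
  intro n
  induction n with
  | zero =>
    intro s h1 h2
    simp only [pow_zero, div_one] at h1
    have hs : s = b := le_antisymm h2 h1
    subst hs
    rw [tri_eq_left hb hb.le le_rfl, div_self hb.ne']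
    simp
  | succ n ih =>
    intro s h1 h2
    have hpow : (0:ℝ) < 2 ^ n := by positivity
    have hpow1 : (0:ℝ) < 2 ^ (n+1) := by positivity
    have hs0 : 0 < s := lt_of_lt_of_le (by positivity) h1
    rw [Finset.sum_range_succ]
    rcases le_or_gt (b / 2 ^ n) s with hc | hc
    · have hz : tri (b / 2 ^ (n + 1)) s = 0 := by
        apply tri_eq_zero (by positivity)
        rw [pow_succ] at *
        rw [div_mul_eq_div_div] at *
        linarith
      rw [hz]
      have := ih s hc h2
      linarith
    · have hlef : ∀ j ∈ Finset.range n, tri (b / 2 ^ (j + 1)) s = s * 2 ^ (j+1) / b := by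
        intro j hj
        have hjn : j + 1 ≤ n := Finset.mem_range.1 hj
        have hle : s ≤ b / 2 ^ (j + 1) := by
          refine hc.le.trans ?_
          apply div_le_div_of_nonneg_left hb.le (by positivity)
          exact pow_le_pow_right₀ (by norm_num) hjn
        rw [tri_eq_left (by positivity) hs0.le hle, div_div_eq_mul_div]
      have hmid : tri (b / 2 ^ (n + 1)) s = 2 - s * 2 ^ (n+1) / b := by
        rw [tri_eq_right (by positivity) h1 (by
          rw [pow_succ, div_mul_eq_div_div]
          linarith)]
        rw [div_div_eq_mul_div]
      have htb : tri b s = s / b := tri_eq_left hb hs0.le h2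
      rw [htb, hmid, Finset.sum_congr rfl hlef]
      have hgeom : ∑ j ∈ Finset.range n, (s * 2 ^ (j+1) / b) = s * (2^(n+1) - 2) / b := by
        have : ∑ j ∈ Finset.range n, (s * 2 ^ (j+1) / b)
            = (s * 2 / b) * ∑ j ∈ Finset.range n, (2:ℝ) ^ j := by
          rw [Finset.mul_sum]
          refine Finset.sum_congr rfl fun j _ => ?_
          rw [pow_succ]
          ring
        rw [this, geom_sum_eq (by norm_num : (2:ℝ) ≠ 1)]
        rw [pow_succ]
        field_simp
        ring
      rw [hgeom]
      field_simp
      ring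

lemma indicator_prod_eq (v s : ℝ) :
    (fun t : ℝ => (Icc (0:ℝ) v).indicator (1 : ℝ → ℝ) t * (Icc (0:ℝ) v).indicator (1 : ℝ → ℝ) (s - t))
      = (Icc (max 0 (s - v)) (min v s)).indicator (1 : ℝ → ℝ) := by
  funext t
  simp only [Set.indicator_apply, Set.mem_Icc, Pi.one_apply]
  by_cases h1 : 0 ≤ t ∧ t ≤ v
  · by_cases h2 : 0 ≤ s - t ∧ s - t ≤ v
    · rw [if_pos h1, if_pos h2, if_pos ⟨max_le (by linarith [h1.1]) (by linarith [h2.2]),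
        le_min (by linarith [h1.2]) (by linarith [h2.1])⟩, mul_one]
    · have hn : ¬(max 0 (s - v) ≤ t ∧ t ≤ min v s) := by
        rintro ⟨ha, hb⟩
        rw [max_le_iff] at ha
        rw [le_min_iff] at hb
        exact h2 ⟨by linarith [hb.2], by linarith [ha.2]⟩
      rw [if_pos h1, if_neg h2, if_neg hn, mul_zero]
  · have hn : ¬(max 0 (s - v) ≤ t ∧ t ≤ min v s) := by
      rintro ⟨ha, hb⟩
      rw [max_le_iff] at ha
      rw [le_min_iff] at hb
      exact h1 ⟨ha.1, hb.1⟩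
    rw [if_neg h1, if_neg hn, zero_mul]

lemma conv_tri {v : ℝ} (hv : 0 < v) (s : ℝ) :
    ∫ t : ℝ, ((Icc (0:ℝ) v).indicator (1 : ℝ → ℝ) t * (Icc (0:ℝ) v).indicator (1 : ℝ → ℝ) (s - t)) = v * tri v s := by
  rw [indicator_prod_eq]
  rw [MeasureTheory.integral_indicator_one measurableSet_Icc, measureReal_def, Real.volume_Icc]
  rw [ENNReal.toReal_ofReal', tri]
  rw [mul_div_cancel₀ _ hv.ne']
  rw [max_comm]

set_option maxHeartbeats 1000000 in
/-- **Transference for semigroups with polynomially growing norm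
(Corollary 4.2).**  For every `p ∈ (1,∞)` there is `c_p ≥ 0` such that for
every `C₀`-semigroup with `‖T(s)‖ ≤ M(1+s)^α`, every `0 < a < b`, every
finite complex Borel measure `μ = h·ν` supported in `[a,b]` and every
`L^p(ℝ;X)`-convolution bound `C` for `μ`:
`‖T_μ x‖ ≤ c_p M² (1+b)^{2α} (1 + log(b/a)) C ‖x‖`. -/
theorem transference_semigroup_polynomial_growth (p : ℝ) (hp : 1 < p) :
    ∃ c : ℝ, 0 ≤ c ∧
      ∀ (X : Type*) [NormedAddCommGroup X] [NormedSpace ℂ X] [CompleteSpace X],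
      ∀ T : ℝ → X →L[ℂ] X,
        T 0 = 1 →
        (∀ s ≥ (0:ℝ), ∀ t ≥ (0:ℝ), T (s + t) = (T s).comp (T t)) →
        (∀ x : X, ContinuousOn (fun s => T s x) (Set.Ici 0)) →
      ∀ M α : ℝ, 0 ≤ M → 0 ≤ α →
        (∀ s : ℝ, 0 ≤ s → ‖T s‖ ≤ M * (1 + s) ^ α) →
      ∀ a b : ℝ, 0 < a → a < b →
      ∀ ν : Measure ℝ, IsFiniteMeasure ν → ν (Set.Icc a b)ᶜ = 0 →
      ∀ h : ℝ → ℂ, Integrable h ν →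
      ∀ C : ℝ, 0 ≤ C →
        (∀ F : ℝ → X, MemLp F (ENNReal.ofReal p) volume →
          eLpNorm (fun t => ∫ s, h s • F (t - s) ∂ν) (ENNReal.ofReal p) volume
            ≤ ENNReal.ofReal C * eLpNorm F (ENNReal.ofReal p) volume) →
      ∀ x : X,
        ‖∫ s, h s • T s x ∂ν‖ ≤
          c * M ^ 2 * (1 + b) ^ (2 * α) * (1 + Real.log (b / a)) * C * ‖x‖ := by
  refine ⟨2, by norm_num, ?_⟩
  intro X _ _ _ T hT0 hTsem hTcont M α hM hα hTbound a b ha hab ν hνfin hνsupp h hh C hC0 hC x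
  have hb : 0 < b := ha.trans hab
  have hb1 : (0:ℝ) < 1 + b := by linarith
  set q : ℝ := p / (p - 1) with hqdef
  have hpq : p.HolderConjugate q := Real.HolderConjugate.conjExponent hp
  set K : ℝ := M * (1 + b) ^ α with hK
  have hK0 : 0 ≤ K := mul_nonneg hM (Real.rpow_nonneg (by linarith) α)
  have hTle : ∀ r ∈ Icc (0:ℝ) b, ‖T r‖ ≤ K := by
    intro r hr
    refine (hTbound r hr.1).trans ?_
    exact mul_le_mul_of_nonneg_left
      (Real.rpow_le_rpow (by linarith [hr.1]) (by linarith [hr.2]) hα) hM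
  set u : ℝ → X := fun s => T (max s 0) x with hu
  have hmax : Continuous fun s : ℝ => max s 0 := by fun_prop
  have hu_cont : Continuous u := by
    have h1 : Continuous ((fun s => T s x) ∘ (fun s : ℝ => max s 0)) :=
      (hTcont x).comp_continuous hmax (fun s => le_max_right s 0)
    exact h1
  have hu_le : ∀ r ∈ Icc (0:ℝ) b, ‖u r‖ ≤ K * ‖x‖ := by
    intro r hr
    have hur : u r = T r x := by rw [hu]; simp [max_eq_left hr.1]
    rw [hur]
    exact (ContinuousLinearMap.le_opNorm _ _).trans
      (mul_le_mul_of_nonneg_right (hTle r hr) (norm_nonneg x))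
  have hae : ∀ᵐ s ∂ν, s ∈ Icc a b := by
    rw [MeasureTheory.ae_iff]
    exact hνsupp
  have hgoal_eq : (∫ s, h s • T s x ∂ν) = ∫ s, h s • u s ∂ν := by
    refine integral_congr_ae ?_
    filter_upwards [hae] with s hs
    have : max s 0 = s := max_eq_left (le_trans ha.le hs.1)
    rw [hu]
    simp [this]
  have hsm0 : AEStronglyMeasurable (fun s => h s • u s) ν :=
    hh.aestronglyMeasurable.smul hu_cont.aestronglyMeasurable
  have hint0 : Integrable (fun s => h s • u s) ν := by
    refine Integrable.mono' (hh.norm.mul_const (K * ‖x‖)) hsm0 ?_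
    filter_upwards [hae] with s hs
    rw [norm_smul]
    exact mul_le_mul_of_nonneg_left (hu_le s ⟨ha.le.trans hs.1, hs.2⟩) (norm_nonneg _)
  have htri_cont : ∀ v : ℝ, Continuous (fun s => tri v s) := by
    intro v
    unfold tri
    fun_prop
  have hintg : ∀ v : ℝ, 0 < v → Integrable (fun s => tri v s • (h s • u s)) ν := by
    intro v hv
    refine Integrable.mono' (hh.norm.mul_const (K * ‖x‖))
      (((htri_cont v).aestronglyMeasurable).smul hsm0) ?_
    filter_upwards [hae] with s hs
    rw [norm_smul, Real.norm_eq_abs, abs_of_nonneg (tri_nonneg hv s)]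
    calc tri v s * ‖h s • u s‖ ≤ 1 * ‖h s • u s‖ :=
          mul_le_mul_of_nonneg_right (tri_le_one hv s) (norm_nonneg _)
      _ = ‖h s • u s‖ := one_mul _
      _ ≤ ‖h s‖ * (K * ‖x‖) := by
          rw [norm_smul]
          exact mul_le_mul_of_nonneg_left (hu_le s ⟨ha.le.trans hs.1, hs.2⟩) (norm_nonneg _)
  -- the dyadic scale count
  set n : ℕ := ⌈Real.logb 2 (b / a)⌉₊ with hn
  have hba1 : (1:ℝ) < b / a := (one_lt_div ha).2 hab
  have hlog0 : 0 ≤ Real.logb 2 (b / a) := Real.logb_nonneg one_lt_two hba1.le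
  have h2n : b / a ≤ 2 ^ n := by
    have h1 : b / a = (2:ℝ) ^ (Real.logb 2 (b/a)) :=
      (Real.rpow_logb two_pos (by norm_num) (by positivity)).symm
    have h2 : (2:ℝ) ^ (Real.logb 2 (b/a)) ≤ (2:ℝ) ^ ((n:ℝ)) :=
      Real.rpow_le_rpow_of_exponent_le one_le_two (Nat.le_ceil _)
    rw [h1]
    rw [Real.rpow_natCast] at h2
    exact h2
  have hw0 : b / 2 ^ n ≤ a := by
    rw [div_le_iff₀ (by positivity : (0:ℝ) < 2 ^ n)]
    rw [div_le_iff₀ ha] at h2n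
    linarith
  -- conjugate exponent facts
  have hp0 : (ENNReal.ofReal p) ≠ 0 := by
    simp only [ne_eq, ENNReal.ofReal_eq_zero, not_le]
    linarith
  have hptop : (ENNReal.ofReal p) ≠ ⊤ := ENNReal.ofReal_ne_top
  have hptoReal : (ENNReal.ofReal p).toReal = p := ENNReal.toReal_ofReal (by linarith)
  -- THE CORE TRANSFERENCE ESTIMATE
  have core : ∀ v : ℝ, 0 < v → v ≤ b →
      ‖∫ s, tri v s • (h s • u s) ∂ν‖ ≤ K * K * C * ‖x‖ := by
    intro v hv hvb
    have hKx : (0:ℝ) ≤ K * ‖x‖ := mul_nonneg hK0 (norm_nonneg x)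
    set F : ℝ → X := fun r => (Icc (-v) (0:ℝ)).indicator (fun r => u (-r)) r with hF
    have hF_sm : StronglyMeasurable F :=
      ((hu_cont.comp continuous_neg).stronglyMeasurable).indicator measurableSet_Icc
    have hF_le : ∀ r : ℝ, ‖F r‖ ≤ ‖(Icc (-v) (0:ℝ)).indicator (fun _ => K * ‖x‖) r‖ := by
      intro r
      by_cases hr : r ∈ Icc (-v) (0:ℝ)
      · simp only [hF, Set.indicator_of_mem hr, Real.norm_eq_abs, abs_of_nonneg hKx]
        exact hu_le (-r) ⟨by linarith [hr.2], by linarith [hr.1, hvb]⟩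
      · simp [hF, Set.indicator_of_notMem hr]
    have hF_le' : ∀ r : ℝ, ‖F r‖ ≤ K * ‖x‖ := by
      intro r
      refine (hF_le r).trans ?_
      by_cases hr : r ∈ Icc (-v) (0:ℝ)
      · rw [Set.indicator_of_mem hr, Real.norm_eq_abs, abs_of_nonneg hKx]
      · rw [Set.indicator_of_notMem hr]
        simpa using hKx
    have hvol : volume (Icc (-v) (0:ℝ)) = ENNReal.ofReal v := by
      rw [Real.volume_Icc]
      norm_num
    have hF_eLp : eLpNorm F (ENNReal.ofReal p) volume ≤
        ENNReal.ofReal (K * ‖x‖) * (ENNReal.ofReal v) ^ (1/p) := by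
      refine (eLpNorm_mono hF_le).trans ?_
      rw [eLpNorm_indicator_const measurableSet_Icc hp0 hptop, hvol, hptoReal]
      apply mul_le_mul_left
      rw [← ofReal_norm, Real.norm_eq_abs, abs_of_nonneg hKx]
    have hF_mem : MemLp F (ENNReal.ofReal p) volume := by
      refine ⟨hF_sm.aestronglyMeasurable, lt_of_le_of_lt hF_eLp ?_⟩
      exact ENNReal.mul_lt_top ENNReal.ofReal_lt_top
        (ENNReal.rpow_lt_top_of_nonneg (by positivity) ENNReal.ofReal_ne_top)
    have hG_aesm : AEStronglyMeasurable (fun t => ∫ s, h s • F (t - s) ∂ν) volume := by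
      apply AEStronglyMeasurable.integral_prod_right'
        (f := fun z : ℝ × ℝ => h z.2 • F (z.1 - z.2))
      exact (hh.aestronglyMeasurable.comp_snd).smul
        ((hF_sm.comp_measurable (measurable_fst.sub measurable_snd)).aestronglyMeasurable)
    have hG_le : eLpNorm (fun t => ∫ s, h s • F (t - s) ∂ν) (ENNReal.ofReal p) volume ≤
        ENNReal.ofReal C * (ENNReal.ofReal (K * ‖x‖) * (ENNReal.ofReal v) ^ (1/p)) :=
      (hC F hF_mem).trans (mul_le_mul_right hF_eLp _)
    have hconv_int : ∀ t : ℝ, Integrable (fun s => h s • F (t - s)) ν := by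
      intro t
      refine Integrable.mono' (hh.norm.mul_const (K * ‖x‖))
        (hh.aestronglyMeasurable.smul
          ((hF_sm.comp_measurable (measurable_const.sub measurable_id)).aestronglyMeasurable)) ?_
      filter_upwards with s
      rw [norm_smul]
      exact mul_le_mul_of_nonneg_left (hF_le' _) (norm_nonneg _)
    set ind : ℝ → ℝ := (Icc (0:ℝ) v).indicator (1 : ℝ → ℝ) with hind
    have hind_meas : Measurable ind := measurable_one.indicator measurableSet_Icc
    have hind_nonneg : ∀ t, 0 ≤ ind t := fun t => Set.indicator_nonneg (fun _ _ => zero_le_one) t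
    have hind_le_one : ∀ t, ind t ≤ 1 := by
      intro t
      by_cases ht : t ∈ Icc (0:ℝ) v
      · simp [hind, Set.indicator_of_mem ht]
      · simp [hind, Set.indicator_of_notMem ht]
    have hind_int : Integrable ind volume := by
      rw [hind, integrable_indicator_iff measurableSet_Icc]
      refine (integrableOn_const_iff).2 (Or.inr ?_)
      rw [Real.volume_Icc]
      exact ENNReal.ofReal_lt_top
    set f : ℝ → ℝ → X := fun s t => (v⁻¹ * (ind t * ind (s - t))) • (h s • u s) with hf
    have hΦaesm : AEStronglyMeasurable (Function.uncurry f) (ν.prod volume) := by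
      apply AEStronglyMeasurable.smul (𝕜 := ℝ)
      · exact (((hind_meas.comp measurable_snd).mul
          (hind_meas.comp (measurable_fst.sub measurable_snd))).const_mul v⁻¹).aestronglyMeasurable
      · exact (hh.aestronglyMeasurable.comp_fst).smul (hu_cont.comp continuous_fst).aestronglyMeasurable
    have haeprod : ∀ᵐ z : ℝ × ℝ ∂(ν.prod volume), z.1 ∈ Icc a b := by
      rw [MeasureTheory.ae_iff]
      have hseq : {z : ℝ × ℝ | ¬ z.1 ∈ Icc a b} = (Icc a b)ᶜ ×ˢ (univ : Set ℝ) := by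
        ext z
        simp [Set.mem_prod]
      rw [hseq, Measure.prod_prod, hνsupp, zero_mul]
    have hΦint : Integrable (Function.uncurry f) (ν.prod volume) := by
      refine Integrable.mono' ((hh.norm.mul_const (v⁻¹ * (K * ‖x‖))).mul_prod hind_int) hΦaesm ?_
      filter_upwards [haeprod] with z hz
      have hnn : (0:ℝ) ≤ v⁻¹ * (ind z.2 * ind (z.1 - z.2)) :=
        mul_nonneg (inv_nonneg.2 hv.le) (mul_nonneg (hind_nonneg _) (hind_nonneg _))
      calc ‖Function.uncurry f z‖
          = (v⁻¹ * (ind z.2 * ind (z.1 - z.2))) * ‖h z.1 • u z.1‖ := by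
            simp only [Function.uncurry, hf, norm_smul, Real.norm_eq_abs, abs_of_nonneg hnn]
        _ ≤ (v⁻¹ * (ind z.2 * 1)) * (‖h z.1‖ * (K * ‖x‖)) := by
            refine mul_le_mul ?_ ?_ (norm_nonneg _)
              (mul_nonneg (inv_nonneg.2 hv.le) (mul_nonneg (hind_nonneg _) zero_le_one))
            · exact mul_le_mul_of_nonneg_left
                (mul_le_mul_of_nonneg_left (hind_le_one _) (hind_nonneg _))
                (inv_nonneg.2 hv.le)
            · rw [norm_smul]
              exact mul_le_mul_of_nonneg_left (hu_le z.1 ⟨ha.le.trans hz.1, hz.2⟩) (norm_nonneg _)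
        _ = (‖h z.1‖ * (v⁻¹ * (K * ‖x‖))) * ind z.2 := by ring
    have hrepr : (∫ s, tri v s • (h s • u s) ∂ν)
        = ∫ t : ℝ, (∫ s, f s t ∂ν) ∂volume := by
      rw [← MeasureTheory.integral_integral_swap hΦint]
      refine integral_congr_ae (Filter.Eventually.of_forall fun s => ?_)
      simp only [hf]
      rw [integral_smul_const, integral_const_mul, hind, conv_tri hv s, ← mul_assoc,
        inv_mul_cancel₀ hv.ne', one_mul]
    have hJ : ∀ t : ℝ, ENNReal.ofReal ‖∫ s, f s t ∂ν‖ ≤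
        ENNReal.ofReal (v⁻¹ * K) *
          ((Icc (0:ℝ) v).indicator (fun _ => (1:ℝ≥0∞)) t
            * ENNReal.ofReal ‖∫ s, h s • F (t - s) ∂ν‖) := by
      intro t
      by_cases ht : t ∈ Icc (0:ℝ) v
      · have hind1 : ind t = 1 := by rw [hind, Set.indicator_of_mem ht, Pi.one_apply]
        have hJt : (∫ s, f s t ∂ν) = v⁻¹ • ((T t) (∫ s, h s • F (t - s) ∂ν)) := by
          have h1 : ∀ᵐ s ∂ν, f s t = v⁻¹ • ((T t) (h s • F (t - s))) := by
            filter_upwards [hae] with s hs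
            have hus : u s = T s x := by
              rw [hu]
              simp only [max_eq_left (ha.le.trans hs.1)]
            by_cases hst : s - t ∈ Icc (0:ℝ) v
            · have hind2 : ind (s - t) = 1 := by
                rw [hind, Set.indicator_of_mem hst, Pi.one_apply]
              have hts : t - s ∈ Icc (-v) (0:ℝ) := ⟨by linarith [hst.2], by linarith [hst.1]⟩
              have hFts : F (t - s) = u (s - t) := by
                rw [hF]
                simp only [Set.indicator_of_mem hts, neg_sub]
              have hust : u (s - t) = T (s - t) x := by
                rw [hu]
                simp only [max_eq_left hst.1]
              have hsemi : (T t) ((T (s - t)) x) = T s x := by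
                have h6 := hTsem t ht.1 (s - t) hst.1
                have h7 : t + (s - t) = s := by ring
                rw [h7] at h6
                rw [h6]
                rfl
              simp only [hf, hind1, hind2, mul_one, hFts, hust, (T t).map_smul, hsemi, hus,
                smul_smul]
            · have hind2 : ind (s - t) = 0 := by rw [hind, Set.indicator_of_notMem hst]
              have hts : ¬ (t - s) ∈ Icc (-v) (0:ℝ) := by
                intro hmem
                exact hst ⟨by linarith [hmem.2], by linarith [hmem.1]⟩
              have hFts : F (t - s) = 0 := by
                rw [hF]
                simp only [Set.indicator_of_notMem hts]
              simp [hf, hind2, hFts]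
          rw [integral_congr_ae h1, integral_smul]
          congr 1
          rw [← ContinuousLinearMap.integral_comp_comm (T t) (hconv_int t)]
        rw [hJt, Set.indicator_of_mem ht, one_mul, norm_smul, Real.norm_eq_abs,
          abs_of_nonneg (inv_nonneg.2 hv.le)]
        have hTt : ‖(T t) (∫ s, h s • F (t - s) ∂ν)‖ ≤ K * ‖∫ s, h s • F (t - s) ∂ν‖ :=
          ((T t).le_opNorm _).trans
            (mul_le_mul_of_nonneg_right (hTle t ⟨ht.1, ht.2.trans hvb⟩) (norm_nonneg _))
        calc ENNReal.ofReal (v⁻¹ * ‖(T t) (∫ s, h s • F (t - s) ∂ν)‖)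
            ≤ ENNReal.ofReal (v⁻¹ * K * ‖∫ s, h s • F (t - s) ∂ν‖) := by
              apply ENNReal.ofReal_le_ofReal
              rw [mul_assoc]
              exact mul_le_mul_of_nonneg_left hTt (inv_nonneg.2 hv.le)
          _ = ENNReal.ofReal (v⁻¹ * K) * ENNReal.ofReal ‖∫ s, h s • F (t - s) ∂ν‖ :=
              ENNReal.ofReal_mul (by positivity)
      · have hind0 : ind t = 0 := by rw [hind, Set.indicator_of_notMem ht]
        have hzero : ∀ s : ℝ, f s t = 0 := by
          intro s
          simp [hf, hind0]
        simp [hzero, Set.indicator_of_notMem ht]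
    have hG_eq : eLpNorm (fun t => ∫ s, h s • F (t - s) ∂ν) (ENNReal.ofReal p) volume
        = (∫⁻ t, (ENNReal.ofReal ‖∫ s, h s • F (t - s) ∂ν‖) ^ p ∂volume) ^ (1/p) := by
      rw [eLpNorm_eq_lintegral_rpow_enorm_toReal hp0 hptop, hptoReal]
      congr 1
      refine lintegral_congr fun t => ?_
      rw [ofReal_norm]
    have hindE : (∫⁻ t, ((Icc (0:ℝ) v).indicator (fun _ => (1:ℝ≥0∞)) t) ^ q ∂volume)
        = ENNReal.ofReal v := by
      have h1 : ∀ t : ℝ, ((Icc (0:ℝ) v).indicator (fun _ => (1:ℝ≥0∞)) t) ^ q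
          = (Icc (0:ℝ) v).indicator (fun _ => (1:ℝ≥0∞)) t := by
        intro t
        by_cases ht : t ∈ Icc (0:ℝ) v
        · rw [Set.indicator_of_mem ht, ENNReal.one_rpow]
        · rw [Set.indicator_of_notMem ht, ENNReal.zero_rpow_of_pos hpq.symm.pos]
      rw [lintegral_congr h1, lintegral_indicator measurableSet_Icc, setLIntegral_one,
        Real.volume_Icc, sub_zero]
    have hhol : (∫⁻ t, ((Icc (0:ℝ) v).indicator (fun _ => (1:ℝ≥0∞)) t
          * ENNReal.ofReal ‖∫ s, h s • F (t - s) ∂ν‖) ∂volume)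
        ≤ (ENNReal.ofReal v) ^ (1/q) *
          eLpNorm (fun t => ∫ s, h s • F (t - s) ∂ν) (ENNReal.ofReal p) volume := by
      have hmeas1 : AEMeasurable ((Icc (0:ℝ) v).indicator (fun _ => (1:ℝ≥0∞))) volume :=
        (measurable_const.indicator measurableSet_Icc).aemeasurable
      have hmeas2 : AEMeasurable (fun t => ENNReal.ofReal ‖∫ s, h s • F (t - s) ∂ν‖) volume :=
        ENNReal.measurable_ofReal.comp_aemeasurable hG_aesm.norm.aemeasurable
      have := ENNReal.lintegral_mul_le_Lp_mul_Lq volume hpq.symm hmeas1 hmeas2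
      rw [hindE] at this
      rw [hG_eq]
      exact this
    have hKKC' : (0:ℝ) ≤ K * K * C * ‖x‖ := by positivity
    calc ‖∫ s, tri v s • (h s • u s) ∂ν‖
        = ‖∫ t : ℝ, (∫ s, f s t ∂ν) ∂volume‖ := by rw [hrepr]
      _ ≤ (∫⁻ t, ENNReal.ofReal ‖∫ s, f s t ∂ν‖ ∂volume).toReal :=
          norm_integral_le_lintegral_norm _
      _ ≤ (ENNReal.ofReal (K * K * C * ‖x‖)).toReal := by
          apply ENNReal.toReal_mono ENNReal.ofReal_ne_top
          calc ∫⁻ t, ENNReal.ofReal ‖∫ s, f s t ∂ν‖ ∂volume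
              ≤ ∫⁻ t, ENNReal.ofReal (v⁻¹ * K) *
                  ((Icc (0:ℝ) v).indicator (fun _ => (1:ℝ≥0∞)) t
                    * ENNReal.ofReal ‖∫ s, h s • F (t - s) ∂ν‖) ∂volume := lintegral_mono hJ
            _ = ENNReal.ofReal (v⁻¹ * K) *
                  ∫⁻ t, ((Icc (0:ℝ) v).indicator (fun _ => (1:ℝ≥0∞)) t
                    * ENNReal.ofReal ‖∫ s, h s • F (t - s) ∂ν‖) ∂volume :=
                lintegral_const_mul' _ _ ENNReal.ofReal_ne_top
            _ ≤ ENNReal.ofReal (v⁻¹ * K) * ((ENNReal.ofReal v) ^ (1/q) *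
                  (ENNReal.ofReal C * (ENNReal.ofReal (K * ‖x‖) * (ENNReal.ofReal v) ^ (1/p)))) :=
                mul_le_mul_right (hhol.trans (mul_le_mul_right hG_le _)) _
            _ = ENNReal.ofReal (K * K * C * ‖x‖) := by
                rw [ENNReal.ofReal_rpow_of_pos hv, ENNReal.ofReal_rpow_of_pos hv,
                  ← ENNReal.ofReal_mul hKx, ← ENNReal.ofReal_mul hC0,
                  ← ENNReal.ofReal_mul (Real.rpow_nonneg hv.le _),
                  ← ENNReal.ofReal_mul (by positivity)]
                congr 1
                have hsum : v ^ (1/q) * v ^ (1/p) = v := by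
                  rw [← Real.rpow_add hv, show 1/q + 1/p = 1 from by
                    rw [one_div, one_div, add_comm]
                    exact hpq.inv_add_inv_eq_one]
                  exact Real.rpow_one v
                have hre : v⁻¹ * K * (v ^ (1/q) * (C * (K * ‖x‖ * v ^ (1/p))))
                    = (v⁻¹ * (v ^ (1/q) * v ^ (1/p))) * (K * K * C * ‖x‖) := by ring
                rw [hre, hsum, inv_mul_cancel₀ hv.ne', one_mul]
      _ = K * K * C * ‖x‖ := ENNReal.toReal_ofReal hKKC'

  -- ASSEMBLY
  have hone : ∀ᵐ s ∂ν, h s • u s =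
      tri b s • (h s • u s)
        + (1/2 : ℝ) • ∑ j ∈ Finset.range n, tri (b / 2 ^ (j+1)) s • (h s • u s) := by
    filter_upwards [hae] with s hs
    have hid := tri_sum b hb n s (le_trans hw0 hs.1) hs.2
    rw [← Finset.sum_smul, smul_smul, ← add_smul, hid, one_smul]
  have hIntSum : Integrable
      (fun s => ∑ j ∈ Finset.range n, tri (b / 2 ^ (j+1)) s • (h s • u s)) ν :=
    integrable_finset_sum _ (fun j _ => hintg _ (by positivity))
  have hInt2 : Integrable
      (fun s => (1/2 : ℝ) • ∑ j ∈ Finset.range n, tri (b / 2 ^ (j+1)) s • (h s • u s)) ν :=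
    hIntSum.smul _
  have hsplit : (∫ s, h s • u s ∂ν) = (∫ s, tri b s • (h s • u s) ∂ν)
      + (1/2 : ℝ) • ∑ j ∈ Finset.range n, ∫ s, tri (b / 2 ^ (j+1)) s • (h s • u s) ∂ν := by
    rw [integral_congr_ae hone, integral_add (hintg b hb) hInt2, integral_smul,
      integral_finset_sum _ (fun j _ => hintg _ (by positivity))]
  have hKKC : 0 ≤ K * K * C * ‖x‖ := by positivity
  have hmain : ‖∫ s, h s • u s ∂ν‖ ≤ (1 + (n:ℝ)/2) * (K * K * C * ‖x‖) := by
    rw [hsplit]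
    refine (norm_add_le _ _).trans ?_
    have h1 : ‖∫ s, tri b s • (h s • u s) ∂ν‖ ≤ K * K * C * ‖x‖ := core b hb le_rfl
    have h2 : ‖(1/2 : ℝ) • ∑ j ∈ Finset.range n, ∫ s, tri (b / 2 ^ (j+1)) s • (h s • u s) ∂ν‖
        ≤ (n:ℝ)/2 * (K * K * C * ‖x‖) := by
      rw [norm_smul, Real.norm_eq_abs, abs_of_nonneg (by norm_num : (0:ℝ) ≤ 1/2)]
      have h3 : ‖∑ j ∈ Finset.range n, ∫ s, tri (b / 2 ^ (j+1)) s • (h s • u s) ∂ν‖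
          ≤ (n:ℝ) * (K * K * C * ‖x‖) := by
        refine (norm_sum_le _ _).trans ?_
        calc ∑ j ∈ Finset.range n, ‖∫ s, tri (b / 2 ^ (j+1)) s • (h s • u s) ∂ν‖
            ≤ ∑ j ∈ Finset.range n, (K * K * C * ‖x‖) := by
              refine Finset.sum_le_sum fun j _ => ?_
              refine core _ (by positivity) ?_
              calc b / 2 ^ (j+1) ≤ b / 1 := by
                    apply div_le_div_of_nonneg_left hb.le one_pos
                    exact one_le_pow₀ (by norm_num)
                _ = b := div_one b
          _ = (n:ℝ) * (K * K * C * ‖x‖) := by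
              rw [Finset.sum_const, Finset.card_range, nsmul_eq_mul]
      calc (1/2 : ℝ) * ‖∑ j ∈ Finset.range n, ∫ s, tri (b / 2 ^ (j+1)) s • (h s • u s) ∂ν‖
          ≤ (1/2) * ((n:ℝ) * (K * K * C * ‖x‖)) := by
            exact mul_le_mul_of_nonneg_left h3 (by norm_num)
        _ = (n:ℝ)/2 * (K * K * C * ‖x‖) := by ring
    linarith
  -- numerics
  have hlog2 : (1/2 : ℝ) < Real.log 2 := by
    have := Real.log_two_gt_d9
    linarith
  have hlogba : 0 ≤ Real.log (b/a) := Real.log_nonneg hba1.le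
  have hnle : (n : ℝ) < 2 * Real.log (b/a) + 1 := by
    have h1 : (n:ℝ) < Real.logb 2 (b/a) + 1 := Nat.ceil_lt_add_one hlog0
    have h2 : Real.logb 2 (b/a) ≤ 2 * Real.log (b/a) := by
      rw [Real.logb, div_le_iff₀ (by linarith : (0:ℝ) < Real.log 2)]
      nlinarith
    linarith
  have hfac : 1 + (n:ℝ)/2 ≤ 2 * (1 + Real.log (b/a)) := by linarith
  have hKK : K * K = M^2 * (1+b)^(2*α) := by
    rw [hK, show (2:ℝ)*α = α + α by ring, Real.rpow_add hb1]
    ring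
  rw [hgoal_eq]
  calc ‖∫ s, h s • u s ∂ν‖ ≤ (1 + (n:ℝ)/2) * (K * K * C * ‖x‖) := hmain
    _ ≤ (2 * (1 + Real.log (b/a))) * (K * K * C * ‖x‖) :=
        mul_le_mul_of_nonneg_right hfac hKKC
    _ = 2 * M ^ 2 * (1 + b) ^ (2 * α) * (1 + Real.log (b / a)) * C * ‖x‖ := by
        rw [hKK]
        ring
end

section
/- Let p ∈ (1,∞). Then there is a constant c_p ≥ 0 such that the following holds: whenever X is a Banach space, (T(s))_{s≥0} is a C₀-semigroup on X with M := sup_{s≥0} ‖T(s)‖ < ∞, 0 < a < b < ∞, μ is a finite complex Borel measure on [0,∞) supported in [a,b], and C ≥ 0 is an L^p(ℝ;X)-convolution bound for μ, then ‖∫_{[a,b]} T(s)x μ(ds)‖ ≤ c_p M² (1 + log(b/a)) C ‖x‖ for all x ∈ X. -/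
open MeasureTheory

namespace TransferenceProofAux

noncomputable def Kf (w s : ℝ) : ℝ := max 0 (min w s - max 0 (s - w))

lemma rearr {X : Type*} [NormedAddCommGroup X] [NormedSpace ℂ X]
    (r k : ℝ) (c : ℂ) (v : X) : r • (c • (k • v)) = (k * r) • (c • v) := by
  rw [smul_comm r c, smul_smul, smul_comm (k * r) c, mul_comm r k]

lemma Kf_nonneg (w s : ℝ) : 0 ≤ Kf w s := le_max_left _ _

lemma Kf_le (w s : ℝ) (hw : 0 ≤ w) : Kf w s ≤ w := by
  apply max_le hw
  have h1 : min w s - max 0 (s - w) ≤ min w s - 0 := by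
    gcongr; exact le_max_left _ _
  simpa using h1.trans (by simpa using min_le_left w s)



lemma Kf_eq_zero {w s : ℝ} (h1 : 0 < w) (h2 : 2*w ≤ s) : Kf w s = 0 := by
  unfold Kf
  rw [min_eq_left (show w ≤ s by linarith),
    max_eq_right (show (0:ℝ) ≤ s - w by linarith),
    max_eq_left (show w - (s - w) ≤ (0:ℝ) by linarith)]

lemma Kf_eq_mid {w s : ℝ} (h1 : s ≤ 2*w) (h2 : w ≤ s) : Kf w s = 2*w - s := by
  unfold Kf
  rw [min_eq_left h2, max_eq_right (show (0:ℝ) ≤ s - w by linarith),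
    max_eq_right (show (0:ℝ) ≤ w - (s - w) by linarith)]
  ring

lemma Kf_eq_top {w s : ℝ} (h1 : s ≤ w) (h2 : 0 ≤ s) : Kf w s = s := by
  unfold Kf
  rw [min_eq_right h1, max_eq_left (show s - w ≤ (0:ℝ) by linarith), sub_zero,
    max_eq_right h2]

lemma Kf_contw (s : ℝ) : Continuous fun w : ℝ => Kf w s := by
  unfold Kf; fun_prop

/-- integrability of the kernel integrand on positive intervals -/
lemma intable (s u v : ℝ) (hu : 0 < u) (hv : 0 < v) :
    IntervalIntegrable (fun w => Kf w s * (w^2)⁻¹) volume u v := by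
  apply ContinuousOn.intervalIntegrable
  apply ContinuousOn.mul (Kf_contw s).continuousOn
  apply ContinuousOn.inv₀ (by fun_prop)
  intro x hx
  have : 0 < x := lt_of_lt_of_le (lt_min hu hv) (Set.mem_uIcc.1 hx |>.elim
    (fun h => le_trans (min_le_left _ _) h.1) (fun h => le_trans (min_le_right _ _) h.1))
  positivity

/-- Main scalar identity. -/
lemma S1 (a b s : ℝ) (ha : 0 < a) (has : a ≤ s) (hsb : s ≤ b) :
    (∫ w in (a/2)..b, Kf w s * (w^2)⁻¹) + b⁻¹ * Kf b s = 2 * Real.log 2 := by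
  have hs : 0 < s := lt_of_lt_of_le ha has
  have hb : 0 < b := lt_of_lt_of_le hs hsb
  have hKb : Kf b s = s := Kf_eq_top hsb hs.le
  have h1 : IntervalIntegrable (fun w => Kf w s * (w^2)⁻¹) volume (a/2) (s/2) :=
    intable s _ _ (by linarith) (by linarith)
  have h2 : IntervalIntegrable (fun w => Kf w s * (w^2)⁻¹) volume (s/2) s :=
    intable s _ _ (by linarith) (by linarith)
  have h3 : IntervalIntegrable (fun w => Kf w s * (w^2)⁻¹) volume s b :=
    intable s _ _ (by linarith) (by linarith)
  rw [← intervalIntegral.integral_add_adjacent_intervals (h1.trans h2) h3,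
    ← intervalIntegral.integral_add_adjacent_intervals h1 h2]
  have e1 : ∫ w in (a/2)..(s/2), Kf w s * (w^2)⁻¹ = 0 := by
    rw [intervalIntegral.integral_congr (g := fun _ => (0:ℝ))]
    · simp
    · intro w hw
      rw [Set.uIcc_of_le (by linarith)] at hw
      obtain ⟨hw1, hw2⟩ := hw
      show Kf w s * (w^2)⁻¹ = 0
      rw [Kf_eq_zero (by linarith) (by linarith), zero_mul]
  have e2 : ∫ w in (s/2)..s, Kf w s * (w^2)⁻¹ = 2 * Real.log 2 - 1 := by
    have hcongr : ∫ w in (s/2)..s, Kf w s * (w^2)⁻¹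
        = ∫ w in (s/2)..s, (2 * w⁻¹ - s * (w^2)⁻¹) := by
      apply intervalIntegral.integral_congr
      intro w hw
      rw [Set.uIcc_of_le (by linarith)] at hw
      obtain ⟨hw1, hw2⟩ := hw
      have hw0 : 0 < w := by linarith
      show Kf w s * (w^2)⁻¹ = 2 * w⁻¹ - s * (w^2)⁻¹
      rw [Kf_eq_mid (by linarith) (by linarith)]
      field_simp
    rw [hcongr]
    have hderiv : ∀ w ∈ Set.uIcc (s/2) s,
        HasDerivAt (fun w => 2 * Real.log w + s * w⁻¹) (2 * w⁻¹ - s * (w^2)⁻¹) w := by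
      intro w hw
      rw [Set.uIcc_of_le (by linarith)] at hw
      have hw0 : 0 < w := by linarith [hw.1]
      have d1 : HasDerivAt Real.log w⁻¹ w := Real.hasDerivAt_log hw0.ne'
      have d2 : HasDerivAt (fun w : ℝ => w⁻¹) (-(w^2)⁻¹) w := by
        simpa using (hasDerivAt_inv hw0.ne')
      have := ((d1.const_mul 2).add (d2.const_mul s))
      exact this.congr_deriv (by ring)
    rw [intervalIntegral.integral_eq_sub_of_hasDerivAt hderiv
      (by apply ContinuousOn.intervalIntegrable
          apply ContinuousOn.sub
          · apply ContinuousOn.mul continuousOn_const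
            apply ContinuousOn.inv₀ continuousOn_id
            intro x hx
            rw [Set.uIcc_of_le (by linarith)] at hx
            have : 0 < x := by linarith [hx.1]
            exact this.ne'
          · apply ContinuousOn.mul continuousOn_const
            apply ContinuousOn.inv₀ (by fun_prop)
            intro x hx
            rw [Set.uIcc_of_le (by linarith)] at hx
            have : 0 < x := by linarith [hx.1]
            positivity)]
    have hlog : Real.log s - Real.log (s/2) = Real.log 2 := by
      rw [← Real.log_div hs.ne' (by positivity)]
      congr 1
      field_simp
    have hv1 : s * s⁻¹ = 1 := mul_inv_cancel₀ hs.ne'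
    have hv2 : s * (s/2)⁻¹ = 2 := by field_simp [hs.ne']
    rw [hv1, hv2]
    linarith [hlog]
  have e3 : ∫ w in s..b, Kf w s * (w^2)⁻¹ = 1 - s/b := by
    have hcongr : ∫ w in s..b, Kf w s * (w^2)⁻¹
        = ∫ w in s..b, s * (w^2)⁻¹ := by
      apply intervalIntegral.integral_congr
      intro w hw
      rw [Set.uIcc_of_le (by linarith)] at hw
      obtain ⟨hw1, hw2⟩ := hw
      show Kf w s * (w^2)⁻¹ = s * (w^2)⁻¹
      rw [Kf_eq_top (by linarith) hs.le]
    rw [hcongr]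
    have hderiv : ∀ w ∈ Set.uIcc s b,
        HasDerivAt (fun w => -(s * w⁻¹)) (s * (w^2)⁻¹) w := by
      intro w hw
      rw [Set.uIcc_of_le (by linarith)] at hw
      have hw0 : 0 < w := by linarith [hw.1]
      have d2 : HasDerivAt (fun w : ℝ => w⁻¹) (-(w^2)⁻¹) w := by
        simpa using (hasDerivAt_inv hw0.ne')
      have := (d2.const_mul s).neg
      exact this.congr_deriv (by ring)
    rw [intervalIntegral.integral_eq_sub_of_hasDerivAt hderiv
      (by apply ContinuousOn.intervalIntegrable
          apply ContinuousOn.mul continuousOn_const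
          apply ContinuousOn.inv₀ (by fun_prop)
          intro x hx
          rw [Set.uIcc_of_le (by linarith)] at hx
          have : 0 < x := by linarith [hx.1]
          positivity)]
    have hv1 : s * s⁻¹ = 1 := mul_inv_cancel₀ hs.ne'
    rw [hv1]
    have : s * b⁻¹ = s / b := by ring
    rw [this]
    ring
  rw [e1, e2, e3, hKb]
  have : b⁻¹ * s = s / b := by ring
  rw [this]
  ring




lemma indicator_eq (w s t : ℝ) :
    (Set.Icc (0:ℝ) w).indicator (fun _ => (1:ℝ)) (s - t)
      = (Set.Icc (s - w) s).indicator (fun _ => (1:ℝ)) t := by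
  by_cases h : s - t ∈ Set.Icc (0:ℝ) w
  · rw [Set.indicator_of_mem h, Set.indicator_of_mem]
    simp only [Set.mem_Icc] at h ⊢; constructor <;> linarith [h.1, h.2]
  · rw [Set.indicator_of_notMem h, Set.indicator_of_notMem]
    simp only [Set.mem_Icc] at h ⊢
    intro hc; exact h ⟨by linarith [hc.2], by linarith [hc.1]⟩

lemma K_as_integral (w s : ℝ) :
    ∫ t in Set.Icc (0:ℝ) w, (Set.Icc (0:ℝ) w).indicator (fun _ => (1:ℝ)) (s - t)
      = Kf w s := by
  have h1 : ∀ t, (Set.Icc (0:ℝ) w).indicator (fun _ => (1:ℝ)) (s - t)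
      = (Set.Icc (s - w) s).indicator (fun _ => (1:ℝ)) t := fun t => indicator_eq w s t
  simp_rw [h1]
  rw [setIntegral_indicator measurableSet_Icc]
  have h2 : Set.Icc (0:ℝ) w ∩ Set.Icc (s - w) s
      = Set.Icc (max 0 (s - w)) (min w s) := by rw [Set.Icc_inter_Icc]
  rw [h2, setIntegral_const, Real.volume_real_Icc, smul_eq_mul, mul_one]
  simp [Kf, max_comm]

/-- The fundamental transference estimate for a single pair of boxes of width `w`. -/
lemma box {X : Type*} [NormedAddCommGroup X] [NormedSpace ℂ X] [CompleteSpace X]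
    (p : ℝ) (hp : 1 < p)
    (T : ℝ → X →L[ℂ] X) (M : ℝ) (hM : ∀ s, 0 ≤ s → ‖T s‖ ≤ M)
    (E : ℝ → X) (hEc : Continuous E) (B : ℝ) (hB : 0 ≤ B) (hEb : ∀ s, ‖E s‖ ≤ B)
    (hTE : ∀ t u : ℝ, 0 ≤ t → 0 ≤ u → T t (E u) = E (t + u))
    (ν : Measure ℝ) [IsFiniteMeasure ν] (hν : ∀ᵐ s ∂ν, 0 ≤ s)
    (h' : ℝ → ℂ) (hm : StronglyMeasurable h') (hint : Integrable h' ν)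
    (C : ℝ) (hC : 0 ≤ C)
    (hconv : ∀ F : ℝ → X, MemLp F (ENNReal.ofReal p) volume →
      eLpNorm (fun t => ∫ s, h' s • F (t - s) ∂ν) (ENNReal.ofReal p) volume
        ≤ ENNReal.ofReal C * eLpNorm F (ENNReal.ofReal p) volume)
    (w : ℝ) (hw : 0 < w) :
    ‖∫ s, h' s • (Kf w s • E s) ∂ν‖ ≤ M * C * B * w := by
  have hM0 : 0 ≤ M := le_trans (norm_nonneg (T 0)) (hM 0 le_rfl)
  set q := ENNReal.ofReal p with hq
  have hp0 : (0:ℝ) ≤ p := by linarith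
  have hqt : q.toReal = p := ENNReal.toReal_ofReal hp0
  have hq0 : q ≠ 0 := by
    simp only [hq, ne_eq, ENNReal.ofReal_eq_zero, not_le]; linarith
  have hqtop : q ≠ ⊤ := ENNReal.ofReal_ne_top
  have hq1 : 1 ≤ q := by
    rw [hq, ← ENNReal.ofReal_one]; exact ENNReal.ofReal_le_ofReal (by linarith)
  -- the transferred function F
  set F : ℝ → X := (Set.Icc (-w) 0).indicator (fun r => E (-r)) with hF
  have hFsm : StronglyMeasurable F :=
    ((hEc.comp continuous_neg).stronglyMeasurable).indicator measurableSet_Icc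
  have hFB : ∀ r, ‖F r‖ ≤ B := by
    intro r
    by_cases hr : r ∈ Set.Icc (-w) 0
    · rw [hF, Set.indicator_of_mem hr]; exact hEb _
    · rw [hF, Set.indicator_of_notMem hr, norm_zero]; exact hB
  have hFb : ∀ r, ‖F r‖ ≤ ‖(Set.Icc (-w) 0).indicator (fun _ => B) r‖ := by
    intro r
    by_cases hr : r ∈ Set.Icc (-w) 0
    · rw [hF, Set.indicator_of_mem hr, Set.indicator_of_mem hr]
      exact (hEb _).trans (le_abs_self B)
    · rw [hF, Set.indicator_of_notMem hr, Set.indicator_of_notMem hr, norm_zero,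
        norm_zero]
  have hvolIcc : volume (Set.Icc (-w) (0:ℝ)) = ENNReal.ofReal w := by
    rw [Real.volume_Icc]; norm_num
  have hFmem : MemLp F q volume := by
    apply MemLp.of_le (memLp_indicator_const q measurableSet_Icc B
      (Or.inr (by rw [hvolIcc]; exact ENNReal.ofReal_ne_top)))
      hFsm.aestronglyMeasurable (ae_of_all _ hFb)
  have hFnorm : eLpNorm F q volume ≤ ENNReal.ofReal B * ENNReal.ofReal w ^ (1/p) := by
    calc eLpNorm F q volume
        ≤ eLpNorm ((Set.Icc (-w) 0).indicator (fun _ => B)) q volume := eLpNorm_mono hFb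
      _ = ‖B‖₊ * (volume (Set.Icc (-w) (0:ℝ))) ^ (1/q.toReal) :=
          eLpNorm_indicator_const measurableSet_Icc hq0 hqtop
      _ = ENNReal.ofReal B * ENNReal.ofReal w ^ (1/p) := by
          rw [hvolIcc, hqt, ← Real.enorm_eq_ofReal hB]; rfl
  -- G = μ * F
  set G : ℝ → X := fun t => ∫ s, h' s • F (t - s) ∂ν with hG
  have hGsm : StronglyMeasurable G := by
    apply StronglyMeasurable.integral_prod_right (f := fun t s => h' s • F (t - s))
    exact (hm.comp_measurable measurable_snd).smul
      (hFsm.comp_measurable (measurable_fst.sub measurable_snd))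
  have hGle : eLpNorm G q volume
      ≤ ENNReal.ofReal C * (ENNReal.ofReal B * ENNReal.ofReal w ^ (1/p)) :=
    (hconv F hFmem).trans (mul_le_mul_right hFnorm _)
  set c0 : ℝ := (∫ s, ‖h' s‖ ∂ν) * B with hc0
  have hGb : ∀ t, ‖G t‖ ≤ c0 := by
    intro t
    calc ‖G t‖ ≤ ∫ s, ‖h' s • F (t - s)‖ ∂ν := norm_integral_le_integral_norm _
      _ ≤ ∫ s, ‖h' s‖ * B ∂ν := by
          apply integral_mono_of_nonneg (ae_of_all _ fun s => norm_nonneg _)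
            (hint.norm.mul_const B)
          refine ae_of_all _ fun s => ?_
          show ‖h' s • F (t - s)‖ ≤ ‖h' s‖ * B
          rw [norm_smul]
          exact mul_le_mul_of_nonneg_left (hFB _) (norm_nonneg _)
      _ = c0 := by rw [hc0, integral_mul_const]
  have hInner : ∀ t : ℝ, Integrable (fun s => h' s • F (t - s)) ν := by
    intro t
    apply Integrable.mono' (hint.norm.mul_const B)
    · exact (hm.aestronglyMeasurable).smul
        ((hFsm.comp_measurable (measurable_const.sub measurable_id)).aestronglyMeasurable)
    · refine ae_of_all _ fun s => ?_
      show ‖h' s • F (t - s)‖ ≤ ‖h' s‖ * B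
      rw [norm_smul]
      exact mul_le_mul_of_nonneg_left (hFB _) (norm_nonneg _)
  -- nice product integrand
  set f : ℝ → ℝ → X := fun t s =>
    ((Set.Icc (0:ℝ) w).indicator (fun _ => (1:ℝ)) (s - t)) • (h' s • E s) with hf
  have hfsm : StronglyMeasurable (Function.uncurry f) := by
    apply StronglyMeasurable.smul (𝕜 := ℝ)
    · exact (((Measurable.indicator measurable_const measurableSet_Icc)).comp
        (measurable_snd.sub measurable_fst)).stronglyMeasurable
    · exact (hm.comp_measurable measurable_snd).smul
        (hEc.stronglyMeasurable.comp_measurable measurable_snd)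
  have hfb : ∀ t s, ‖f t s‖ ≤ ‖h' s‖ * B := by
    intro t s
    rw [hf]
    simp only []
    rw [norm_smul, norm_smul]
    have h1 : ‖(Set.Icc (0:ℝ) w).indicator (fun _ => (1:ℝ)) (s - t)‖ ≤ 1 := by
      by_cases hm2 : s - t ∈ Set.Icc (0:ℝ) w
      · rw [Set.indicator_of_mem hm2]; norm_num
      · rw [Set.indicator_of_notMem hm2]; norm_num
    calc ‖(Set.Icc (0:ℝ) w).indicator (fun _ => (1:ℝ)) (s - t)‖ * (‖h' s‖ * ‖E s‖)
        ≤ 1 * (‖h' s‖ * B) := by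
          apply mul_le_mul h1 (mul_le_mul_of_nonneg_left (hEb s) (norm_nonneg _))
            (by positivity) (by norm_num)
      _ = ‖h' s‖ * B := one_mul _
  have hprod : Integrable (Function.uncurry f)
      ((volume.restrict (Set.Icc (0:ℝ) w)).prod ν) := by
    rw [integrable_prod_iff hfsm.aestronglyMeasurable]
    constructor
    · refine ae_of_all _ fun t => ?_
      apply Integrable.mono' (hint.norm.mul_const B)
      · exact (hfsm.comp_measurable measurable_prodMk_left).aestronglyMeasurable
      · exact ae_of_all _ fun s => hfb t s
    · apply Integrable.mono' (integrable_const c0)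
      · exact (StronglyMeasurable.integral_prod_right
          (f := fun t s => ‖f t s‖) hfsm.norm).aestronglyMeasurable
      · refine ae_of_all _ fun t => ?_
        rw [Real.norm_of_nonneg (integral_nonneg fun s => norm_nonneg _)]
        refine le_of_le_of_eq (integral_mono_of_nonneg (ae_of_all _ fun s => norm_nonneg _)
          (hint.norm.mul_const B) (ae_of_all _ fun s => hfb t s)) ?_
        rw [hc0, integral_mul_const]
  -- the transference identity
  have hid : ∫ t in Set.Icc (0:ℝ) w, T t (G t) ∂volume
      = ∫ s, h' s • (Kf w s • E s) ∂ν := by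
    have step1 : ∀ᵐ t ∂volume, t ∈ Set.Icc (0:ℝ) w →
        T t (G t) = ∫ s, f t s ∂ν := by
      refine ae_of_all _ fun t ht => ?_
      have ht0 : (0:ℝ) ≤ t := ht.1
      rw [hG]
      simp only []
      rw [← ContinuousLinearMap.integral_comp_comm (T t) (hInner t)]
      apply integral_congr_ae
      filter_upwards [hν] with s hs0
      rw [ContinuousLinearMap.map_smul]
      by_cases hmem : s - t ∈ Set.Icc (0:ℝ) w
      · have hmem' : t - s ∈ Set.Icc (-w) (0:ℝ) := by
          simp only [Set.mem_Icc] at hmem ⊢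
          constructor <;> linarith [hmem.1, hmem.2]
        rw [hF]
        rw [Set.indicator_of_mem hmem']
        have hneg : -(t - s) = s - t := by ring
        rw [hneg]
        rw [hTE t (s - t) ht0 hmem.1]
        have hts : t + (s - t) = s := by ring
        rw [hts, hf]
        simp only []
        rw [Set.indicator_of_mem hmem, one_smul]
      · have hmem' : t - s ∉ Set.Icc (-w) (0:ℝ) := by
          simp only [Set.mem_Icc] at hmem ⊢
          intro hc
          exact hmem ⟨by linarith [hc.2], by linarith [hc.1]⟩
        rw [hF, Set.indicator_of_notMem hmem', map_zero, smul_zero, hf]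
        simp only []
        rw [Set.indicator_of_notMem hmem, zero_smul]
    rw [setIntegral_congr_ae measurableSet_Icc step1]
    rw [MeasureTheory.integral_integral_swap hprod]
    apply integral_congr_ae
    filter_upwards [hν] with s hs0
    have hsc : ∫ t in Set.Icc (0:ℝ) w, f t s ∂volume
        = (∫ t in Set.Icc (0:ℝ) w,
            (Set.Icc (0:ℝ) w).indicator (fun _ => (1:ℝ)) (s - t) ∂volume)
          • (h' s • E s) := integral_smul_const _ _
    rw [hsc, K_as_integral, smul_comm]
  -- the estimate
  rw [← hid]
  have hGint : Integrable G (volume.restrict (Set.Icc (0:ℝ) w)) := by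
    apply Integrable.mono' (integrable_const c0) hGsm.aestronglyMeasurable.restrict
    exact ae_of_all _ fun t => hGb t
  calc ‖∫ t in Set.Icc (0:ℝ) w, T t (G t) ∂volume‖
      ≤ ∫ t in Set.Icc (0:ℝ) w, ‖T t (G t)‖ ∂volume := norm_integral_le_integral_norm _
    _ ≤ ∫ t in Set.Icc (0:ℝ) w, M * ‖G t‖ ∂volume := by
        apply integral_mono_of_nonneg (ae_of_all _ fun t => norm_nonneg _)
          (hGint.norm.const_mul M)
        filter_upwards [ae_restrict_mem measurableSet_Icc] with t ht
        exact le_trans (ContinuousLinearMap.le_opNorm _ _)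
          (mul_le_mul_of_nonneg_right (hM t ht.1) (norm_nonneg _))
    _ = M * ∫ t in Set.Icc (0:ℝ) w, ‖G t‖ ∂volume := integral_const_mul M _
    _ ≤ M * (C * B * w) := by
        apply mul_le_mul_of_nonneg_left _ hM0
        have e1 : ∫ t in Set.Icc (0:ℝ) w, ‖G t‖ ∂volume
            = (∫⁻ t in Set.Icc (0:ℝ) w, ‖G t‖₊ ∂volume).toReal :=
          integral_norm_eq_lintegral_enorm hGsm.aestronglyMeasurable.restrict
        have e2 : (∫⁻ t in Set.Icc (0:ℝ) w, ‖G t‖₊ ∂volume)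
            = eLpNorm G 1 (volume.restrict (Set.Icc (0:ℝ) w)) :=
          (eLpNorm_one_eq_lintegral_enorm (f := G) (μ := volume.restrict (Set.Icc (0:ℝ) w))).symm
        have e3 : eLpNorm G 1 (volume.restrict (Set.Icc (0:ℝ) w))
            ≤ eLpNorm G q (volume.restrict (Set.Icc (0:ℝ) w))
              * (volume.restrict (Set.Icc (0:ℝ) w) Set.univ) ^ (1/(1:ENNReal).toReal - 1/q.toReal) :=
          eLpNorm_le_eLpNorm_mul_rpow_measure_univ hq1 hGsm.aestronglyMeasurable.restrict
        have e4 : (volume.restrict (Set.Icc (0:ℝ) w)) Set.univ = ENNReal.ofReal w := by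
          rw [Measure.restrict_apply_univ, Real.volume_Icc, sub_zero]
        have e5 : eLpNorm G q (volume.restrict (Set.Icc (0:ℝ) w)) ≤ eLpNorm G q volume :=
          eLpNorm_mono_measure _ Measure.restrict_le_self
        have hwne : ENNReal.ofReal w ≠ 0 := by
          simp only [ne_eq, ENNReal.ofReal_eq_zero, not_le]; linarith
        have e6 : eLpNorm G 1 (volume.restrict (Set.Icc (0:ℝ) w))
            ≤ ENNReal.ofReal (C * B * w) := by
          refine le_trans e3 ?_
          rw [e4, hqt, ENNReal.toReal_one]
          calc eLpNorm G q (volume.restrict (Set.Icc (0:ℝ) w)) * ENNReal.ofReal w ^ (1/1 - 1/p)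
              ≤ (ENNReal.ofReal C * (ENNReal.ofReal B * ENNReal.ofReal w ^ (1/p)))
                * ENNReal.ofReal w ^ (1/1 - 1/p) :=
                mul_le_mul_left (le_trans e5 hGle) _
            _ = ENNReal.ofReal (C * B * w) := by
                have : (1:ℝ)/1 - 1/p = 1 - 1/p := by norm_num
                rw [this, mul_assoc, mul_assoc,
                  ← ENNReal.rpow_add _ _ hwne ENNReal.ofReal_ne_top]
                have h11 : (1:ℝ)/p + (1 - 1/p) = 1 := by ring
                rw [h11, ENNReal.rpow_one, ← ENNReal.ofReal_mul hB,
                  ← ENNReal.ofReal_mul hC, ← mul_assoc]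
        rw [e1, e2]
        refine le_trans (ENNReal.toReal_mono ENNReal.ofReal_ne_top e6) ?_
        rw [ENNReal.toReal_ofReal (by positivity)]
    _ = M * C * B * w := by ring

end TransferenceProofAux

open TransferenceProofAux

set_option maxHeartbeats 1000000 in
/-- **Transference for uniformly bounded `C₀`-semigroups (Corollary 4.3).**
For every `p ∈ (1,∞)` there is `c_p ≥ 0` such that for every `C₀`-semigroup
with `‖T(s)‖ ≤ M` for all `s ≥ 0`, every `0 < a < b`, every finite complex
Borel measure `μ = h·ν` supported in `[a,b]`, and every
`L^p(ℝ;X)`-convolution bound `C` for `μ`: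
`‖T_μ x‖ ≤ c_p M² (1 + log(b/a)) C ‖x‖`. -/
theorem transference_semigroup_bounded (p : ℝ) (hp : 1 < p) :
    ∃ c : ℝ, 0 ≤ c ∧
      ∀ (X : Type*) [NormedAddCommGroup X] [NormedSpace ℂ X] [CompleteSpace X],
      ∀ T : ℝ → X →L[ℂ] X,
        T 0 = 1 →
        (∀ s ≥ (0:ℝ), ∀ t ≥ (0:ℝ), T (s + t) = (T s).comp (T t)) →
        (∀ x : X, ContinuousOn (fun s => T s x) (Set.Ici 0)) →
      ∀ M : ℝ, (∀ s : ℝ, 0 ≤ s → ‖T s‖ ≤ M) →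
      ∀ a b : ℝ, 0 < a → a < b →
      ∀ ν : Measure ℝ, IsFiniteMeasure ν → ν (Set.Icc a b)ᶜ = 0 →
      ∀ h : ℝ → ℂ, Integrable h ν →
      ∀ C : ℝ, 0 ≤ C →
        (∀ F : ℝ → X, MemLp F (ENNReal.ofReal p) volume →
          eLpNorm (fun t => ∫ s, h s • F (t - s) ∂ν) (ENNReal.ofReal p) volume
            ≤ ENNReal.ofReal C * eLpNorm F (ENNReal.ofReal p) volume) →
      ∀ x : X,
        ‖∫ s, h s • T s x ∂ν‖ ≤ c * M ^ 2 * (1 + Real.log (b / a)) * C * ‖x‖ := by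
  refine ⟨4, by norm_num, ?_⟩
  intro X _ _ _ T hT0 hTmul hTcont M hM a b ha hab ν hνfin hνsupp h hh C hC hconv x
  have hb : 0 < b := ha.trans hab
  have hM0 : 0 ≤ M := le_trans (norm_nonneg (T 0)) (hM 0 le_rfl)
  -- measurable representative of h
  set h' : ℝ → ℂ := (hh.aestronglyMeasurable).mk h with hh'def
  have hsm : StronglyMeasurable h' := (hh.aestronglyMeasurable).stronglyMeasurable_mk
  have heq : h =ᵐ[ν] h' := (hh.aestronglyMeasurable).ae_eq_mk
  have hh' : Integrable h' ν := hh.congr heq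
  -- support facts
  have hν_ae : ∀ᵐ s ∂ν, s ∈ Set.Icc a b := by
    have he : {s : ℝ | ¬ s ∈ Set.Icc a b} = (Set.Icc a b)ᶜ := rfl
    rw [MeasureTheory.ae_iff, he, hνsupp]
  have hν0 : ∀ᵐ s ∂ν, (0:ℝ) ≤ s := by
    filter_upwards [hν_ae] with s hs
    linarith [hs.1]
  -- the extended orbit map
  set E : ℝ → X := fun s => T (max s 0) x with hEdef
  have hEc : Continuous E := by
    apply (hTcont x).comp_continuous (continuous_id.max continuous_const)
    intro s; exact Set.mem_Ici.2 (le_max_right s 0)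
  set B : ℝ := M * ‖x‖ with hBdef
  have hB : 0 ≤ B := mul_nonneg hM0 (norm_nonneg x)
  have hEb : ∀ s, ‖E s‖ ≤ B :=
    fun s => le_trans ((T _).le_opNorm x)
      (mul_le_mul_of_nonneg_right (hM _ (le_max_right _ _)) (norm_nonneg x))
  have hEeq : ∀ s : ℝ, 0 ≤ s → E s = T s x := by
    intro s hs; rw [hEdef]; simp only []; rw [max_eq_left hs]
  have hTE : ∀ t u : ℝ, 0 ≤ t → 0 ≤ u → T t (E u) = E (t + u) := by
    intro t u ht hu
    rw [hEeq u hu, hEeq (t + u) (by linarith)]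
    rw [hTmul t ht u hu]
    rfl
  -- convolution bound for h'
  have hconv' : ∀ F : ℝ → X, MemLp F (ENNReal.ofReal p) volume →
      eLpNorm (fun t => ∫ s, h' s • F (t - s) ∂ν) (ENNReal.ofReal p) volume
        ≤ ENNReal.ofReal C * eLpNorm F (ENNReal.ofReal p) volume := by
    intro F hF
    have hfun : (fun t => ∫ s, h' s • F (t - s) ∂ν)
        = fun t => ∫ s, h s • F (t - s) ∂ν := by
      funext t
      apply integral_congr_ae
      filter_upwards [heq] with s hs
      rw [hs]
    rw [hfun]
    exact hconv F hF
  -- rewrite the goal integral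
  have hY : ∫ s, h s • T s x ∂ν = ∫ s, h' s • E s ∂ν := by
    apply integral_congr_ae
    filter_upwards [heq, hν0] with s h1 h2
    rw [h1, hEeq s h2]
  rw [hY]
  set Y : X := ∫ s, h' s • E s ∂ν with hYdef
  -- box estimates
  have hbox : ∀ w : ℝ, 0 < w →
      ‖∫ s, h' s • (Kf w s • E s) ∂ν‖ ≤ M * C * B * w :=
    fun w hw => box p hp T M hM E hEc B hB hEb hTE ν hν0 h' hsm hh' C hC hconv' w hw
  -- the product function for the w-integral
  set Φ : ℝ → ℝ → X := fun w s => ((w^2)⁻¹ : ℝ) • (h' s • (Kf w s • E s)) with hΦdef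
  have hKcont : Continuous fun z : ℝ × ℝ => Kf z.1 z.2 := by
    unfold Kf; fun_prop
  have hΦsm : StronglyMeasurable (Function.uncurry Φ) := by
    apply StronglyMeasurable.smul (𝕜 := ℝ)
    · exact ((measurable_fst.pow_const 2).inv).stronglyMeasurable
    · apply StronglyMeasurable.smul (hsm.comp_measurable measurable_snd)
      apply StronglyMeasurable.smul (𝕜 := ℝ)
      · exact hKcont.measurable.stronglyMeasurable
      · exact hEc.stronglyMeasurable.comp_measurable measurable_snd
  have hΦb : ∀ w s : ℝ, 0 < w → ‖Φ w s‖ ≤ w⁻¹ * (‖h' s‖ * B) := by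
    intro w s hw
    rw [hΦdef]
    simp only []
    rw [norm_smul, norm_smul, norm_smul]
    have h1 : ‖((w^2)⁻¹ : ℝ)‖ = (w^2)⁻¹ := Real.norm_of_nonneg (by positivity)
    have h2 : ‖Kf w s‖ = Kf w s := Real.norm_of_nonneg (Kf_nonneg w s)
    rw [h1, h2]
    have h3 : Kf w s * ‖E s‖ ≤ w * B :=
      mul_le_mul (Kf_le w s hw.le) (hEb s) (norm_nonneg _) hw.le
    calc (w^2)⁻¹ * (‖h' s‖ * (Kf w s * ‖E s‖))
        ≤ (w^2)⁻¹ * (‖h' s‖ * (w * B)) := by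
          apply mul_le_mul_of_nonneg_left
            (mul_le_mul_of_nonneg_left h3 (norm_nonneg _)) (by positivity)
      _ = w⁻¹ * (‖h' s‖ * B) := by field_simp
  have ha2 : 0 < a / 2 := by linarith
  have ha2b : a / 2 ≤ b := by linarith
  -- integrability of Φ on the product
  have hΦprod : Integrable (Function.uncurry Φ)
      ((volume.restrict (Set.Ioc (a/2) b)).prod ν) := by
    rw [integrable_prod_iff hΦsm.aestronglyMeasurable]
    constructor
    · filter_upwards [ae_restrict_mem measurableSet_Ioc] with w hw
      apply Integrable.mono' ((hh'.norm.mul_const B).const_mul (w⁻¹))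
      · exact (hΦsm.comp_measurable measurable_prodMk_left).aestronglyMeasurable
      · exact ae_of_all _ fun s => hΦb w s (lt_trans ha2 hw.1)
    · apply Integrable.mono' (integrable_const ((a/2)⁻¹ * ((∫ s, ‖h' s‖ ∂ν) * B)))
      · exact (StronglyMeasurable.integral_prod_right
          (f := fun w s => ‖Φ w s‖) hΦsm.norm).aestronglyMeasurable
      · filter_upwards [ae_restrict_mem measurableSet_Ioc] with w hw
        have hw0 : 0 < w := lt_trans ha2 hw.1
        rw [Real.norm_of_nonneg (integral_nonneg fun s => norm_nonneg _)]
        calc ∫ s, ‖Φ w s‖ ∂ν ≤ ∫ s, w⁻¹ * (‖h' s‖ * B) ∂ν := by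
              apply integral_mono_of_nonneg (ae_of_all _ fun s => norm_nonneg _)
                ((hh'.norm.mul_const B).const_mul (w⁻¹))
              exact ae_of_all _ fun s => hΦb w s hw0
          _ = w⁻¹ * ((∫ s, ‖h' s‖ ∂ν) * B) := by
              rw [integral_const_mul, integral_mul_const]
          _ ≤ (a/2)⁻¹ * ((∫ s, ‖h' s‖ ∂ν) * B) := by
              apply mul_le_mul_of_nonneg_right
              · exact inv_anti₀ ha2 hw.1.le
              · positivity
  -- the w-integral term
  set Z : X := ∫ w in Set.Ioc (a/2) b, ((w^2)⁻¹ : ℝ) • (∫ s, h' s • (Kf w s • E s) ∂ν) ∂volume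
    with hZdef
  -- key identity
  have hIdent : (2 * Real.log 2) • Y
      = Z + b⁻¹ • (∫ s, h' s • (Kf b s • E s) ∂ν) := by
    -- rewrite Z by swapping
    have hZ1 : Z = ∫ w in Set.Ioc (a/2) b, ∫ s, Φ w s ∂ν ∂volume := by
      rw [hZdef]
      apply setIntegral_congr_ae measurableSet_Ioc
      refine ae_of_all _ fun w hw => ?_
      exact (integral_smul ((w^2)⁻¹ : ℝ) _).symm
    have hZ2 : Z = ∫ s, ∫ w in Set.Ioc (a/2) b, Φ w s ∂volume ∂ν := by
      rw [hZ1]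
      exact MeasureTheory.integral_integral_swap hΦprod
    -- compute inner w-integral
    have hinner : ∀ s : ℝ, ∫ w in Set.Ioc (a/2) b, Φ w s ∂volume
        = (∫ w in Set.Ioc (a/2) b, Kf w s * (w^2)⁻¹ ∂volume) • (h' s • E s) := by
      intro s
      rw [← integral_smul_const]
      apply setIntegral_congr_ae measurableSet_Ioc
      refine ae_of_all _ fun w hw => ?_
      rw [hΦdef]
      simp only []
      exact rearr ((w^2)⁻¹) (Kf w s) (h' s) (E s)
    -- pointwise decomposition of the constant
    have hdecomp : ∀ᵐ s ∂ν, (2 * Real.log 2) • (h' s • E s)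
        = (∫ w in Set.Ioc (a/2) b, Kf w s * (w^2)⁻¹ ∂volume) • (h' s • E s)
          + (b⁻¹ * Kf b s) • (h' s • E s) := by
      filter_upwards [hν_ae] with s hs
      rw [← add_smul]
      congr 1
      have hSI := S1 a b s ha hs.1 hs.2
      rw [intervalIntegral.integral_of_le ha2b] at hSI
      linarith [hSI]
    -- integrability of the two pieces
    have hI1 : Integrable
        (fun s => (∫ w in Set.Ioc (a/2) b, Kf w s * (w^2)⁻¹ ∂volume) • (h' s • E s)) ν := by
      have hint2 := hΦprod.integral_prod_right
      apply hint2.congr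
      refine ae_of_all _ fun s => ?_
      show (∫ w in Set.Ioc (a/2) b, Φ w s ∂volume) = _
      rw [hinner s]
    have hI2 : Integrable (fun s => (b⁻¹ * Kf b s) • (h' s • E s)) ν := by
      apply Integrable.mono' ((hh'.norm.mul_const B).const_mul 1)
      · exact (((continuous_const.mul (hKcont.comp
            (continuous_const.prodMk continuous_id))).stronglyMeasurable).smul
            (hsm.smul hEc.stronglyMeasurable)).aestronglyMeasurable
      · refine ae_of_all _ fun s => ?_
        show ‖(b⁻¹ * Kf b s) • (h' s • E s)‖ ≤ 1 * (‖h' s‖ * B)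
        rw [norm_smul, norm_smul]
        have h1 : ‖(b⁻¹ * Kf b s : ℝ)‖ ≤ 1 := by
          rw [Real.norm_of_nonneg (mul_nonneg (inv_nonneg.2 hb.le) (Kf_nonneg b s))]
          rw [mul_comm, ← div_eq_mul_inv]
          exact div_le_one_of_le₀ (Kf_le b s hb.le) hb.le
        calc ‖(b⁻¹ * Kf b s : ℝ)‖ * (‖h' s‖ * ‖E s‖)
            ≤ 1 * (‖h' s‖ * B) := by
              apply mul_le_mul h1 (mul_le_mul_of_nonneg_left (hEb s) (norm_nonneg _))
                (by positivity) (by norm_num)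
          _ = 1 * (‖h' s‖ * B) := rfl
    -- put together
    have hYs : (2 * Real.log 2) • Y = ∫ s, (2 * Real.log 2) • (h' s • E s) ∂ν := by
      rw [hYdef]; exact (integral_smul _ _).symm
    rw [hYs, integral_congr_ae hdecomp, integral_add hI1 hI2, hZ2]
    congr 1
    · apply integral_congr_ae
      refine ae_of_all _ fun s => (hinner s).symm
    · rw [← integral_smul]
      apply integral_congr_ae
      refine ae_of_all _ fun s => ?_
      show (b⁻¹ * Kf b s) • (h' s • E s) = b⁻¹ • (h' s • (Kf b s • E s))
      rw [mul_comm]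
      exact (rearr b⁻¹ (Kf b s) (h' s) (E s)).symm
  -- estimates
  have hJb : ‖b⁻¹ • (∫ s, h' s • (Kf b s • E s) ∂ν)‖ ≤ M * C * B := by
    rw [norm_smul, Real.norm_of_nonneg (by positivity)]
    calc b⁻¹ * ‖∫ s, h' s • (Kf b s • E s) ∂ν‖
        ≤ b⁻¹ * (M * C * B * b) :=
          mul_le_mul_of_nonneg_left (hbox b hb) (by positivity)
      _ = M * C * B := by field_simp
  have hZb : ‖Z‖ ≤ M * C * B * Real.log (b / (a/2)) := by
    have hlog : ∫ w in Set.Ioc (a/2) b, w⁻¹ ∂volume = Real.log (b / (a/2)) := by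
      rw [← intervalIntegral.integral_of_le ha2b]
      exact integral_inv_of_pos ha2 hb
    calc ‖Z‖ ≤ ∫ w in Set.Ioc (a/2) b,
          ‖((w^2)⁻¹ : ℝ) • (∫ s, h' s • (Kf w s • E s) ∂ν)‖ ∂volume :=
        norm_integral_le_integral_norm _
      _ ≤ ∫ w in Set.Ioc (a/2) b, (M * C * B) * w⁻¹ ∂volume := by
          apply integral_mono_of_nonneg (ae_of_all _ fun w => norm_nonneg _)
          · apply Integrable.const_mul
            apply (ContinuousOn.integrableOn_Icc ?_).mono_set Set.Ioc_subset_Icc_self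
            apply ContinuousOn.inv₀ continuousOn_id
            intro w hw
            have : 0 < w := lt_of_lt_of_le ha2 hw.1
            exact this.ne'
          · filter_upwards [ae_restrict_mem measurableSet_Ioc] with w hw
            have hw0 : 0 < w := lt_trans ha2 hw.1
            rw [norm_smul, Real.norm_of_nonneg (by positivity : (0:ℝ) ≤ (w^2)⁻¹)]
            calc (w^2)⁻¹ * ‖∫ s, h' s • (Kf w s • E s) ∂ν‖
                ≤ (w^2)⁻¹ * (M * C * B * w) :=
                  mul_le_mul_of_nonneg_left (hbox w hw0) (by positivity)
              _ = (M * C * B) * w⁻¹ := by field_simp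
      _ = (M * C * B) * Real.log (b / (a/2)) := by
          rw [integral_const_mul, hlog]
  -- numerical conclusion
  have hlog2 : (0.6931471803:ℝ) < Real.log 2 := Real.log_two_gt_d9
  have hL : 0 ≤ Real.log (b / a) := Real.log_nonneg ((one_le_div ha).2 hab.le)
  have hsplit : Real.log (b / (a/2)) = Real.log 2 + Real.log (b / a) := by
    have : b / (a/2) = 2 * (b / a) := by field_simp
    rw [this, Real.log_mul two_ne_zero (by positivity)]
  have hmain : (2 * Real.log 2) * ‖Y‖ ≤ M * C * B * (Real.log 2 + Real.log (b / a) + 1) := by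
    have h1 : ‖(2 * Real.log 2) • Y‖ = (2 * Real.log 2) * ‖Y‖ := by
      rw [norm_smul, Real.norm_of_nonneg (by nlinarith [hlog2] : (0:ℝ) ≤ 2 * Real.log 2)]
    calc (2 * Real.log 2) * ‖Y‖ = ‖(2 * Real.log 2) • Y‖ := h1.symm
      _ = ‖Z + b⁻¹ • (∫ s, h' s • (Kf b s • E s) ∂ν)‖ := by rw [hIdent]
      _ ≤ ‖Z‖ + ‖b⁻¹ • (∫ s, h' s • (Kf b s • E s) ∂ν)‖ := norm_add_le _ _
      _ ≤ M * C * B * Real.log (b / (a/2)) + M * C * B := add_le_add hZb hJb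
      _ = M * C * B * (Real.log 2 + Real.log (b / a) + 1) := by rw [hsplit]; ring
  -- finish
  have hQ : 0 ≤ M * C * B := by positivity
  have hkey : Real.log 2 + Real.log (b / a) + 1
      ≤ 8 * Real.log 2 * (1 + Real.log (b / a)) := by
    nlinarith [hlog2, hL,
      mul_nonneg hL (show (0:ℝ) ≤ 8 * Real.log 2 - 1 by nlinarith [hlog2])]
  have hgoal : M * C * B * (Real.log 2 + Real.log (b / a) + 1)
      ≤ (2 * Real.log 2) * (4 * M ^ 2 * (1 + Real.log (b / a)) * C * ‖x‖) := by
    calc M * C * B * (Real.log 2 + Real.log (b / a) + 1)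
        ≤ M * C * B * (8 * Real.log 2 * (1 + Real.log (b / a))) :=
          mul_le_mul_of_nonneg_left hkey hQ
      _ = (2 * Real.log 2) * (4 * M ^ 2 * (1 + Real.log (b / a)) * C * ‖x‖) := by
          rw [hBdef]; ring
  have h2l2 : 0 < 2 * Real.log 2 := by nlinarith [hlog2]
  have := le_trans hmain hgoal
  exact le_of_mul_le_mul_left this h2l2
end

section
/- Let p ∈ (1,∞). Then there is a constant c_p ≥ 0 such that the following holds: whenever X is a Banach space, T ∈ L(X), a, b ∈ ℤ with 1 ≤ a ≤ b, M(b) := sup_{0≤n≤b} ‖Tⁿ‖, μ : ℤ → ℂ is a sequence supported in { n ∈ ℤ : a ≤ n ≤ b }, and C ≥ 0 is an ℓ^p(ℤ;X)-convolution bound for μ, then ‖Σ_{n=a}^{b} μ(n) Tⁿ‖ ≤ c_p (1 + log(b/a)) M(b)² C. -/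
open MeasureTheory Finset
open scoped ENNReal NNReal

noncomputable section
namespace TransferenceAux

structure Pc where
  A : ℤ
  u : ℤ
  v : ℤ
  lam : ℝ

instance : Inhabited Pc := ⟨⟨1, 0, 0, 0⟩⟩

/-- number of n in [u,v] with k ≤ n ≤ k + A - 1 -/
def Pc.cnt (P : Pc) (k : ℤ) : ℕ := ((Finset.Icc P.u P.v) ∩ (Finset.Icc k (k + P.A - 1))).card

def Pc.valid (b : ℤ) (P : Pc) : Prop :=
  1 ≤ P.A ∧ P.A - 1 ≤ P.u ∧ P.u ≤ P.v ∧ P.v ≤ P.A - 1 + b ∧ P.A ≤ P.v - P.u + 1 ∧ 0 ≤ P.lam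

lemma Pc.cnt_eq (P : Pc) (k : ℤ) :
    (P.cnt k : ℤ) = (min P.v (k + P.A - 1) + 1 - max P.u k).toNat := by
  have h : (Finset.Icc P.u P.v) ∩ (Finset.Icc k (k + P.A - 1))
      = Finset.Icc (max P.u k) (min P.v (k + P.A - 1)) := by
    ext n
    simp only [Finset.mem_inter, Finset.mem_Icc, le_min_iff, max_le_iff]
    omega
  rw [Pc.cnt, h, Int.card_Icc]

def gnum (c A k : ℤ) : ℤ := max 0 (A - max 0 (k - c))

def build (b : ℤ) : ℕ → ℤ → ℤ → List Pc
  | 0, c, A => [⟨A, c + A, b + A - 1, 1⟩]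
  | f+1, c, A =>
    if b - c ≤ 4*A then [⟨A, c + A, b + A - 1, 1⟩] else
      ⟨A, c + A, c + 2*A - 1, 1/2⟩ :: ⟨2*A, c + 2*A, c + 4*A - 1, 1⟩ :: build b f (c + 2*A) (2*A)

lemma build_valid (b : ℤ) : ∀ (f : ℕ) (c A : ℤ), 1 ≤ A → 0 ≤ c → A ≤ b - c →
    ∀ P ∈ build b f c A, P.valid b := by
  intro f
  induction f with
  | zero =>
    intro c A hA hc hbc P hP
    simp only [build, List.mem_singleton] at hP
    subst hP
    refine ⟨hA, ?_, ?_, ?_, ?_, by norm_num⟩ <;> dsimp only <;> omega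
  | succ f ih =>
    intro c A hA hc hbc P hP
    rw [build] at hP
    by_cases hle : b - c ≤ 4*A
    · rw [if_pos hle] at hP
      simp only [List.mem_singleton] at hP
      subst hP
      refine ⟨hA, ?_, ?_, ?_, ?_, by norm_num⟩ <;> dsimp only <;> omega
    · rw [if_neg hle] at hP
      push_neg at hle
      simp only [List.mem_cons] at hP
      rcases hP with hP | hP | hP
      · subst hP
        refine ⟨hA, ?_, ?_, ?_, ?_, by norm_num⟩ <;> dsimp only <;> omega
      · subst hP
        refine ⟨?_, ?_, ?_, ?_, ?_, by norm_num⟩ <;> dsimp only <;> omega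
      · exact ih (c + 2*A) (2*A) (by omega) (by omega) (by omega) P hP

lemma build_sum (b : ℤ) : ∀ (f : ℕ) (c A : ℤ), 1 ≤ A → A ≤ b - c → b - c ≤ 4*A*2^f →
    ∀ k : ℤ, k ≤ b →
    ((build b f c A).map (fun P => P.lam * ((P.cnt k : ℝ) / P.A))).sum
      = 1 - (gnum c A k : ℝ)/A := by
  intro f
  induction f with
  | zero =>
    intro c A hA hbc hcap k hk
    simp only [build, List.map_cons, List.map_nil, List.sum_cons, List.sum_nil, add_zero, one_mul]
    have hAne : (A : ℝ) ≠ 0 := by exact_mod_cast (by omega : A ≠ 0)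
    have hcnt : ((Pc.cnt ⟨A, c + A, b + A - 1, 1⟩ k : ℤ)) = A - gnum c A k := by
      rw [Pc.cnt_eq]
      simp only [gnum]
      omega
    have : ((Pc.cnt ⟨A, c + A, b + A - 1, 1⟩ k : ℝ)) = (A : ℝ) - (gnum c A k : ℝ) := by
      exact_mod_cast congrArg (Int.cast : ℤ → ℝ) hcnt
    rw [this]
    field_simp
  | succ f ih =>
    intro c A hA hbc hcap k hk
    rw [build]
    by_cases hle : b - c ≤ 4*A
    · rw [if_pos hle]
      simp only [List.map_cons, List.map_nil, List.sum_cons, List.sum_nil, add_zero, one_mul]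
      have hcnt : ((Pc.cnt ⟨A, c + A, b + A - 1, 1⟩ k : ℤ)) = A - gnum c A k := by
        rw [Pc.cnt_eq]
        simp only [gnum]
        omega
      have : ((Pc.cnt ⟨A, c + A, b + A - 1, 1⟩ k : ℝ)) = (A : ℝ) - (gnum c A k : ℝ) := by
        exact_mod_cast congrArg (Int.cast : ℤ → ℝ) hcnt
      rw [this]
      field_simp
    · rw [if_neg hle]
      push_neg at hle
      have h2f : (0 : ℤ) < 2^f := pow_pos (by norm_num) f
      have hrec := ih (c + 2*A) (2*A) (by omega) (by omega)
        (by
          have h1 : (4 * A * 2^(f+1) : ℤ) = 8 * A * 2^f := by ring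
          have h2 : (4 * (2*A) * 2^f : ℤ) = 8 * A * 2^f := by ring
          omega) k hk
      simp only [List.map_cons, List.sum_cons, hrec]
      set ct := (Pc.cnt ⟨A, c + A, c + 2*A - 1, 1/2⟩ k : ℤ) with hctdef
      set cm := (Pc.cnt ⟨2*A, c + 2*A, c + 4*A - 1, 1⟩ k : ℤ) with hcmdef
      have hkey : ct + cm + 2 * gnum c A k = gnum (c + 2*A) (2*A) k := by
        rw [hctdef, hcmdef, Pc.cnt_eq, Pc.cnt_eq]
        simp only [gnum]
        omega
      have hAne : (A : ℝ) ≠ 0 := by exact_mod_cast (by omega : A ≠ 0)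
      have hkeyR : (ct : ℝ) + (cm : ℝ) + 2 * (gnum c A k : ℝ) = (gnum (c + 2*A) (2*A) k : ℝ) := by
        exact_mod_cast congrArg (Int.cast : ℤ → ℝ) hkey
      have hct : ((Pc.cnt ⟨A, c + A, c + 2*A - 1, 1/2⟩ k : ℝ)) = (ct : ℝ) := by
        rw [hctdef]; push_cast; ring
      have hcm : ((Pc.cnt ⟨2*A, c + 2*A, c + 4*A - 1, 1⟩ k : ℝ)) = (cm : ℝ) := by
        rw [hcmdef]; push_cast; ring
      rw [hct, hcm]
      show (1/2 : ℝ) * ((ct : ℝ) / (A : ℝ)) + ((1 : ℝ) * ((cm : ℝ) / ((2*A : ℤ) : ℝ))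
        + (1 - (gnum (c + 2*A) (2*A) k : ℝ) / ((2*A : ℤ) : ℝ))) = 1 - (gnum c A k : ℝ)/A
      push_cast
      field_simp
      linear_combination hkeyR


def kap : ℝ := 3 / (2 * Real.log 2)

lemma kap_pos : 0 < kap := by
  have := Real.log_pos (by norm_num : (1:ℝ) < 2)
  unfold kap; positivity

lemma kap_le : kap ≤ 3 := by
  have h9 := Real.log_two_gt_d9
  unfold kap
  rw [div_le_iff₀ (by positivity)]
  nlinarith [h9]

def cost (P : Pc) : ℝ := P.lam * ((P.v : ℝ) - P.u + 1) / P.A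

lemma build_cost (b : ℤ) : ∀ (f : ℕ) (c A : ℤ), 1 ≤ A → A ≤ b - c → b - c ≤ 4*A*2^f →
    ((build b f c A).map cost).sum ≤ 4 + kap * Real.log (((b : ℝ) - c)/A) := by
  intro f
  induction f with
  | zero =>
    intro c A hA hbc hcap
    simp only [build, List.map_cons, List.map_nil, List.sum_cons, List.sum_nil, add_zero, cost]
    have hApos : (0 : ℝ) < (A : ℝ) := by exact_mod_cast hA
    have hlog : 0 ≤ Real.log (((b : ℝ) - c)/A) := by
      apply Real.log_nonneg
      rw [le_div_iff₀ hApos]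
      have : (A : ℝ) ≤ (b : ℝ) - c := by exact_mod_cast hbc
      linarith
    have h1 : (1 : ℝ) * (((b + A - 1 : ℤ) : ℝ) - ((c + A : ℤ) : ℝ) + 1) / (A : ℝ)
        ≤ 4 := by
      rw [div_le_iff₀ hApos]
      push_cast
      have : (b : ℝ) - c ≤ 4 * A := by exact_mod_cast (by omega : b - c ≤ 4*A)
      linarith
    calc (1 : ℝ) * (((b + A - 1 : ℤ) : ℝ) - ((c + A : ℤ) : ℝ) + 1) / (A : ℝ)
        ≤ 4 := h1
      _ ≤ 4 + kap * Real.log (((b : ℝ) - c)/A) := by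
        have := kap_pos
        nlinarith
  | succ f ih =>
    intro c A hA hbc hcap
    rw [build]
    by_cases hle : b - c ≤ 4*A
    · rw [if_pos hle]
      simp only [List.map_cons, List.map_nil, List.sum_cons, List.sum_nil, add_zero, cost]
      have hApos : (0 : ℝ) < (A : ℝ) := by exact_mod_cast hA
      have hlog : 0 ≤ Real.log (((b : ℝ) - c)/A) := by
        apply Real.log_nonneg
        rw [le_div_iff₀ hApos]
        have : (A : ℝ) ≤ (b : ℝ) - c := by exact_mod_cast hbc
        linarith
      have h1 : (1 : ℝ) * (((b + A - 1 : ℤ) : ℝ) - ((c + A : ℤ) : ℝ) + 1) / (A : ℝ)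
          ≤ 4 := by
        rw [div_le_iff₀ hApos]
        push_cast
        have : (b : ℝ) - c ≤ 4 * A := by exact_mod_cast hle
        linarith
      calc (1 : ℝ) * (((b + A - 1 : ℤ) : ℝ) - ((c + A : ℤ) : ℝ) + 1) / (A : ℝ)
          ≤ 4 := h1
        _ ≤ 4 + kap * Real.log (((b : ℝ) - c)/A) := by
          have := kap_pos
          nlinarith
    · rw [if_neg hle]
      push_neg at hle
      have h2f : (0 : ℤ) < 2^f := pow_pos (by norm_num) f
      have hrec := ih (c + 2*A) (2*A) (by omega) (by omega)
        (by
          have h1 : (4 * A * 2^(f+1) : ℤ) = 8 * A * 2^f := by ring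
          have h2 : (4 * (2*A) * 2^f : ℤ) = 8 * A * 2^f := by ring
          omega)
      simp only [List.map_cons, List.sum_cons, cost] at hrec ⊢
      have hApos : (0 : ℝ) < (A : ℝ) := by exact_mod_cast hA
      have hc1 : (1/2 : ℝ) * (((c + 2*A - 1 : ℤ) : ℝ) - ((c + A : ℤ) : ℝ) + 1) / (A : ℝ)
          = 1/2 := by
        push_cast
        field_simp
        ring
      have hc2 : (1 : ℝ) * (((c + 4*A - 1 : ℤ) : ℝ) - ((c + 2*A : ℤ) : ℝ) + 1) / ((2*A : ℤ) : ℝ)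
          = 1 := by
        push_cast
        field_simp
        ring
      rw [hc1, hc2]
      -- key log inequality
      have hx : (0 : ℝ) < ((b : ℝ) - (c + 2*A))/(2*A) := by
        have h1 : (2*A : ℝ) ≤ (b : ℝ) - (c + 2*A) := by exact_mod_cast (by omega : 2*A ≤ b - (c + 2*A))
        have h2 : (0 : ℝ) < 2*(A : ℝ) := by linarith
        apply div_pos (by linarith) h2
      have hlogstep : Real.log (((b : ℝ) - (c + 2*A))/(2*A)) + Real.log 2
          ≤ Real.log (((b : ℝ) - c)/A) := by
        rw [← Real.log_mul (by positivity) (by norm_num)]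
        apply Real.log_le_log (by positivity)
        rw [div_mul_eq_mul_div, div_le_div_iff₀ (by positivity) hApos]
        push_cast
        nlinarith [hApos]
      have hk2 : kap * Real.log 2 = 3/2 := by
        unfold kap
        have : Real.log 2 ≠ 0 := ne_of_gt (Real.log_pos (by norm_num))
        field_simp
      have hmono : kap * Real.log (((b : ℝ) - ((c + 2*A : ℤ) : ℝ))/(((2*A : ℤ)) : ℝ))
          ≤ kap * Real.log (((b : ℝ) - c)/A) - 3/2 := by
        have hcast : ((b : ℝ) - ((c + 2*A : ℤ) : ℝ))/(((2*A : ℤ)) : ℝ)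
            = ((b : ℝ) - (c + 2*A))/(2*A) := by push_cast; ring
        rw [hcast, ← hk2]
        have := mul_le_mul_of_nonneg_left hlogstep (le_of_lt kap_pos)
        linarith [this]
      linarith [hrec, hmono]


/-- The exact partition-of-unity cover of [a,b] by admissible trapezoid pieces. -/
lemma cover (a b : ℤ) (ha : 1 ≤ a) (hab : a ≤ b) :
    ∃ l : List Pc,
      (∀ P ∈ l, P.valid b) ∧
      (∀ k : ℤ, a ≤ k → k ≤ b →
        (l.map (fun P => P.lam * ((P.cnt k : ℝ) / P.A))).sum = 1) ∧
      (l.map cost).sum ≤ 6 * (1 + Real.log ((b : ℝ)/(a : ℝ))) := by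
  have haR : (0 : ℝ) < (a : ℝ) := by exact_mod_cast ha
  have hlogba : 0 ≤ Real.log ((b : ℝ)/(a : ℝ)) := by
    apply Real.log_nonneg
    rw [le_div_iff₀ haR]
    have : (a : ℝ) ≤ (b : ℝ) := by exact_mod_cast hab
    linarith
  by_cases hcase : b - a ≤ a
  · -- single piece
    refine ⟨[⟨a + 1, a, b + a, 1⟩], ?_, ?_, ?_⟩
    · intro P hP
      simp only [List.mem_singleton] at hP
      subst hP
      refine ⟨?_, ?_, ?_, ?_, ?_, by norm_num⟩ <;> dsimp only <;> omega
    · intro k hk1 hk2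
      simp only [List.map_cons, List.map_nil, List.sum_cons, List.sum_nil, add_zero]
      have hcnt : ((Pc.cnt ⟨a + 1, a, b + a, 1⟩ k : ℤ)) = a + 1 := by
        rw [Pc.cnt_eq]
        dsimp only
        omega
      have hcntR : ((Pc.cnt ⟨a + 1, a, b + a, 1⟩ k : ℝ)) = (a : ℝ) + 1 := by
        exact_mod_cast congrArg (Int.cast : ℤ → ℝ) hcnt
      try dsimp only
      rw [hcntR]
      have : ((a : ℝ) + 1) ≠ 0 := by positivity
      push_cast
      field_simp
    · simp only [List.map_cons, List.map_nil, List.sum_cons, List.sum_nil, add_zero]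
      unfold cost
      dsimp only
      have h1 : (1 : ℝ) * (((b + a : ℤ) : ℝ) - (a : ℝ) + 1) / (((a + 1 : ℤ)) : ℝ) ≤ 2 := by
        rw [div_le_iff₀ (by exact_mod_cast (by omega : (0:ℤ) < a + 1))]
        push_cast
        have : (b : ℝ) ≤ 2*(a : ℝ) := by exact_mod_cast (by omega : b ≤ 2*a)
        linarith
      push_cast at h1 ⊢
      nlinarith [hlogba]
  · -- initial piece + build
    push_neg at hcase
    set f := (b - a).toNat with hf
    set l := (⟨a + 1, a, 2*a, 1⟩ : Pc) :: build b f a (a + 1) with hl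
    have hfuel : b - a ≤ 4*(a+1)*2^f := by
      have h1 : (b - a) < 2^f := by
        rw [hf]
        have := Nat.lt_two_pow_self (n := (b - a).toNat)
        have h2 : ((b - a).toNat : ℤ) < (2:ℤ)^((b-a).toNat) := by exact_mod_cast this
        omega
      have h2f : (0 : ℤ) < 2^f := pow_pos (by norm_num) f
      nlinarith [h2f, h1]
    have hbuildvalid := build_valid b f a (a + 1) (by omega) (by omega) (by omega)
    have hbuildsum := build_sum b f a (a + 1) (by omega) (by omega) hfuel
    have hbuildcost := build_cost b f a (a + 1) (by omega) (by omega) hfuel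
    refine ⟨l, ?_, ?_, ?_⟩
    · intro P hP
      rw [hl] at hP
      simp only [List.mem_cons] at hP
      rcases hP with h | h
      · subst h
        refine ⟨?_, ?_, ?_, ?_, ?_, by norm_num⟩ <;> dsimp only <;> omega
      · exact build_valid b f a (a + 1) (by omega) (by omega) (by omega) _ h
    · intro k hk1 hk2
      rw [hl, List.map_cons, List.sum_cons, hbuildsum k hk2]
      have hcnt : ((Pc.cnt ⟨a + 1, a, 2*a, 1⟩ k : ℤ)) = gnum a (a+1) k := by
        rw [Pc.cnt_eq]
        simp only [gnum]
        try dsimp only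
        omega
      have hcntR : ((Pc.cnt ⟨a + 1, a, 2*a, 1⟩ k : ℝ)) = ((gnum a (a+1) k : ℤ) : ℝ) := by
        exact_mod_cast congrArg (Int.cast : ℤ → ℝ) hcnt
      try dsimp only
      rw [hcntR]
      have hne : (((a + 1 : ℤ)) : ℝ) ≠ 0 := by
        have : (0:ℤ) < a + 1 := by omega
        exact_mod_cast ne_of_gt (by exact_mod_cast this : (0:ℝ) < ((a+1:ℤ):ℝ))
      push_cast at *
      field_simp
      ring
    · rw [hl, List.map_cons, List.sum_cons]
      have hc0 : cost ⟨a + 1, a, 2*a, 1⟩ = 1 := by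
        unfold cost
        dsimp only
        have : (((a + 1 : ℤ)) : ℝ) ≠ 0 := by exact_mod_cast (by omega : (a + 1 : ℤ) ≠ 0)
        push_cast at this ⊢
        field_simp
        ring
      rw [hc0]
      have ha1R : (0 : ℝ) < ((a+1 : ℤ) : ℝ) := by exact_mod_cast (by omega : (0:ℤ) < a + 1)
      have hbaR : ((a+1 : ℤ) : ℝ) ≤ (b : ℝ) - (a : ℝ) := by
        have : ((a+1 : ℤ) : ℝ) ≤ ((b - a : ℤ) : ℝ) := by exact_mod_cast (by omega : a + 1 ≤ b - a)
        push_cast at this ⊢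
        linarith
      have hargpos : (0 : ℝ) < ((b : ℝ) - (a : ℝ))/((a+1 : ℤ) : ℝ) := by
        apply div_pos (by linarith) ha1R
      have hmono : Real.log (((b : ℝ) - (a : ℝ))/((a+1 : ℤ) : ℝ)) ≤ Real.log ((b : ℝ)/(a : ℝ)) := by
        apply Real.log_le_log hargpos
        rw [div_le_div_iff₀ ha1R haR]
        push_cast
        nlinarith [haR]
      have hklog : kap * Real.log (((b : ℝ) - (a : ℝ))/((a+1 : ℤ) : ℝ)) ≤ 3 * Real.log ((b : ℝ)/(a : ℝ)) := by
        have h1 : kap * Real.log (((b : ℝ) - (a : ℝ))/((a+1 : ℤ) : ℝ)) ≤ kap * Real.log ((b : ℝ)/(a : ℝ)) :=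
          mul_le_mul_of_nonneg_left hmono (le_of_lt kap_pos)
        have h2 : kap * Real.log ((b : ℝ)/(a : ℝ)) ≤ 3 * Real.log ((b : ℝ)/(a : ℝ)) :=
          mul_le_mul_of_nonneg_right kap_le hlogba
        linarith
      have hbc' : ((b : ℝ) - ((a : ℤ) : ℝ)) = (b : ℝ) - (a : ℝ) := by push_cast; ring
      calc (1 : ℝ) + ((build b f a (a+1)).map cost).sum
          ≤ 1 + (4 + kap * Real.log (((b : ℝ) - (a : ℝ))/((a+1 : ℤ) : ℝ))) := by
            have := hbuildcost
            push_cast at this ⊢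
            linarith
        _ ≤ 5 + 3 * Real.log ((b : ℝ)/(a : ℝ)) := by linarith
        _ ≤ 6 * (1 + Real.log ((b : ℝ)/(a : ℝ))) := by nlinarith [hlogba]

variable {X : Type*} [NormedAddCommGroup X] [NormedSpace ℂ X]

lemma sm_finsupp (g : ℤ → X) (s : Finset ℤ) (h : ∀ i ∉ s, g i = 0) :
    MeasureTheory.StronglyMeasurable g := by
  have hg : g = fun i => ∑ j ∈ s, Set.indicator ({j} : Set ℤ) (fun _ => g j) i := by
    funext i
    by_cases hi : i ∈ s
    · rw [Finset.sum_eq_single i]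
      · simp [Set.indicator]
      · intro j hj hne
        simp [Set.indicator, (Ne.symm hne : i ≠ j)]
      · intro hni; exact absurd hi hni
    · rw [h i hi]
      apply (Finset.sum_eq_zero ?_).symm
      intro j hj
      have : i ≠ j := fun hij => hi (hij ▸ hj)
      simp [Set.indicator, this]
  rw [hg]
  apply Finset.stronglyMeasurable_fun_sum
  intro j _
  exact stronglyMeasurable_const.indicator (measurableSet_singleton j)

lemma eLpNorm_le_of_finsupp (g : ℤ → X) (s : Finset ℤ) (h0 : ∀ i ∉ s, g i = 0)
    (R : ℝ) (hb : ∀ i ∈ s, ‖g i‖ ≤ R) {p : ℝ} (hp : 0 < p) :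
    eLpNorm g (ENNReal.ofReal p) Measure.count
      ≤ ((s.card : ℝ≥0∞)) ^ (1/p) * ENNReal.ofReal R := by
  have hq0 : (ENNReal.ofReal p) ≠ 0 := by
    simp [ENNReal.ofReal_eq_zero]; linarith
  have hqt : (ENNReal.ofReal p) ≠ ∞ := ENNReal.ofReal_ne_top
  rw [eLpNorm_eq_lintegral_rpow_enorm_toReal hq0 hqt, ENNReal.toReal_ofReal hp.le]
  simp only [enorm_eq_nnnorm]
  rw [MeasureTheory.lintegral_count]
  have hts : (∑' i : ℤ, (‖g i‖₊ : ℝ≥0∞) ^ p) = ∑ i ∈ s, (‖g i‖₊ : ℝ≥0∞) ^ p := by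
    apply tsum_eq_sum
    intro i hi
    rw [h0 i hi]
    simp [ENNReal.zero_rpow_of_pos hp]
  rw [hts]
  have hbound : ∀ i ∈ s, (‖g i‖₊ : ℝ≥0∞) ^ p ≤ (ENNReal.ofReal R) ^ p := by
    intro i hi
    apply ENNReal.rpow_le_rpow _ hp.le
    rw [← enorm_eq_nnnorm, ← ofReal_norm]
    exact ENNReal.ofReal_le_ofReal (hb i hi)
  calc (∑ i ∈ s, (‖g i‖₊ : ℝ≥0∞) ^ p) ^ (1/p)
      ≤ (∑ _i ∈ s, (ENNReal.ofReal R) ^ p) ^ (1/p) := by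
        apply ENNReal.rpow_le_rpow (Finset.sum_le_sum hbound) (by positivity)
    _ = ((s.card : ℝ≥0∞) * (ENNReal.ofReal R) ^ p) ^ (1/p) := by
        rw [Finset.sum_const, nsmul_eq_mul]
    _ = (s.card : ℝ≥0∞) ^ (1/p) * ENNReal.ofReal R := by
        rw [ENNReal.mul_rpow_of_nonneg _ _ (by positivity)]
        congr 1
        rw [← ENNReal.rpow_mul, mul_one_div_cancel (ne_of_gt hp), ENNReal.rpow_one]



def Ffun (T : X →L[ℂ] X) (x : X) (L : ℤ) : ℤ → X :=
  fun i => if 0 ≤ i ∧ i ≤ L then (T ^ ((L - i).toNat)) x else 0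

def Gfun (T : X →L[ℂ] X) (x : X) (μ : ℤ → ℂ) (a b L : ℤ) : ℤ → X :=
  fun n => ∑ k ∈ Finset.Icc a b, μ k • Ffun T x L (n - k)

def repE (T : X →L[ℂ] X) (x : X) (μ : ℤ → ℂ) (a b : ℤ) (P : Pc) : X :=
  ∑ n ∈ Finset.Icc P.u P.v, (T ^ ((n - (P.A - 1)).toNat)) (Gfun T x μ a b (P.A - 1) n)

lemma rep_eq (T : X →L[ℂ] X) (x : X) (μ : ℤ → ℂ) (a b : ℤ) (ha : 1 ≤ a) (P : Pc)
    (hP : P.valid b) :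
    repE T x μ a b P = ∑ k ∈ Finset.Icc a b, ((P.cnt k : ℂ)) • (μ k • (T ^ k.toNat) x) := by
  obtain ⟨hA, hu, huv, hv, hlen, hlam⟩ := hP
  unfold repE Gfun
  have hstep : ∀ n ∈ Finset.Icc P.u P.v,
      (T ^ ((n - (P.A - 1)).toNat)) (∑ k ∈ Finset.Icc a b, μ k • Ffun T x (P.A - 1) (n - k))
      = ∑ k ∈ Finset.Icc a b, (if n ∈ Finset.Icc k (k + P.A - 1) then μ k • (T ^ k.toNat) x else 0) := by
    intro n hn
    rw [Finset.mem_Icc] at hn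
    rw [map_sum]
    apply Finset.sum_congr rfl
    intro k hk
    rw [Finset.mem_Icc] at hk
    rw [_root_.map_smul]
    unfold Ffun
    by_cases hcond : 0 ≤ n - k ∧ n - k ≤ P.A - 1
    · rw [if_pos hcond, if_pos (by rw [Finset.mem_Icc]; omega)]
      congr 1
      rw [← ContinuousLinearMap.mul_apply, ← pow_add]
      have : (n - (P.A - 1)).toNat + ((P.A - 1) - (n - k)).toNat = k.toNat := by omega
      rw [this]
    · rw [if_neg hcond, if_neg (by rw [Finset.mem_Icc]; omega)]
      simp
  rw [Finset.sum_congr rfl hstep, Finset.sum_comm]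
  apply Finset.sum_congr rfl
  intro k hk
  rw [Finset.sum_ite_mem, Finset.sum_const, ← Nat.cast_smul_eq_nsmul ℂ]
  rfl


lemma rep_norm {p : ℝ} (hp : 1 < p) (T : X →L[ℂ] X) (x : X) (μ : ℤ → ℂ) (a b : ℤ)
    (ha : 1 ≤ a) (hab : a ≤ b)
    (M : ℝ) (hM : ∀ n : ℕ, (n : ℤ) ≤ b → ‖T ^ n‖ ≤ M)
    (hμ : ∀ n : ℤ, μ n ≠ 0 → a ≤ n ∧ n ≤ b)
    (C : ℝ) (hC : 0 ≤ C)
    (hconv : ∀ F : ℤ → X, MemLp F (ENNReal.ofReal p) Measure.count →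
          eLpNorm (fun n : ℤ => ∑' k : ℤ, μ k • F (n - k)) (ENNReal.ofReal p)
              Measure.count
            ≤ ENNReal.ofReal C * eLpNorm F (ENNReal.ofReal p) Measure.count)
    (P : Pc) (hP : P.valid b) :
    ‖repE T x μ a b P‖ ≤ ((P.v : ℝ) - P.u + 1) * (M^2 * C * ‖x‖) := by
  obtain ⟨hA, hu, huv, hv, hlen, hlam⟩ := hP
  have hb0 : (0 : ℤ) ≤ b := by omega
  have hM0 : 0 ≤ M := by
    refine le_trans (norm_nonneg (T ^ 0)) (hM 0 ?_)
    exact_mod_cast hb0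
  have hppos : 0 < p := by linarith
  set q := ENNReal.ofReal p with hq
  have hq0 : q ≠ 0 := by
    rw [hq]
    simp only [ne_eq, ENNReal.ofReal_eq_zero, not_le]
    linarith
  have hqt : q ≠ ∞ := ENNReal.ofReal_ne_top
  set L : ℤ := P.A - 1 with hLdef
  set F : ℤ → X := Ffun T x L with hFdef
  -- support and bound for F
  have hFsupp : ∀ i ∉ Finset.Icc 0 L, F i = 0 := by
    intro i hi
    rw [Finset.mem_Icc] at hi
    rw [hFdef]
    unfold Ffun
    rw [if_neg (by omega)]
  have hFbd : ∀ i ∈ Finset.Icc 0 L, ‖F i‖ ≤ M * ‖x‖ := by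
    intro i hi
    rw [Finset.mem_Icc] at hi
    rw [hFdef]
    unfold Ffun
    rw [if_pos (by omega)]
    calc ‖(T ^ ((L - i).toNat)) x‖ ≤ ‖T ^ ((L - i).toNat)‖ * ‖x‖ :=
          ContinuousLinearMap.le_opNorm _ _
      _ ≤ M * ‖x‖ := by
          apply mul_le_mul_of_nonneg_right _ (norm_nonneg x)
          apply hM
          omega
  have hcard : (Finset.Icc 0 L).card = P.A.toNat := by
    rw [Int.card_Icc]
    omega
  have hFle : eLpNorm F q Measure.count
      ≤ ((P.A.toNat : ℝ≥0∞)) ^ (1/p) * ENNReal.ofReal (M * ‖x‖) := by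
    rw [hq, ← hcard]
    exact eLpNorm_le_of_finsupp F _ hFsupp (M * ‖x‖) hFbd hppos
  have hFmem : MemLp F q Measure.count := by
    constructor
    · exact (sm_finsupp F (Finset.Icc 0 L) hFsupp).aestronglyMeasurable
    · refine lt_of_le_of_lt hFle ?_
      apply ENNReal.mul_lt_top
      · exact ENNReal.rpow_lt_top_of_nonneg (by positivity) (ENNReal.natCast_ne_top _)
      · exact ENNReal.ofReal_lt_top
  -- G
  set G : ℤ → X := Gfun T x μ a b L with hGdef
  have hGfun : (fun n : ℤ => ∑' k : ℤ, μ k • F (n - k)) = G := by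
    funext n
    rw [hGdef]
    unfold Gfun
    apply tsum_eq_sum
    intro k hk
    have : μ k = 0 := by
      by_contra h
      exact hk (Finset.mem_Icc.mpr (hμ k h))
    rw [this, zero_smul]
  have hGle : eLpNorm G q Measure.count ≤ ENNReal.ofReal C * eLpNorm F q Measure.count := by
    rw [← hGfun]
    exact hconv F hFmem
  -- Hölder
  set r := Real.conjExponent p with hrdef
  have hpr : p.HolderConjugate r := Real.HolderConjugate.conjExponent hp
  have hrpos : 0 < r := hpr.symm.pos
  set ind : ℤ → ℝ≥0∞ := fun n => if n ∈ Finset.Icc P.u P.v then 1 else 0 with hind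
  have hholder : ∑ n ∈ Finset.Icc P.u P.v, (‖G n‖₊ : ℝ≥0∞)
      ≤ (((Finset.Icc P.u P.v).card : ℝ≥0∞)) ^ (1/r) * eLpNorm G q Measure.count := by
    have hmeas1 : Measurable ind := measurable_of_countable _
    have hmeas2 : Measurable (fun n : ℤ => (‖G n‖₊ : ℝ≥0∞)) := measurable_of_countable _
    have hHold := ENNReal.lintegral_mul_le_Lp_mul_Lq Measure.count hpr.symm
      hmeas1.aemeasurable hmeas2.aemeasurable
    have hlhs : ∫⁻ n, (ind * fun n : ℤ => (‖G n‖₊ : ℝ≥0∞)) n ∂Measure.count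
        = ∑ n ∈ Finset.Icc P.u P.v, (‖G n‖₊ : ℝ≥0∞) := by
      rw [MeasureTheory.lintegral_count]
      rw [tsum_eq_sum (s := Finset.Icc P.u P.v) (fun n hn => by
        simp only [Pi.mul_apply, hind, if_neg hn, zero_mul])]
      apply Finset.sum_congr rfl
      intro n hn
      simp only [Pi.mul_apply, hind, if_pos hn, one_mul]
    have hfint : ∫⁻ n, (ind n) ^ r ∂Measure.count
        = (((Finset.Icc P.u P.v).card : ℝ≥0∞)) := by
      rw [MeasureTheory.lintegral_count]
      rw [tsum_eq_sum (s := Finset.Icc P.u P.v) (fun n hn => by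
        simp only [hind, if_neg hn]
        exact ENNReal.zero_rpow_of_pos hrpos)]
      rw [Finset.sum_congr rfl (fun n hn => by
        simp only [hind, if_pos hn]
        exact ENNReal.one_rpow r)]
      rw [Finset.sum_const, nsmul_eq_mul, mul_one]
    have hgint : (∫⁻ n, ((fun n : ℤ => (‖G n‖₊ : ℝ≥0∞)) n) ^ p ∂Measure.count) ^ (1/p)
        = eLpNorm G q Measure.count := by
      rw [eLpNorm_eq_lintegral_rpow_enorm_toReal hq0 hqt, hq, ENNReal.toReal_ofReal hppos.le]
      rfl
    rw [hlhs, hfint, hgint] at hHold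
    exact hHold
  -- operator norm step, in reals
  have hTn : ∀ n ∈ Finset.Icc P.u P.v, ‖(T ^ ((n - L).toNat)) (G n)‖ ≤ M * ‖G n‖ := by
    intro n hn
    rw [Finset.mem_Icc] at hn
    calc ‖(T ^ ((n - L).toNat)) (G n)‖ ≤ ‖T ^ ((n - L).toNat)‖ * ‖G n‖ :=
          ContinuousLinearMap.le_opNorm _ _
      _ ≤ M * ‖G n‖ := by
          apply mul_le_mul_of_nonneg_right _ (norm_nonneg _)
          apply hM
          omega
  -- convert the ENNReal bound to a real bound
  set lenN := (Finset.Icc P.u P.v).card with hlenN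
  have hRHS := calc ∑ n ∈ Finset.Icc P.u P.v, (‖G n‖₊ : ℝ≥0∞)
      ≤ ((lenN : ℝ≥0∞)) ^ (1/r) * eLpNorm G q Measure.count := hholder
    _ ≤ ((lenN : ℝ≥0∞)) ^ (1/r) * (ENNReal.ofReal C *
          (((P.A.toNat : ℝ≥0∞)) ^ (1/p) * ENNReal.ofReal (M * ‖x‖))) := by
        apply mul_le_mul_right
        calc eLpNorm G q Measure.count ≤ ENNReal.ofReal C * eLpNorm F q Measure.count := hGle
          _ ≤ ENNReal.ofReal C * (((P.A.toNat : ℝ≥0∞)) ^ (1/p) * ENNReal.ofReal (M * ‖x‖)) :=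
            mul_le_mul_right hFle _
  have hfin : ((lenN : ℝ≥0∞)) ^ (1/r) * (ENNReal.ofReal C *
          (((P.A.toNat : ℝ≥0∞)) ^ (1/p) * ENNReal.ofReal (M * ‖x‖))) ≠ ∞ := by
    apply ENNReal.mul_ne_top
    · exact (ENNReal.rpow_lt_top_of_nonneg (by positivity) (ENNReal.natCast_ne_top _)).ne
    · apply ENNReal.mul_ne_top ENNReal.ofReal_ne_top
      apply ENNReal.mul_ne_top
      · exact (ENNReal.rpow_lt_top_of_nonneg (by positivity) (ENNReal.natCast_ne_top _)).ne
      · exact ENNReal.ofReal_ne_top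
  have hreal : ∑ n ∈ Finset.Icc P.u P.v, ‖G n‖
      ≤ ((lenN : ℝ)) ^ (1/r) * (C * (((P.A.toNat : ℝ)) ^ (1/p) * (M * ‖x‖))) := by
    have h1 : (∑ n ∈ Finset.Icc P.u P.v, (‖G n‖₊ : ℝ≥0∞)).toReal
        = ∑ n ∈ Finset.Icc P.u P.v, ‖G n‖ := by
      rw [ENNReal.toReal_sum (fun n _ => ENNReal.coe_ne_top)]
      simp
    have h2 := ENNReal.toReal_mono hfin hRHS
    rw [h1] at h2
    refine le_trans h2 (le_of_eq ?_)
    rw [ENNReal.toReal_mul, ENNReal.toReal_mul, ENNReal.toReal_mul]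
    rw [← ENNReal.toReal_rpow, ← ENNReal.toReal_rpow]
    rw [ENNReal.toReal_ofReal hC, ENNReal.toReal_ofReal (by positivity : (0:ℝ) ≤ M * ‖x‖)]
    simp
  -- assemble
  have hreple : ‖repE T x μ a b P‖ ≤ M * ∑ n ∈ Finset.Icc P.u P.v, ‖G n‖ := by
    calc ‖repE T x μ a b P‖ ≤ ∑ n ∈ Finset.Icc P.u P.v, ‖(T ^ ((n - L).toNat)) (G n)‖ := by
          apply norm_sum_le
      _ ≤ ∑ n ∈ Finset.Icc P.u P.v, M * ‖G n‖ := Finset.sum_le_sum hTn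
      _ = M * ∑ n ∈ Finset.Icc P.u P.v, ‖G n‖ := by rw [Finset.mul_sum]
  -- key rpow inequality
  set lenR : ℝ := ((P.v : ℝ) - P.u + 1) with hlenR
  have hlenNR : ((lenN : ℝ)) = lenR := by
    have hz : (lenN : ℤ) = P.v + 1 - P.u := by
      rw [hlenN, Int.card_Icc]
      omega
    have h3 : ((lenN : ℤ) : ℝ) = ((P.v + 1 - P.u : ℤ) : ℝ) := congrArg (Int.cast : ℤ → ℝ) hz
    push_cast at h3
    rw [hlenR]
    linarith
  have hAR : ((P.A.toNat : ℝ)) = (P.A : ℝ) := by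
    have : (P.A.toNat : ℤ) = P.A := Int.toNat_of_nonneg (by omega)
    exact_mod_cast congrArg (Int.cast : ℤ → ℝ) this
  have hA1 : (1 : ℝ) ≤ (P.A : ℝ) := by exact_mod_cast hA
  have hlen1 : (P.A : ℝ) ≤ lenR := by
    rw [hlenR]
    have : ((P.A : ℤ) : ℝ) ≤ ((P.v - P.u + 1 : ℤ) : ℝ) := by exact_mod_cast hlen
    push_cast at this
    linarith
  have hlenpos : (0 : ℝ) < lenR := by linarith
  have hkey : (lenR) ^ (1/r) * (lenR) ^ (1/p) = lenR := by
    rw [← Real.rpow_add hlenpos]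
    have : 1/r + 1/p = 1 := by
      have := hpr.inv_add_inv_eq_one
      rw [one_div, one_div]
      linarith [this]
    rw [this, Real.rpow_one]
  have hApow : ((P.A : ℝ)) ^ (1/p) ≤ (lenR) ^ (1/p) :=
    Real.rpow_le_rpow (by linarith) hlen1 (by positivity)
  have hprod : ((lenN : ℝ)) ^ (1/r) * ((P.A.toNat : ℝ)) ^ (1/p) ≤ lenR := by
    rw [hlenNR, hAR]
    calc (lenR) ^ (1/r) * ((P.A : ℝ)) ^ (1/p) ≤ (lenR) ^ (1/r) * (lenR) ^ (1/p) := by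
          apply mul_le_mul_of_nonneg_left hApow (by positivity)
      _ = lenR := hkey
  calc ‖repE T x μ a b P‖ ≤ M * ∑ n ∈ Finset.Icc P.u P.v, ‖G n‖ := hreple
    _ ≤ M * (((lenN : ℝ)) ^ (1/r) * (C * (((P.A.toNat : ℝ)) ^ (1/p) * (M * ‖x‖)))) :=
        mul_le_mul_of_nonneg_left hreal hM0
    _ = (((lenN : ℝ)) ^ (1/r) * ((P.A.toNat : ℝ)) ^ (1/p)) * (M^2 * C * ‖x‖) := by ring
    _ ≤ lenR * (M^2 * C * ‖x‖) := by
        apply mul_le_mul_of_nonneg_right hprod (by positivity)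


lemma lsum_swap {M : Type*} [AddCommMonoid M] (l : List Pc) (s : Finset ℤ) (g : Pc → ℤ → M) :
    (l.map (fun P => ∑ k ∈ s, g P k)).sum = ∑ k ∈ s, (l.map (fun P => g P k)).sum := by
  induction l with
  | nil => simp
  | cons P t ih =>
    simp only [List.map_cons, List.sum_cons, ih]
    rw [← Finset.sum_add_distrib]

lemma lsum_norm_le (l : List Pc) (g : Pc → X) :
    ‖(l.map g).sum‖ ≤ (l.map (fun P => ‖g P‖)).sum := by
  induction l with
  | nil => simp
  | cons P t ih =>
    simp only [List.map_cons, List.sum_cons]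
    exact le_trans (norm_add_le _ _) (by linarith)

lemma lsum_le (l : List Pc) (g h : Pc → ℝ) (hle : ∀ P ∈ l, g P ≤ h P) :
    (l.map g).sum ≤ (l.map h).sum := by
  induction l with
  | nil => simp
  | cons P t ih =>
    simp only [List.map_cons, List.sum_cons]
    have h1 := hle P (List.mem_cons_self (a := P) (l := t))
    have h2 := ih (fun Q hQ => hle Q (List.mem_cons_of_mem P hQ))
    linarith

lemma lsum_smul (l : List Pc) (c : Pc → ℂ) (z : X) :
    (l.map (fun P => c P • z)).sum = ((l.map c).sum) • z := by
  induction l with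
  | nil => simp
  | cons P t ih =>
    simp only [List.map_cons, List.sum_cons, ih, add_smul]

lemma lsum_mul (l : List Pc) (c : Pc → ℝ) (K : ℝ) :
    (l.map (fun P => c P * K)).sum = (l.map c).sum * K := by
  induction l with
  | nil => simp
  | cons P t ih =>
    simp only [List.map_cons, List.sum_cons, ih, add_mul]

lemma lsum_cast (l : List Pc) (c : Pc → ℝ) :
    (l.map (fun P => ((c P : ℝ) : ℂ))).sum = (((l.map c).sum : ℝ) : ℂ) := by
  induction l with
  | nil => simp
  | cons P t ih =>
    simp only [List.map_cons, List.sum_cons, ih]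
    push_cast
    ring

end TransferenceAux

open TransferenceAux in
theorem transference_semigroup_discrete' (p : ℝ) (hp : 1 < p) :
    ∃ c : ℝ, 0 ≤ c ∧
      ∀ (X : Type*) [NormedAddCommGroup X] [NormedSpace ℂ X] [CompleteSpace X],
      ∀ T : X →L[ℂ] X,
      ∀ a b : ℤ, 1 ≤ a → a ≤ b →
      ∀ M : ℝ, (∀ n : ℕ, (n : ℤ) ≤ b → ‖T ^ n‖ ≤ M) →
      ∀ μ : ℤ → ℂ, (∀ n : ℤ, μ n ≠ 0 → a ≤ n ∧ n ≤ b) →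
      ∀ C : ℝ, 0 ≤ C →
        (∀ F : ℤ → X, MemLp F (ENNReal.ofReal p) Measure.count →
          eLpNorm (fun n : ℤ => ∑' k : ℤ, μ k • F (n - k)) (ENNReal.ofReal p)
              Measure.count
            ≤ ENNReal.ofReal C * eLpNorm F (ENNReal.ofReal p) Measure.count) →
        ‖∑ n ∈ Finset.Icc a b, μ n • T ^ n.toNat‖ ≤
          c * (1 + Real.log ((b : ℝ) / (a : ℝ))) * M ^ 2 * C := by
  refine ⟨6, by norm_num, ?_⟩
  intro X _inst1 _inst2 _inst3 T a b ha hab M hM μ hμ C hC hconv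
  obtain ⟨l, hval, hsum, hcost⟩ := cover a b ha hab
  have haR : (0 : ℝ) < (a : ℝ) := by exact_mod_cast ha
  have hlog : 0 ≤ Real.log ((b : ℝ)/(a : ℝ)) := by
    apply Real.log_nonneg
    rw [le_div_iff₀ haR]
    have : (a : ℝ) ≤ (b : ℝ) := by exact_mod_cast hab
    linarith
  have hM0 : 0 ≤ M := by
    refine le_trans (norm_nonneg (T ^ 0)) (hM 0 ?_)
    exact_mod_cast (by omega : (0 : ℤ) ≤ b)
  have hbound0 : 0 ≤ 6 * (1 + Real.log ((b : ℝ)/(a : ℝ))) * M ^ 2 * C := by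
    apply mul_nonneg
    apply mul_nonneg
    · linarith
    · positivity
    · exact hC
  apply ContinuousLinearMap.opNorm_le_bound _ hbound0
  intro x
  have happ : (∑ n ∈ Finset.Icc a b, μ n • T ^ n.toNat) x
      = ∑ k ∈ Finset.Icc a b, μ k • (T ^ k.toNat) x := by
    rw [ContinuousLinearMap.sum_apply]
    apply Finset.sum_congr rfl
    intro k _
    rw [ContinuousLinearMap.smul_apply]
  rw [happ]
  -- the transference identity
  have hid : (l.map (fun P => ((P.lam / (P.A : ℝ) : ℝ) : ℂ) • repE T x μ a b P)).sum
      = ∑ k ∈ Finset.Icc a b, μ k • (T ^ k.toNat) x := by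
    have h1 : ∀ P ∈ l, ((P.lam / (P.A : ℝ) : ℝ) : ℂ) • repE T x μ a b P
        = ∑ k ∈ Finset.Icc a b,
            (((P.lam / (P.A : ℝ)) * (P.cnt k : ℝ) : ℝ) : ℂ) • (μ k • (T ^ k.toNat) x) := by
      intro P hP
      rw [rep_eq T x μ a b ha P (hval P hP), Finset.smul_sum]
      apply Finset.sum_congr rfl
      intro k _
      rw [smul_smul]
      congr 1
      push_cast
      ring
    rw [List.map_congr_left h1, lsum_swap]
    apply Finset.sum_congr rfl
    intro k hk
    rw [Finset.mem_Icc] at hk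
    rw [lsum_smul, lsum_cast]
    have h2 : (l.map (fun P => P.lam / (P.A : ℝ) * (P.cnt k : ℝ))).sum
        = (l.map (fun P => P.lam * ((P.cnt k : ℝ) / (P.A : ℝ)))).sum := by
      apply congrArg
      apply List.map_congr_left
      intro P _
      ring
    rw [h2, hsum k hk.1 hk.2]
    norm_num
  rw [← hid]
  have hstep : ∀ P ∈ l, ‖((P.lam / (P.A : ℝ) : ℝ) : ℂ) • repE T x μ a b P‖
      ≤ cost P * (M ^ 2 * C * ‖x‖) := by
    intro P hP
    obtain ⟨hA, hu, huv, hv, hlen, hlam⟩ := hval P hP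
    have hApos : (0 : ℝ) < (P.A : ℝ) := by exact_mod_cast hA
    rw [norm_smul]
    have hns : ‖(((P.lam / (P.A : ℝ)) : ℝ) : ℂ)‖ = P.lam / (P.A : ℝ) := by
      rw [Complex.norm_real]
      exact abs_of_nonneg (div_nonneg hlam hApos.le)
    rw [hns]
    calc P.lam / (P.A : ℝ) * ‖repE T x μ a b P‖
        ≤ P.lam / (P.A : ℝ) * (((P.v : ℝ) - P.u + 1) * (M ^ 2 * C * ‖x‖)) := by
          apply mul_le_mul_of_nonneg_left
            (rep_norm hp T x μ a b ha hab M hM hμ C hC hconv P (hval P hP))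
            (div_nonneg hlam hApos.le)
      _ = cost P * (M ^ 2 * C * ‖x‖) := by
          unfold cost
          field_simp
  calc ‖(l.map (fun P => ((P.lam / (P.A : ℝ) : ℝ) : ℂ) • repE T x μ a b P)).sum‖
      ≤ (l.map (fun P => ‖((P.lam / (P.A : ℝ) : ℝ) : ℂ) • repE T x μ a b P‖)).sum :=
        lsum_norm_le _ _
    _ ≤ (l.map (fun P => cost P * (M ^ 2 * C * ‖x‖))).sum := lsum_le _ _ _ hstep
    _ = (l.map cost).sum * (M ^ 2 * C * ‖x‖) := lsum_mul _ _ _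
    _ ≤ 6 * (1 + Real.log ((b : ℝ)/(a : ℝ))) * (M ^ 2 * C * ‖x‖) := by
        apply mul_le_mul_of_nonneg_right hcost (by positivity)
    _ = 6 * (1 + Real.log ((b : ℝ)/(a : ℝ))) * M ^ 2 * C * ‖x‖ := by ring


/-- **Transference principle for discrete operator semigroups
(Theorem 4.4).**  For every `p ∈ (1,∞)` there is `c_p ≥ 0` such that
whenever `T` is a bounded operator on a Banach space `X`, `1 ≤ a ≤ b` are
integers, `M(b)` bounds `‖Tⁿ‖` for `0 ≤ n ≤ b`, `μ : ℤ → ℂ` is supported in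
`[a,b]`, and `C` is an `ℓ^p(ℤ;X)`-convolution bound for `μ`, then
`‖Σ_{n=a}^{b} μ(n) Tⁿ‖ ≤ c_p (1 + log(b/a)) M(b)² C`. -/
theorem transference_semigroup_discrete (p : ℝ) (hp : 1 < p) :
    ∃ c : ℝ, 0 ≤ c ∧
      ∀ (X : Type*) [NormedAddCommGroup X] [NormedSpace ℂ X] [CompleteSpace X],
      ∀ T : X →L[ℂ] X,
      ∀ a b : ℤ, 1 ≤ a → a ≤ b →
      ∀ M : ℝ, (∀ n : ℕ, (n : ℤ) ≤ b → ‖T ^ n‖ ≤ M) →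
      ∀ μ : ℤ → ℂ, (∀ n : ℤ, μ n ≠ 0 → a ≤ n ∧ n ≤ b) →
      ∀ C : ℝ, 0 ≤ C →
        (∀ F : ℤ → X, MemLp F (ENNReal.ofReal p) Measure.count →
          eLpNorm (fun n : ℤ => ∑' k : ℤ, μ k • F (n - k)) (ENNReal.ofReal p)
              Measure.count
            ≤ ENNReal.ofReal C * eLpNorm F (ENNReal.ofReal p) Measure.count) →
        ‖∑ n ∈ Finset.Icc a b, μ n • T ^ n.toNat‖ ≤
          c * (1 + Real.log ((b : ℝ) / (a : ℝ))) * M ^ 2 * C := by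
  exact transference_semigroup_discrete' p hp
end
end

section
/- Let p ∈ (1,∞) and let p' be its conjugate exponent (1/p + 1/p' = 1). Let X be a Banach space, T ∈ L(X), a, b ∈ ℤ with 1 ≤ a ≤ b, M(b) := sup_{0≤n≤b} ‖Tⁿ‖, let μ : ℤ → ℂ be supported in { n : a ≤ n ≤ b }, and let C ≥ 0 be an ℓ^p(ℤ;X)-convolution bound for μ. Then ‖Σ_{n=a}^{b} μ(n) Tⁿ‖ ≤ M(b)² (b/a)^{1/max(p,p')} C. -/
open MeasureTheory
open scoped ENNReal NNReal

private lemma sm_of_finsupp {X : Type*} [NormedAddCommGroup X]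
    (F : ℤ → X) (s : Finset ℤ) (hFs : ∀ m ∉ s, F m = 0) :
    StronglyMeasurable F := by
  classical
  have hF : F = fun m => ∑ i ∈ s, Set.indicator ({i} : Set ℤ) (fun _ => F i) m := by
    funext m
    simp only [Set.indicator_apply, Set.mem_singleton_iff, Finset.sum_ite_eq]
    by_cases hm : m ∈ s <;> simp [hm, hFs m]
  rw [hF]
  exact Finset.stronglyMeasurable_fun_sum _ fun i _ =>
    (stronglyMeasurable_const : StronglyMeasurable (fun _ : ℤ => F i)).indicator (measurableSet_singleton (i : ℤ))

private lemma eLpNorm_finsupp {X : Type*} [NormedAddCommGroup X]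
    (p : ℝ) (hp : 0 < p) (F : ℤ → X) (s : Finset ℤ) (hFs : ∀ m ∉ s, F m = 0) :
    eLpNorm F (ENNReal.ofReal p) Measure.count
      = (∑ m ∈ s, (‖F m‖₊ : ℝ≥0∞) ^ p) ^ (1 / p) := by
  rw [eLpNorm_eq_lintegral_rpow_enorm_toReal (by simp [ENNReal.ofReal_eq_zero]; linarith)
      ENNReal.ofReal_ne_top, lintegral_count, ENNReal.toReal_ofReal hp.le,
      tsum_eq_sum (s := s) ?_]
  rfl
  intro m hm
  rw [hFs m hm]
  simp [ENNReal.zero_rpow_of_pos hp]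

private lemma memLp_finsupp {X : Type*} [NormedAddCommGroup X]
    (p : ℝ) (hp : 0 < p) (F : ℤ → X) (s : Finset ℤ) (hFs : ∀ m ∉ s, F m = 0) :
    MemLp F (ENNReal.ofReal p) Measure.count := by
  refine ⟨(sm_of_finsupp F s hFs).aestronglyMeasurable, ?_⟩
  rw [eLpNorm_finsupp p hp F s hFs]
  refine ENNReal.rpow_lt_top_of_nonneg (by positivity) ?_
  exact (ENNReal.sum_lt_top.mpr fun m _ =>
    ENNReal.rpow_lt_top_of_nonneg hp.le ENNReal.coe_ne_top).ne

private lemma sum_le_holder (t : Finset ℤ) (v : ℤ → ℝ) (hv : ∀ n ∈ t, 0 ≤ v n)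
    (p p' : ℝ) (hp : 1 < p) (hpp' : 1 / p + 1 / p' = 1) :
    ∑ n ∈ t, v n ≤ (t.card : ℝ) ^ (1 / p') * (∑ n ∈ t, v n ^ p) ^ (1 / p) := by
  have hp0 : (0 : ℝ) < p := by linarith
  have h1p : 0 < 1 / p := by positivity
  have h1p1 : 1 / p < 1 := by rw [div_lt_one hp0]; exact hp
  have h1p' : 0 < 1 / p' := by linarith
  rcases t.eq_empty_or_nonempty with rfl | ht
  · simp only [Finset.sum_empty]
    positivity
  have hN : (0 : ℝ) < t.card := by
    exact_mod_cast Finset.card_pos.mpr ht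
  set N : ℝ := (t.card : ℝ) with hNdef
  have key := Real.arith_mean_le_rpow_mean t (fun _ => 1 / N) v
    (fun i _ => by positivity) (by simp [Finset.sum_const, hNdef]; field_simp)
    hv hp.le
  have hL : ∑ i ∈ t, (1 / N) * v i = (1 / N) * ∑ i ∈ t, v i := by
    rw [Finset.mul_sum]
  have hR : ∑ i ∈ t, (1 / N) * v i ^ p = (1 / N) * ∑ i ∈ t, v i ^ p := by
    rw [Finset.mul_sum]
  rw [hL, hR] at key
  have hsum : 0 ≤ ∑ i ∈ t, v i ^ p :=
    Finset.sum_nonneg fun i hi => Real.rpow_nonneg (hv i hi) p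
  have hmul : ((1 / N) * ∑ i ∈ t, v i ^ p) ^ (1 / p)
      = (1 / N) ^ (1 / p) * (∑ i ∈ t, v i ^ p) ^ (1 / p) :=
    Real.mul_rpow (by positivity) hsum
  rw [hmul] at key
  -- multiply both sides by N
  have key2 : ∑ i ∈ t, v i ≤ N * ((1 / N) ^ (1 / p) * (∑ i ∈ t, v i ^ p) ^ (1 / p)) := by
    calc ∑ i ∈ t, v i = N * ((1 / N) * ∑ i ∈ t, v i) := by field_simp
    _ ≤ N * ((1 / N) ^ (1 / p) * (∑ i ∈ t, v i ^ p) ^ (1 / p)) := by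
        exact mul_le_mul_of_nonneg_left key hN.le
  refine key2.trans (le_of_eq ?_)
  have hNsplit : N = N ^ (1 / p) * N ^ (1 / p') := by
    rw [← Real.rpow_add hN, hpp', Real.rpow_one]
  have hinv : (1 / N) ^ (1 / p) = (N ^ (1 / p))⁻¹ := by
    rw [one_div, Real.inv_rpow hN.le]
  rw [hinv]
  have hNp : (0:ℝ) < N ^ (1 / p) := Real.rpow_pos_of_pos hN _
  calc N * ((N ^ (1 / p))⁻¹ * (∑ i ∈ t, v i ^ p) ^ (1 / p))
      = (N * (N ^ (1 / p))⁻¹) * (∑ i ∈ t, v i ^ p) ^ (1 / p) := by ring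
    _ = N ^ (1 / p') * (∑ i ∈ t, v i ^ p) ^ (1 / p) := by
        congr 1
        nth_rewrite 1 [hNsplit]
        rw [mul_comm (N ^ (1 / p))]
        exact mul_inv_cancel_right₀ hNp.ne' _

private lemma conv_sum_bound {X : Type*} [NormedAddCommGroup X] [NormedSpace ℂ X]
    (p : ℝ) (hp : 1 < p) (μ : ℤ → ℂ) (C : ℝ) (hC : 0 ≤ C)
    (hCbound : ∀ F : ℤ → X, MemLp F (ENNReal.ofReal p) Measure.count →
      eLpNorm (fun n : ℤ => ∑' k : ℤ, μ k • F (n - k)) (ENNReal.ofReal p)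
          Measure.count
        ≤ ENNReal.ofReal C * eLpNorm F (ENNReal.ofReal p) Measure.count)
    (F : ℤ → X) (s : Finset ℤ) (hFs : ∀ m ∉ s, F m = 0) (t : Finset ℤ) :
    ∑ n ∈ t, ‖∑' k : ℤ, μ k • F (n - k)‖ ^ p ≤ C ^ p * ∑ m ∈ s, ‖F m‖ ^ p := by
  have hp0 : (0 : ℝ) < p := by linarith
  set G : ℤ → X := fun n => ∑' k : ℤ, μ k • F (n - k) with hGdef
  have h := hCbound F (memLp_finsupp p hp0 F s hFs)
  rw [eLpNorm_finsupp p hp0 F s hFs] at h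
  have hGnorm : eLpNorm G (ENNReal.ofReal p) Measure.count
      = (∑' n : ℤ, (‖G n‖₊ : ℝ≥0∞) ^ p) ^ (1 / p) := by
    rw [eLpNorm_eq_lintegral_rpow_enorm_toReal (by simp [ENNReal.ofReal_eq_zero]; linarith)
        ENNReal.ofReal_ne_top, lintegral_count, ENNReal.toReal_ofReal hp0.le]
    rfl
  rw [hGnorm] at h
  -- raise to power p
  have h2 : (∑' n : ℤ, (‖G n‖₊ : ℝ≥0∞) ^ p)
      ≤ ENNReal.ofReal C ^ p * ∑ m ∈ s, (‖F m‖₊ : ℝ≥0∞) ^ p := by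
    have h3 := ENNReal.rpow_le_rpow h hp0.le
    rwa [ENNReal.mul_rpow_of_nonneg _ _ hp0.le, ← ENNReal.rpow_mul, ← ENNReal.rpow_mul,
      one_div_mul_cancel hp0.ne', ENNReal.rpow_one, ENNReal.rpow_one] at h3
  have h4 : (∑ n ∈ t, (‖G n‖₊ : ℝ≥0∞) ^ p)
      ≤ ENNReal.ofReal C ^ p * ∑ m ∈ s, (‖F m‖₊ : ℝ≥0∞) ^ p :=
    le_trans (ENNReal.sum_le_tsum t) h2
  -- convert to real
  have hofL : ∀ (w : X), (‖w‖₊ : ℝ≥0∞) ^ p = ENNReal.ofReal (‖w‖ ^ p) := fun w => by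
    rw [← enorm_eq_nnnorm, ← ofReal_norm, ENNReal.ofReal_rpow_of_nonneg (norm_nonneg w) hp0.le]
  have h5 : ENNReal.ofReal (∑ n ∈ t, ‖G n‖ ^ p)
      ≤ ENNReal.ofReal (C ^ p * ∑ m ∈ s, ‖F m‖ ^ p) := by
    rw [ENNReal.ofReal_sum_of_nonneg (fun i _ => Real.rpow_nonneg (norm_nonneg _) p),
      ENNReal.ofReal_mul (Real.rpow_nonneg hC p),
      ENNReal.ofReal_sum_of_nonneg (fun i _ => Real.rpow_nonneg (norm_nonneg _) p)]
    simp_rw [← hofL]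
    rwa [← ENNReal.ofReal_rpow_of_nonneg hC hp0.le]
  rw [ENNReal.ofReal_le_ofReal_iff (by positivity)] at h5
  exact h5

private lemma transference_aux
    {X : Type*} [NormedAddCommGroup X] [NormedSpace ℂ X]
    (p p' : ℝ) (hp : 1 < p) (hpp' : 1 / p + 1 / p' = 1)
    (T : X →L[ℂ] X)
    (a b : ℤ) (ha : 1 ≤ a) (hab : a ≤ b)
    (M : ℝ) (hM : ∀ n : ℕ, (n : ℤ) ≤ b → ‖T ^ n‖ ≤ M)
    (μ : ℤ → ℂ) (hsupp : ∀ n : ℤ, μ n ≠ 0 → a ≤ n ∧ n ≤ b)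
    (C : ℝ) (hC : 0 ≤ C)
    (hCbound : ∀ F : ℤ → X, MemLp F (ENNReal.ofReal p) Measure.count →
      eLpNorm (fun n : ℤ => ∑' k : ℤ, μ k • F (n - k)) (ENNReal.ofReal p)
          Measure.count
        ≤ ENNReal.ofReal C * eLpNorm F (ENNReal.ofReal p) Measure.count)
    (c d : ℤ) (hc : 0 ≤ c) (hcb : c ≤ b) (hd : 0 ≤ d) (hdb : d ≤ b)
    (hcount : ∀ k ∈ Finset.Icc a b,
      ((Finset.Icc (0:ℤ) d).filter (fun n => n - k ∈ Finset.Icc (-c) (0:ℤ))).card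
        = a.toNat + 1) :
    ‖∑ n ∈ Finset.Icc a b, μ n • T ^ n.toNat‖ ≤
      M ^ 2 * (((d:ℝ)+1) ^ (1/p') * ((c:ℝ)+1) ^ (1/p) / ((a:ℝ)+1)) * C := by
  classical
  have hp0 : (0 : ℝ) < p := by linarith
  have h1p : 0 < 1 / p := by positivity
  have h1p1 : 1 / p < 1 := by rw [div_lt_one hp0]; exact hp
  have h1p' : 0 < 1 / p' := by linarith
  have hM0 : 0 ≤ M := le_trans (norm_nonneg (T ^ 0)) (hM 0 (by omega))
  have hA : (0:ℝ) < (a:ℝ) + 1 := by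
    have : (0:ℝ) ≤ (a:ℝ) := by exact_mod_cast (by omega : (0:ℤ) ≤ a)
    linarith
  have hD : (0:ℝ) < (d:ℝ) + 1 := by
    have : (0:ℝ) ≤ (d:ℝ) := by exact_mod_cast hd
    linarith
  have hCc : (0:ℝ) < (c:ℝ) + 1 := by
    have : (0:ℝ) ≤ (c:ℝ) := by exact_mod_cast hc
    linarith
  have hKnonneg : 0 ≤ M ^ 2 * (((d:ℝ)+1) ^ (1/p') * ((c:ℝ)+1) ^ (1/p) / ((a:ℝ)+1)) * C := by
    have := Real.rpow_nonneg hD.le (1/p')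
    have := Real.rpow_nonneg hCc.le (1/p)
    positivity
  refine ContinuousLinearMap.opNorm_le_bound _ hKnonneg ?_
  intro x
  refine NormedSpace.norm_le_dual_bound ℂ _ (by positivity) ?_
  intro g
  rw [mul_comm (M ^ 2 * _ * C * ‖x‖) ‖g‖]
  -- the test function
  set F : ℤ → X := fun m => if m ∈ Finset.Icc (-c) (0:ℤ) then (T ^ (-m).toNat) x else 0
    with hFdef
  have hFs : ∀ m ∉ Finset.Icc (-c) (0:ℤ), F m = 0 := fun m hm => if_neg hm
  set G : ℤ → X := fun n => ∑' k : ℤ, μ k • F (n - k) with hGdef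
  have hconv : ∀ n : ℤ, G n = ∑ k ∈ Finset.Icc a b, μ k • F (n - k) := by
    intro n
    refine tsum_eq_sum (fun k hk => ?_)
    have hk0 : μ k = 0 := by
      by_contra hne
      exact hk (Finset.mem_Icc.mpr (hsupp k hne))
    simp [hk0]
  -- key identity
  have hkey : ∑ n ∈ Finset.Icc (0:ℤ) d, g ((T ^ n.toNat) (G n))
      = ((a.toNat + 1 : ℕ) : ℂ)
        * g ((∑ n ∈ Finset.Icc a b, μ n • T ^ n.toNat) x) := by
    have hgx : g ((∑ n ∈ Finset.Icc a b, μ n • T ^ n.toNat) x)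
        = ∑ k ∈ Finset.Icc a b, μ k * g ((T ^ k.toNat) x) := by
      rw [ContinuousLinearMap.sum_apply, map_sum]
      refine Finset.sum_congr rfl fun k _ => ?_
      rw [ContinuousLinearMap.smul_apply, _root_.map_smul, smul_eq_mul]
    rw [hgx]
    calc ∑ n ∈ Finset.Icc (0:ℤ) d, g ((T ^ n.toNat) (G n))
        = ∑ n ∈ Finset.Icc (0:ℤ) d, ∑ k ∈ Finset.Icc a b,
            (if n - k ∈ Finset.Icc (-c) (0:ℤ) then μ k * g ((T ^ k.toNat) x) else 0) := by
          refine Finset.sum_congr rfl fun n hn => ?_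
          rw [hconv n, map_sum, map_sum]
          refine Finset.sum_congr rfl fun k hk => ?_
          rw [_root_.map_smul, _root_.map_smul, smul_eq_mul]
          by_cases hcond : n - k ∈ Finset.Icc (-c) (0:ℤ)
          · rw [if_pos hcond]
            have hF : F (n - k) = (T ^ (k - n).toNat) x := by
              rw [hFdef]; simp only [if_pos hcond, neg_sub]
            rw [hF, ← ContinuousLinearMap.mul_apply, ← pow_add]
            have hn' := Finset.mem_Icc.mp hn
            have hcond' := Finset.mem_Icc.mp hcond
            have : n.toNat + (k - n).toNat = k.toNat := by omega
            rw [this]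
          · rw [if_neg hcond]
            have hF : F (n - k) = 0 := hFs _ hcond
            rw [hF, map_zero, map_zero, mul_zero]
      _ = ∑ k ∈ Finset.Icc a b, ∑ n ∈ Finset.Icc (0:ℤ) d,
            (if n - k ∈ Finset.Icc (-c) (0:ℤ) then μ k * g ((T ^ k.toNat) x) else 0) :=
          Finset.sum_comm
      _ = ((a.toNat + 1 : ℕ) : ℂ) * ∑ k ∈ Finset.Icc a b, μ k * g ((T ^ k.toNat) x) := by
          rw [Finset.mul_sum]
          refine Finset.sum_congr rfl fun k hk => ?_
          rw [← Finset.sum_filter, Finset.sum_const, hcount k hk, nsmul_eq_mul]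
  -- estimate chain
  have hcardd : ((Finset.Icc (0:ℤ) d).card : ℝ) = (d:ℝ) + 1 := by
    rw [Int.card_Icc]
    have : (d + 1 - 0).toNat = (d + 1).toNat := by omega
    rw [this]
    have h2 : ((d+1).toNat : ℤ) = d + 1 := Int.toNat_of_nonneg (by omega)
    exact_mod_cast congrArg (fun z : ℤ => (z : ℝ)) h2
  have h1 : ((a:ℝ)+1) * ‖g ((∑ n ∈ Finset.Icc a b, μ n • T ^ n.toNat) x)‖
      = ‖∑ n ∈ Finset.Icc (0:ℤ) d, g ((T ^ n.toNat) (G n))‖ := by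
    rw [hkey, norm_mul, Complex.norm_natCast]
    have h2 : ((a.toNat + 1 : ℕ) : ℝ) = (a:ℝ) + 1 := by
      have h3 : ((a.toNat : ℤ) : ℝ) = (a : ℝ) := by
        rw [Int.toNat_of_nonneg (by omega : (0:ℤ) ≤ a)]
      push_cast
      push_cast at h3
      linarith
    rw [h2]
  have h2 : ‖∑ n ∈ Finset.Icc (0:ℤ) d, g ((T ^ n.toNat) (G n))‖
      ≤ ∑ n ∈ Finset.Icc (0:ℤ) d, ‖g‖ * (M * ‖G n‖) := by
    refine (norm_sum_le _ _).trans (Finset.sum_le_sum fun n hn => ?_)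
    refine (g.le_opNorm _).trans (mul_le_mul_of_nonneg_left ?_ (norm_nonneg g))
    refine ((T ^ n.toNat).le_opNorm _).trans
      (mul_le_mul_of_nonneg_right ?_ (norm_nonneg _))
    refine hM n.toNat ?_
    have := Finset.mem_Icc.mp hn
    omega
  have h3 : ∑ n ∈ Finset.Icc (0:ℤ) d, ‖G n‖
      ≤ ((d:ℝ)+1) ^ (1/p') * (∑ n ∈ Finset.Icc (0:ℤ) d, ‖G n‖ ^ p) ^ (1/p) := by
    have := sum_le_holder (Finset.Icc (0:ℤ) d) (fun n => ‖G n‖)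
      (fun n _ => norm_nonneg _) p p' hp hpp'
    rwa [hcardd] at this
  have h4 : ∑ n ∈ Finset.Icc (0:ℤ) d, ‖G n‖ ^ p
      ≤ C ^ p * ∑ m ∈ Finset.Icc (-c) (0:ℤ), ‖F m‖ ^ p :=
    conv_sum_bound p hp μ C hC hCbound F _ hFs _
  have h5 : ∑ m ∈ Finset.Icc (-c) (0:ℤ), ‖F m‖ ^ p ≤ ((c:ℝ)+1) * (M * ‖x‖) ^ p := by
    have hterm : ∀ m ∈ Finset.Icc (-c) (0:ℤ), ‖F m‖ ^ p ≤ (M * ‖x‖) ^ p := by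
      intro m hm
      refine Real.rpow_le_rpow (norm_nonneg _) ?_ hp0.le
      have hF : F m = (T ^ (-m).toNat) x := by rw [hFdef]; simp only [if_pos hm]
      rw [hF]
      refine ((T ^ (-m).toNat).le_opNorm x).trans
        (mul_le_mul_of_nonneg_right ?_ (norm_nonneg x))
      refine hM (-m).toNat ?_
      have := Finset.mem_Icc.mp hm
      omega
    have := Finset.sum_le_card_nsmul _ _ _ hterm
    rw [nsmul_eq_mul] at this
    refine this.trans (le_of_eq ?_)
    congr 1
    rw [Int.card_Icc]
    have h6 : (0 + 1 - -c).toNat = (c + 1).toNat := by omega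
    rw [h6]
    have h7 : ((c+1).toNat : ℤ) = c + 1 := Int.toNat_of_nonneg (by omega)
    exact_mod_cast congrArg (fun z : ℤ => (z : ℝ)) h7
  have h6 : (∑ n ∈ Finset.Icc (0:ℤ) d, ‖G n‖ ^ p) ^ (1/p)
      ≤ C * (((c:ℝ)+1) ^ (1/p) * (M * ‖x‖)) := by
    have hsum0 : 0 ≤ ∑ n ∈ Finset.Icc (0:ℤ) d, ‖G n‖ ^ p :=
      Finset.sum_nonneg fun n _ => Real.rpow_nonneg (norm_nonneg _) p
    have hMx : (0:ℝ) ≤ M * ‖x‖ := by positivity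
    have hstep : ∑ n ∈ Finset.Icc (0:ℤ) d, ‖G n‖ ^ p
        ≤ C ^ p * (((c:ℝ)+1) * (M * ‖x‖) ^ p) :=
      h4.trans (mul_le_mul_of_nonneg_left h5 (Real.rpow_nonneg hC p))
    have := Real.rpow_le_rpow hsum0 hstep h1p.le
    refine this.trans (le_of_eq ?_)
    rw [Real.mul_rpow (Real.rpow_nonneg hC p) (by positivity),
      Real.mul_rpow hCc.le (Real.rpow_nonneg hMx p), one_div,
      Real.rpow_rpow_inv hC hp0.ne', Real.rpow_rpow_inv hMx hp0.ne']
  have big : ((a:ℝ)+1) * ‖g ((∑ n ∈ Finset.Icc a b, μ n • T ^ n.toNat) x)‖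
      ≤ (‖g‖ * M) * (((d:ℝ)+1) ^ (1/p') * (C * (((c:ℝ)+1) ^ (1/p) * (M * ‖x‖)))) := by
    rw [h1]
    refine h2.trans ?_
    have hsum : ∑ n ∈ Finset.Icc (0:ℤ) d, ‖g‖ * (M * ‖G n‖)
        = (‖g‖ * M) * ∑ n ∈ Finset.Icc (0:ℤ) d, ‖G n‖ := by
      rw [Finset.mul_sum]
      exact Finset.sum_congr rfl fun n _ => by ring
    rw [hsum]
    refine le_trans (mul_le_mul_of_nonneg_left h3 (by positivity)) ?_
    refine mul_le_mul_of_nonneg_left ?_ (by positivity)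
    exact mul_le_mul_of_nonneg_left h6 (Real.rpow_nonneg hD.le _)
  rw [← mul_le_mul_iff_right₀ hA]
  refine big.trans (le_of_eq ?_)
  field_simp

/-- **Discrete transference with explicit power-type constant
(Remark 4.6).**  If `T ∈ L(X)`, `1 ≤ a ≤ b` are integers, `M(b)` bounds
`‖Tⁿ‖` for `0 ≤ n ≤ b`, `μ : ℤ → ℂ` is supported in `[a,b]`, and `C` is an
`ℓ^p(ℤ;X)`-convolution bound for `μ`, then
`‖Σ_{n=a}^{b} μ(n) Tⁿ‖ ≤ M(b)² (b/a)^{1/max(p,p')} C`. -/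
theorem transference_discrete_explicit
    {X : Type*} [NormedAddCommGroup X] [NormedSpace ℂ X] [CompleteSpace X]
    (p p' : ℝ) (hp : 1 < p) (hpp' : 1 / p + 1 / p' = 1)
    (T : X →L[ℂ] X)
    (a b : ℤ) (ha : 1 ≤ a) (hab : a ≤ b)
    (M : ℝ) (hM : ∀ n : ℕ, (n : ℤ) ≤ b → ‖T ^ n‖ ≤ M)
    (μ : ℤ → ℂ) (hsupp : ∀ n : ℤ, μ n ≠ 0 → a ≤ n ∧ n ≤ b)
    (C : ℝ) (hC : 0 ≤ C)
    (hCbound : ∀ F : ℤ → X, MemLp F (ENNReal.ofReal p) Measure.count →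
      eLpNorm (fun n : ℤ => ∑' k : ℤ, μ k • F (n - k)) (ENNReal.ofReal p)
          Measure.count
        ≤ ENNReal.ofReal C * eLpNorm F (ENNReal.ofReal p) Measure.count) :
    ‖∑ n ∈ Finset.Icc a b, μ n • T ^ n.toNat‖ ≤
      M ^ 2 * ((b : ℝ) / (a : ℝ)) ^ (1 / max p p') * C := by
  classical
  have hp0 : (0 : ℝ) < p := by linarith
  have h1p : 0 < 1 / p := by positivity
  have h1p1 : 1 / p < 1 := by rw [div_lt_one hp0]; exact hp
  have h1p' : 0 < 1 / p' := by linarith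
  have hp'0 : (0 : ℝ) < p' := by
    by_contra h
    push_neg at h
    have : 1 / p' ≤ 0 := div_nonpos_of_nonneg_of_nonpos zero_le_one h
    linarith
  have hM0 : 0 ≤ M := le_trans (norm_nonneg (T ^ 0)) (hM 0 (by omega))
  have hA : (0:ℝ) < (a:ℝ) := by exact_mod_cast (by omega : (0:ℤ) < a)
  have hB : (0:ℝ) < (b:ℝ) := by exact_mod_cast (by omega : (0:ℤ) < b)
  have habR : (a:ℝ) ≤ (b:ℝ) := by exact_mod_cast hab
  have hratio : ((b:ℝ)+1) / ((a:ℝ)+1) ≤ (b:ℝ) / (a:ℝ) := by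
    rw [div_le_div_iff₀ (by linarith) hA]
    nlinarith
  rcases le_total p' p with hmax | hmax
  · -- p is the max; use c = b, d = a
    have hmaxeq : max p p' = p := max_eq_left hmax
    have hcount : ∀ k ∈ Finset.Icc a b,
        ((Finset.Icc (0:ℤ) a).filter (fun n => n - k ∈ Finset.Icc (-b) (0:ℤ))).card
          = a.toNat + 1 := by
      intro k hk
      have hk' := Finset.mem_Icc.mp hk
      have hfil : (Finset.Icc (0:ℤ) a).filter (fun n => n - k ∈ Finset.Icc (-b) (0:ℤ))
          = Finset.Icc (0:ℤ) a := by
        refine Finset.filter_true_of_mem fun n hn => ?_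
        have hn' := Finset.mem_Icc.mp hn
        rw [Finset.mem_Icc]
        omega
      rw [hfil, Int.card_Icc]
      omega
    have key := transference_aux p p' hp hpp' T a b ha hab M hM μ hsupp C hC hCbound
      b a (by omega) le_rfl (by omega) hab hcount
    refine key.trans ?_
    rw [hmaxeq]
    have hmid : ((a:ℝ)+1) ^ (1/p') * ((b:ℝ)+1) ^ (1/p) / ((a:ℝ)+1)
        = (((b:ℝ)+1) / ((a:ℝ)+1)) ^ (1/p) := by
      have hA1 : (0:ℝ) < (a:ℝ) + 1 := by linarith
      have hsplit : ((a:ℝ)+1) = ((a:ℝ)+1) ^ (1/p) * ((a:ℝ)+1) ^ (1/p') := by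
        rw [← Real.rpow_add hA1, hpp', Real.rpow_one]
      rw [Real.div_rpow (by linarith) hA1.le,
        div_eq_div_iff hA1.ne' (ne_of_gt (Real.rpow_pos_of_pos hA1 (1/p)))]
      nth_rewrite 3 [hsplit]
      ring
    rw [hmid]
    have hle : (((b:ℝ)+1) / ((a:ℝ)+1)) ^ (1/p) ≤ ((b:ℝ) / (a:ℝ)) ^ (1/p) :=
      Real.rpow_le_rpow (by positivity) hratio h1p.le
    gcongr
  · -- p' is the max; use c = a, d = b
    have hmaxeq : max p p' = p' := max_eq_right hmax
    have hcount : ∀ k ∈ Finset.Icc a b,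
        ((Finset.Icc (0:ℤ) b).filter (fun n => n - k ∈ Finset.Icc (-a) (0:ℤ))).card
          = a.toNat + 1 := by
      intro k hk
      have hk' := Finset.mem_Icc.mp hk
      have hfil : (Finset.Icc (0:ℤ) b).filter (fun n => n - k ∈ Finset.Icc (-a) (0:ℤ))
          = Finset.Icc (k - a) k := by
        ext n
        simp only [Finset.mem_filter, Finset.mem_Icc]
        omega
      rw [hfil, Int.card_Icc]
      omega
    have key := transference_aux p p' hp hpp' T a b ha hab M hM μ hsupp C hC hCbound
      a b (by omega) hab (by omega) le_rfl hcount
    refine key.trans ?_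
    rw [hmaxeq]
    have hmid : ((b:ℝ)+1) ^ (1/p') * ((a:ℝ)+1) ^ (1/p) / ((a:ℝ)+1)
        = (((b:ℝ)+1) / ((a:ℝ)+1)) ^ (1/p') := by
      have hA1 : (0:ℝ) < (a:ℝ) + 1 := by linarith
      have hsplit : ((a:ℝ)+1) = ((a:ℝ)+1) ^ (1/p) * ((a:ℝ)+1) ^ (1/p') := by
        rw [← Real.rpow_add hA1, hpp', Real.rpow_one]
      rw [Real.div_rpow (by linarith) hA1.le,
        div_eq_div_iff hA1.ne' (ne_of_gt (Real.rpow_pos_of_pos hA1 (1/p')))]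
      nth_rewrite 3 [hsplit]
      ring
    rw [hmid]
    have hle : (((b:ℝ)+1) / ((a:ℝ)+1)) ^ (1/p') ≤ ((b:ℝ) / (a:ℝ)) ^ (1/p') :=
      Real.rpow_le_rpow (by positivity) hratio h1p'.le
    gcongr
end
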